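/- arXiv:2404.10532 — 3 statements merged into one kernel-verified Lean document; each statement's English description precedes it below -/
import Mathlib

section
/- Let ω be an n-core and φ_n(ω) = (m_0,…,m_{n−1}) ∈ ℤ^n its n-charge. Then ω is self-conjugate if and only if m_{n−1−i} = −m_i for all i ∈ {0,…,⌊n/2⌋}; in particular if n is odd then m_{⌊n/2⌋} = 0. Moreover the map from the set 𝒞_n^s of self-conjugate n-cores to ℤ^{⌊n/2⌋} sending ω to (m_0,…,m_{⌊n/2⌋−1}) is a bijection, and |ω| = n Σ_{i=0}^{⌊n/2⌋−1} m_i² + Σ_{i=0}^{⌊n/2⌋−1} (2i − n + 1) m_i. -/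
open scoped Classical

/-- `p k` is the `(k+1)`-st part `λ_{k+1}` of the partition `λ` :
partitions are encoded by their (eventually zero, antitone) sequence of parts. -/
def IsPartition (p : ℕ → ℕ) : Prop :=
  Antitone p ∧ ∃ N, ∀ i, N ≤ i → p i = 0

/-- The number of (nonzero) parts of a partition. -/
noncomputable def plen (p : ℕ → ℕ) : ℕ := Nat.card {i : ℕ // p i ≠ 0}

/-- The number of boxes `|λ|` of a partition. -/
noncomputable def psize (p : ℕ → ℕ) : ℕ := ∑ i ∈ Finset.range (plen p), p i

/-- The conjugate partition : `pconj p j = λ^tr_{j+1}`. -/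
noncomputable def pconj (p : ℕ → ℕ) (j : ℕ) : ℕ := Nat.card {i : ℕ // j + 1 ≤ p i}

/-- The size of the Durfee square of a partition. -/
noncomputable def durfee (p : ℕ → ℕ) : ℕ := Nat.card {i : ℕ // i + 1 ≤ p i}

/-- The cells (boxes) of the Young diagram, `0`-indexed : `(i, j)` is the box in
row `i+1` and column `j+1`. -/
noncomputable def cells (p : ℕ → ℕ) : Finset (ℕ × ℕ) :=
  (Finset.range (plen p) ×ˢ Finset.range (p 0)).filter fun s => s.2 < p s.1

/-- The hook length of the (0-indexed) box `(i, j)` :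
`h = λ_{i+1} - (j+1) + λ^tr_{j+1} - (i+1) + 1`. -/
noncomputable def hookLen (p : ℕ → ℕ) (i j : ℕ) : ℕ :=
  (p i - j) + (pconj p j - i) - 1

/-- The multiset of hook lengths `ℋ(λ)`. -/
noncomputable def hooks (p : ℕ → ℕ) : Multiset ℕ :=
  (cells p).val.map fun s => hookLen p s.1 s.2

/-- The multiset of hook lengths of the boxes strictly above the main diagonal. -/
noncomputable def hooksAbove (p : ℕ → ℕ) : Multiset ℕ :=
  ((cells p).filter fun s => s.1 < s.2).val.map fun s => hookLen p s.1 s.2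

/-- The multiset of hook lengths of the boxes strictly below the main diagonal. -/
noncomputable def hooksBelow (p : ℕ → ℕ) : Multiset ℕ :=
  ((cells p).filter fun s => s.2 < s.1).val.map fun s => hookLen p s.1 s.2

/-- `p` is an `n`-core : no hook length is equal to `n`. -/
def IsCore (n : ℕ) (p : ℕ → ℕ) : Prop := n ∉ hooks p

/-- Self-conjugate partitions. -/
def SelfConj (p : ℕ → ℕ) : Prop := p = pconj p

/-- Distinct partitions (strictly decreasing nonzero parts). -/
def IsDistinct (p : ℕ → ℕ) : Prop := ∀ i, p (i + 1) ≠ 0 → p (i + 1) < p i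

/-- Doubled distinct partitions : `λ_i = λ^tr_i + 1` for `i` at most
the size of the Durfee square. -/
def IsDD (p : ℕ → ℕ) : Prop := ∀ i < durfee p, p i = pconj p i + 1

/-- Conjugates of doubled distinct partitions. -/
def IsDDtr (p : ℕ → ℕ) : Prop := ∃ q, IsPartition q ∧ IsDD q ∧ p = pconj q

/-- The doubled distinct partition `λ̄λ̄` of a distinct partition `λ̄` :
add `λ̄_i` boxes to the `i`-th column of the shifted Young diagram of `λ̄`. -/
noncomputable def double (b : ℕ → ℕ) : ℕ → ℕ := fun i =>
  if i < plen b then b i + (i + 1)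
  else Nat.card {j : ℕ // j < plen b ∧ i + 1 ≤ b j + j}

/-- The self-conjugate partition associated with a distinct partition `λ̄` :
add `λ̄_i - 1` boxes to the `i`-th column of the shifted Young diagram of `λ̄`. -/
noncomputable def scOf (b : ℕ → ℕ) : ℕ → ℕ := fun i =>
  if i < plen b then b i + i
  else Nat.card {j : ℕ // j < plen b ∧ i + 1 ≤ b j + j}

/-- The binary word `ψ(λ) = (c_k)_{k ∈ ℤ}` of a partition :
`c_k = 0` iff `k ∈ {λ_i - i : i ≥ 1}` and `c_k = 1` otherwise
(i.e. iff `k ∈ {j - λ^tr_j - 1 : j ≥ 1}`). -/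
noncomputable def word (p : ℕ → ℕ) (k : ℤ) : ℕ :=
  if ∃ m : ℕ, k = (p m : ℤ) - ((m : ℤ) + 1) then 0 else 1

/-- The `g`-charge of a `g`-core : `m_i = min {k ∈ ℤ : c_{kg+i} = 1}`. -/
noncomputable def ncharge (g : ℕ) (p : ℕ → ℕ) (i : ℕ) : ℤ :=
  sInf {k : ℤ | word p (k * (g : ℤ) + (i : ℤ)) = 1}

/-- The subword of residue `k` modulo `g` of the word of `p`. -/
noncomputable def subword (g k : ℕ) (p : ℕ → ℕ) (i : ℤ) : ℕ :=
  word p ((g : ℤ) * i + (k : ℤ))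

/-- The shift turning the subword of residue `k` into a balanced partition word. -/
noncomputable def qcharge (g : ℕ) (p : ℕ → ℕ) (k : ℕ) : ℤ :=
  (Nat.card {i : ℕ // subword g k p (i : ℤ) = 0} : ℤ) -
    (Nat.card {i : ℕ // subword g k p (-((i : ℤ) + 1)) = 1} : ℤ)

/-- `ν` is the `k`-th component of the `g`-quotient of `p` : its word is the
subword of residue `k` of the word of `p`, reindexed so as to be balanced. -/
def IsQuotientAt (g : ℕ) (p : ℕ → ℕ) (k : ℕ) (ν : ℕ → ℕ) : Prop :=
  ∀ i : ℤ, word ν i = subword g k p (i + qcharge g p k)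

/-- `ω` is the `g`-core of `p` : every subword of its word is sorted
(all `0`'s, then all `1`'s), with transition index the charge of `p`. -/
def IsCoreOf (g : ℕ) (p ω : ℕ → ℕ) : Prop :=
  ∀ k < g, ∀ i : ℤ, (subword g k ω i = 1 ↔ qcharge g p k ≤ i)

/-- `(ω, ν)` is the Littlewood decomposition of `p` for the modulus `g`. -/
def IsLittlewood (g : ℕ) (p ω : ℕ → ℕ) (ν : ℕ → ℕ → ℕ) : Prop :=
  IsCoreOf g p ω ∧ ∀ k < g, IsQuotientAt g p k (ν k)

/-- The number `a_r` of boxes of residue `r` modulo `g`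
(the residue of the box `(i, j)` -- `0`-indexed -- being `(j - i) mod g`). -/
noncomputable def resCount (g : ℕ) (p : ℕ → ℕ) (r : ℕ) : ℕ :=
  ((cells p).filter fun s => ((s.2 : ℤ) - (s.1 : ℤ)) % (g : ℤ) = (r : ℤ)).card

/-- The rectangular partition with `r` rows of length `c`. -/
def rect (r c : ℕ) : ℕ → ℕ := fun i => if i < r then c else 0

/-- The statistic `m = max({1} ∪ {(g + λ̄_i)/g : λ̄_i ≡ 0 (mod g)})`. -/
noncomputable def mStat (g : ℕ) (b : ℕ → ℕ) : ℕ :=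
  sSup ({1} ∪ {k : ℕ | ∃ i < plen b, g ∣ b i ∧ k = (g + b i) / g})

/-- The statistic `m' = max({0} ∪ {λ̄_i/g : λ̄_i ≡ g/2 (mod g)})`. -/
noncomputable def mStat' (g : ℕ) (b : ℕ → ℕ) : ℕ :=
  sSup ({0} ∪ {k : ℕ | ∃ i < plen b, 2 * (b i % g) = g ∧ k = b i / g})

namespace SCC

/-- beta-set membership -/
def Zset (p : ℕ → ℕ) (k : ℤ) : Prop := ∃ m : ℕ, k = (p m : ℤ) - ((m : ℤ) + 1)

theorem word_eq_zero_iff (p : ℕ → ℕ) (k : ℤ) : word p k = 0 ↔ Zset p k := by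
  unfold word Zset; split <;> simp_all

theorem word_eq_one_iff (p : ℕ → ℕ) (k : ℤ) : word p k = 1 ↔ ¬ Zset p k := by
  unfold word Zset; split <;> simp_all

section basics
variable {p : ℕ → ℕ} (hp : IsPartition p)
include hp

theorem s_strictAnti : StrictAnti (fun m : ℕ => (p m : ℤ) - ((m : ℤ) + 1)) := by
  intro a b hab
  have h1 : p b ≤ p a := hp.1 hab.le
  have : (b:ℤ) > a := by exact_mod_cast hab
  simp only []
  omega

theorem Z_le (k : ℤ) (hk : Zset p k) : k ≤ (p 0 : ℤ) - 1 := by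
  obtain ⟨m, rfl⟩ := hk
  rcases Nat.eq_zero_or_pos m with rfl | hm
  · simp
  · have := s_strictAnti hp (show 0 < m from hm)
    simp only [] at this ⊢
    omega

omit hp in
theorem Z_top : Zset p ((p 0 : ℤ) - 1) := ⟨0, by push_cast; ring⟩

theorem conj_iff {i j : ℕ} : j + 1 ≤ p i ↔ i + 1 ≤ pconj p j := by
  obtain ⟨N, hN⟩ := hp.2
  have hfin : ({i | j + 1 ≤ p i} : Set ℕ).Finite := by
    apply Set.Finite.subset (Set.finite_Iio N)
    intro x hx
    simp only [Set.mem_Iio]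
    by_contra h
    push_neg at h
    have := hN x h
    simp only [Set.mem_setOf_eq] at hx
    omega
  have hcard : pconj p j = ({i | j + 1 ≤ p i} : Set ℕ).ncard := by
    rw [pconj, ← Nat.card_coe_set_eq]
    rfl
  constructor
  · intro h
    have hsub : Set.Iic i ⊆ {i | j + 1 ≤ p i} := by
      intro x hx
      exact le_trans h (hp.1 hx)
    have h1 : (Set.Iic i).ncard = i + 1 := by
      rw [Set.ncard_eq_toFinset_card']; simp
    have h2 := Set.ncard_le_ncard hsub hfin
    omega
  · intro h
    by_contra hc
    push_neg at hc
    have hsub : {i' | j + 1 ≤ p i'} ⊆ Set.Iio i := by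
      intro x hx
      simp only [Set.mem_setOf_eq] at hx
      simp only [Set.mem_Iio]
      by_contra hxi
      push_neg at hxi
      have := hp.1 hxi
      omega
    have := Set.ncard_le_ncard hsub (Set.finite_Iio i)
    have h1 : (Set.Iio i).ncard = i := by
      rw [Set.ncard_eq_toFinset_card']; simp
    omega

theorem part_zero_of_ge {i : ℕ} (h : pconj p 0 ≤ i) : p i = 0 := by
  by_contra hc
  have : 0 + 1 ≤ p i := by omega
  have := (conj_iff hp).1 this
  omega

omit hp in
theorem plen_eq : plen p = pconj p 0 := by
  rw [plen, pconj]
  exact Nat.card_congr (Equiv.subtypeEquivRight (fun i => by omega))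

theorem pconj_antitone : Antitone (pconj p) := by
  intro a b hab
  by_contra hc
  push_neg at hc
  have h1 : pconj p b ≥ pconj p a + 1 := hc
  have h2 : pconj p a + 1 ≤ pconj p b := h1
  have h3 := (conj_iff hp (i := pconj p a) (j := b)).2 h2
  have h4 : a + 1 ≤ p (pconj p a) := by omega
  have h5 := (conj_iff hp).1 h4
  omega

theorem part_ne_zero_iff {i : ℕ} : p i ≠ 0 ↔ i < plen p := by
  rw [plen_eq]
  constructor
  · intro h
    by_contra hc
    exact h (part_zero_of_ge hp (by omega))
  · intro h hz
    have : ¬ (0 + 1 ≤ p i) := by omega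
    rw [conj_iff hp] at this
    omega

theorem Z_low {k : ℤ} (hk : k + (pconj p 0 : ℤ) + 1 ≤ 0) : Zset p k := by
  refine ⟨(-k-1).toNat, ?_⟩
  have h1 : ((-k-1).toNat : ℤ) = -k-1 := Int.toNat_of_nonneg (by omega)
  have h0 : (pconj p 0 : ℤ) ≤ (-k-1) := by omega
  have : p (-k-1).toNat = 0 := part_zero_of_ge hp (by omega)
  rw [this, h1]
  push_cast
  ring

/-- f j := j - pconj p j is strictly increasing with range = complement of Zset. -/
theorem not_Z_iff {t : ℤ} : (¬ Zset p t) ↔ ∃ j : ℕ, t = (j : ℤ) - (pconj p j : ℤ) := by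
  constructor
  · intro hnz
    -- t ≥ -pconj p 0, else Zset
    have hlow : -(pconj p 0 : ℤ) ≤ t := by
      by_contra hc
      exact hnz (Z_low hp (by omega))
    by_contra hno
    push_neg at hno
    -- find least j with t < f j
    have hex : ∃ j : ℕ, t < (j : ℤ) - (pconj p j : ℤ) := by
      refine ⟨(t + pconj p 0).toNat + 1, ?_⟩
      have h2 : pconj p ((t + pconj p 0).toNat + 1) ≤ pconj p 0 :=
        pconj_antitone hp (by omega)
      have h1 : ((t + pconj p 0).toNat : ℤ) = t + pconj p 0 := Int.toNat_of_nonneg (by omega)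
      push_cast
      omega
    classical
    let j1 := Nat.find hex
    have hj1 : t < (j1 : ℤ) - (pconj p j1 : ℤ) := Nat.find_spec hex
    have hj1pos : j1 ≠ 0 := by
      intro h0
      rw [h0] at hj1
      simp at hj1
      omega
    obtain ⟨j, hj⟩ : ∃ j, j1 = j + 1 := ⟨j1 - 1, by omega⟩
    rw [hj] at hj1
    have hle : ¬ (t < (j : ℤ) - (pconj p j : ℤ)) := Nat.find_min hex (by omega)
    push_neg at hle
    have hne : t ≠ (j : ℤ) - (pconj p j : ℤ) := fun h => hno j h
    -- so f j < t < f (j+1); set d := t - f j ≥ 1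
    set cj := pconj p j with hcj
    set cj1 := pconj p (j+1) with hcj1
    have hc1 : cj1 ≤ cj := pconj_antitone hp (by omega)
    -- d ≤ cj - cj1
    have hd : t - ((j:ℤ) - cj) ≤ (cj : ℤ) - cj1 := by
      push_cast at hj1 ⊢
      omega
    set m := cj - (t - ((j:ℤ) - cj)).toNat with hm
    have hdnat : ((t - ((j:ℤ) - cj)).toNat : ℤ) = t - ((j:ℤ) - cj) := Int.toNat_of_nonneg (by omega)
    have hmval : (m : ℤ) = (cj : ℤ) - (t - ((j:ℤ) - cj)) := by
      rw [hm]
      push_cast [Nat.cast_sub (by omega : (t - ((j:ℤ) - cj)).toNat ≤ cj)]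
      omega
    -- m < cj hence p m ≥ j+1 ; m ≥ cj1 hence p m ≤ j+1
    have hm1 : m + 1 ≤ cj := by omega
    have hm2 : (cj1 : ℤ) ≤ m := by omega
    have hup : j + 1 ≤ p m := (conj_iff hp).2 hm1
    have hdown : p m ≤ j + 1 := by
      by_contra hc
      push_neg at hc
      have : (j+1) + 1 ≤ p m := hc
      have := (conj_iff hp).1 this
      omega
    apply hnz
    refine ⟨m, ?_⟩
    have : p m = j + 1 := le_antisymm hdown hup
    rw [this]
    push_cast
    omega
  · rintro ⟨j, rfl⟩ ⟨m, hm⟩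
    -- case split on p m ≥ j+1
    rcases le_or_gt (j+1) (p m) with h | h
    · have h2 := (conj_iff hp).1 h
      have := s_strictAnti hp -- unused
      push_cast at hm
      omega
    · have h2 : ¬ (m + 1 ≤ pconj p j) := fun hc => by
        have := (conj_iff hp).2 hc
        omega
      push_neg at h2
      push_cast at hm
      omega

theorem conj_word {k : ℤ} : Zset (pconj p) k ↔ ¬ Zset p (-1 - k) := by
  rw [not_Z_iff hp]
  constructor
  · rintro ⟨j, hj⟩
    exact ⟨j, by push_cast at hj ⊢; omega⟩
  · rintro ⟨j, hj⟩
    exact ⟨j, by push_cast at hj ⊢; omega⟩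

theorem pconj_isPartition : IsPartition (pconj p) := by
  constructor
  · exact pconj_antitone hp
  · refine ⟨p 0, fun j hj => ?_⟩
    by_contra hc
    have : 0 + 1 ≤ pconj p j := by omega
    have := (conj_iff hp).2 this
    have := hp.1 (Nat.zero_le 0)
    have hle : p 0 ≥ j + 1 := by
      have := hp.1 (Nat.zero_le 0)
      omega
    omega

end basics

/-- tail of a partition -/
theorem tail_isPartition {p : ℕ → ℕ} (hp : IsPartition p) :
    IsPartition (fun m => p (m+1)) := by
  obtain ⟨N, hN⟩ := hp.2
  exact ⟨fun a b hab => hp.1 (by omega), ⟨N, fun i hi => hN _ (by omega)⟩⟩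

theorem tail_Z {p : ℕ → ℕ} (hp : IsPartition p) (k : ℤ) :
    Zset (fun m => p (m+1)) k ↔ (Zset p (k-1) ∧ k - 1 ≠ (p 0 : ℤ) - 1) := by
  constructor
  · rintro ⟨m, hm⟩
    constructor
    · exact ⟨m+1, by push_cast at hm ⊢; omega⟩
    · intro he
      have := s_strictAnti hp (show 0 < m + 1 by omega)
      simp only [] at this
      push_cast at hm
      omega
  · rintro ⟨⟨m, hm⟩, hne⟩
    have hm0 : m ≠ 0 := by
      intro h0
      rw [h0] at hm
      push_cast at hm
      simp at hm
      apply hne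
      omega
    obtain ⟨m', rfl⟩ : ∃ m', m = m' + 1 := ⟨m - 1, by omega⟩
    exact ⟨m', by push_cast at hm ⊢; omega⟩

theorem Zset_ext_aux : ∀ m : ℕ, ∀ p q : ℕ → ℕ, IsPartition p → IsPartition q →
    (∀ k, Zset p k ↔ Zset q k) → p m = q m := by
  intro m
  induction m with
  | zero =>
    intro p q hp hq h
    have h1 := (h ((p 0 : ℤ) - 1)).1 (Z_top)
    have h2 := (h ((q 0 : ℤ) - 1)).2 (Z_top)
    have := Z_le hq _ h1
    have := Z_le hp _ h2
    omega
  | succ m ih =>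
    intro p q hp hq h
    have h0 : p 0 = q 0 := by
      have h1 := (h ((p 0 : ℤ) - 1)).1 (Z_top)
      have h2 := (h ((q 0 : ℤ) - 1)).2 (Z_top)
      have := Z_le hq _ h1
      have := Z_le hp _ h2
      omega
    have := ih (fun m => p (m+1)) (fun m => q (m+1)) (tail_isPartition hp)
      (tail_isPartition hq) (fun k => by
        rw [tail_Z hp, tail_Z hq, h (k-1), h0])
    exact this

theorem Zset_ext {p q : ℕ → ℕ} (hp : IsPartition p) (hq : IsPartition q)
    (h : ∀ k, Zset p k ↔ Zset q k) : p = q :=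
  funext fun m => Zset_ext_aux m p q hp hq h

section core
variable {n : ℕ} {p : ℕ → ℕ} (hn : 1 ≤ n) (hp : IsPartition p)
include hn hp

omit hn in
theorem hookLen_cast {i j : ℕ} (hj : j < p i) :
    (hookLen p i j : ℤ) = ((p i : ℤ) - ((i:ℤ)+1)) - ((j : ℤ) - (pconj p j : ℤ)) := by
  have hup : j + 1 ≤ p i := hj
  have hconj : i + 1 ≤ pconj p j := (conj_iff hp).1 hup
  rw [hookLen]
  have h1 : j ≤ p i := by omega
  have h2 : i ≤ pconj p j := by omega
  have h3 : 1 ≤ (p i - j) + (pconj p j - i) := by omega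
  push_cast [Nat.cast_sub h1, Nat.cast_sub h2, Nat.cast_sub h3]
  ring

theorem mem_hooks_iff : (n ∈ hooks p) ↔ ∃ k, Zset p k ∧ ¬ Zset p (k - n) := by
  constructor
  · intro h
    rw [hooks, Multiset.mem_map] at h
    obtain ⟨⟨i, j⟩, hmem, hval⟩ := h
    rw [← Finset.mem_def, cells, Finset.mem_filter, Finset.mem_product,
      Finset.mem_range, Finset.mem_range] at hmem
    obtain ⟨⟨hi, hj0⟩, hj⟩ := hmem
    simp only [] at hj hval
    have hcast := hookLen_cast hp (i := i) (j := j) hj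
    refine ⟨(p i : ℤ) - ((i:ℤ)+1), ⟨i, rfl⟩, ?_⟩
    refine (not_Z_iff hp).2 ⟨j, ?_⟩
    rw [hval] at hcast
    omega
  · rintro ⟨k, ⟨i, rfl⟩, hnz⟩
    rw [not_Z_iff hp] at hnz
    obtain ⟨j, hj⟩ := hnz
    have hpi : p i ≠ 0 := by
      intro h0
      have hz : Zset p ((p i : ℤ) - ((i:ℤ)+1) - n) := by
        refine ⟨i + n, ?_⟩
        have : p (i + n) = 0 := by
          have := hp.1 (show i ≤ i + n by omega)
          omega
        rw [this, h0]
        push_cast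
        ring
      exact ((not_Z_iff hp).2 ⟨j, hj⟩) hz
    have hi : i < plen p := (part_ne_zero_iff hp).1 hpi
    have hji : j < p i := by
      by_contra hc
      push_neg at hc
      have h2 : ¬ (i + 1 ≤ pconj p j) := by
        intro hcc
        have := (conj_iff hp).2 hcc
        omega
      push_neg at h2
      omega
    have hcast := hookLen_cast hp (i := i) (j := j) hji
    rw [hooks, Multiset.mem_map]
    refine ⟨(i, j), ?_, ?_⟩
    · rw [← Finset.mem_def, cells, Finset.mem_filter, Finset.mem_product,
        Finset.mem_range, Finset.mem_range]
      refine ⟨⟨hi, ?_⟩, hji⟩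
      have := hp.1 (Nat.zero_le i)
      omega
    · simp only []
      have : (hookLen p i j : ℤ) = n := by omega
      exact_mod_cast this

theorem core_iff : IsCore n p ↔ ∀ k, Zset p k → Zset p (k - n) := by
  rw [IsCore]
  rw [mem_hooks_iff hn hp]
  push_neg
  constructor
  · intro h k hk
    by_contra hc
    exact hc (h k hk)
  · intro h k hk
    exact h k hk

theorem charge_iff (hcore : IsCore n p) (i : ℕ) (k : ℤ) :
    Zset p (k * n + i) ↔ k < ncharge n p i := by
  have hZstep := (core_iff hn hp).1 hcore
  set T : Set ℤ := {k : ℤ | word p (k * (n : ℤ) + (i : ℤ)) = 1} with hT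
  have hmemT : ∀ k : ℤ, k ∈ T ↔ ¬ Zset p (k * n + i) := by
    intro k
    rw [hT, Set.mem_setOf_eq, word_eq_one_iff]
  -- nonempty
  have hne : T.Nonempty := by
    refine ⟨(p 0 : ℤ) + i + 1, ?_⟩
    rw [hmemT]
    intro hz
    have := Z_le hp _ hz
    have h1 : ((p 0 : ℤ) + i + 1) * n ≥ (p 0 : ℤ) + i + 1 := by
      nlinarith [Int.toNat_of_nonneg (show (0:ℤ) ≤ p 0 + i + 1 by positivity), (show (1:ℤ) ≤ n by exact_mod_cast hn)]
    omega
  -- bddBelow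
  have hbdd : BddBelow T := by
    refine ⟨-((pconj p 0 : ℤ) + i + 1), fun k hk => ?_⟩
    rw [hmemT] at hk
    by_contra hc
    push_neg at hc
    apply hk
    apply Z_low hp
    have hkneg : k ≤ 0 := by omega
    have : k * n ≤ k := by
      have h1 : (1:ℤ) ≤ n := by exact_mod_cast hn
      nlinarith
    omega
  -- upward closed
  have hup : ∀ k : ℤ, k ∈ T → k + 1 ∈ T := by
    intro k hk
    rw [hmemT] at hk ⊢
    intro hz
    apply hk
    have := hZstep _ hz
    have heq : (k + 1) * n + i - n = k * n + i := by ring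
    rwa [heq] at this
  have hinf_mem : ncharge n p i ∈ T := by
    rw [ncharge]
    obtain ⟨b, hb⟩ := hbdd
    obtain ⟨lb, hlb1, hlb2⟩ := Int.exists_least_of_bdd (P := fun z => z ∈ T)
      ⟨b, fun z hz => hb hz⟩ hne
    have : sInf T = lb := le_antisymm (csInf_le ⟨b, fun z hz => hb hz⟩ hlb1)
      (le_csInf hne hlb2)
    rw [← hT, this]
    exact hlb1
  have hIci : ∀ k : ℤ, k ∈ T ↔ ncharge n p i ≤ k := by
    intro k
    constructor
    · intro hk
      exact csInf_le hbdd hk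
    · intro hk
      -- induction from sInf upward
      have : ∀ j : ℤ, ncharge n p i ≤ j → j ∈ T := by
        intro j hj
        refine Int.le_induction (m := ncharge n p i) (motive := fun j _ => j ∈ T) ?_ ?_ j hj
        · exact hinf_mem
        · intro j' _ hj'
          exact hup _ hj'
      exact this k hk
  have := hIci k
  rw [hmemT] at this
  constructor
  · intro hz
    by_contra hc
    push_neg at hc
    exact (this.2 hc) hz
  · intro hlt
    by_contra hz
    have := this.1 hz
    omega

end core

theorem eq_of_forall_lt_iff {a b : ℤ} (h : ∀ k, k < a ↔ k < b) : a = b := by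
  have h1 := h (a - 1)
  have h2 := h (b - 1)
  omega

section sc
variable {n : ℕ} {p : ℕ → ℕ} (hn : 1 ≤ n) (hp : IsPartition p) (hcore : IsCore n p)
include hn hp hcore

omit hcore in
theorem word_sym_of_selfConj (hsc : SelfConj p) :
    ∀ k : ℤ, Zset p k ↔ ¬ Zset p (-1 - k) := by
  intro k
  conv_lhs => rw [show p = pconj p from hsc]
  exact conj_word hp

theorem antisym_of_selfConj (hsc : SelfConj p) :
    ∀ i < n, ncharge n p (n - 1 - i) = - ncharge n p i := by
  intro i hi
  have hsym := word_sym_of_selfConj hn hp hsc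
  have hcast : ((n - 1 - i : ℕ) : ℤ) = (n : ℤ) - 1 - i := by
    push_cast [Nat.cast_sub (by omega : 1 + i ≤ n)]
    omega
  apply eq_of_forall_lt_iff
  intro k
  have harg : -1 - (k * (n:ℤ) + ((n - 1 - i : ℕ) : ℤ)) = (-k-1) * n + (i:ℤ) := by
    rw [hcast]; ring
  have e1 : k < ncharge n p (n-1-i) ↔ Zset p (k * n + ((n-1-i : ℕ):ℤ)) :=
    (charge_iff hn hp hcore _ _).symm
  have e2 : Zset p (k * n + ((n-1-i : ℕ):ℤ)) ↔ ¬ Zset p ((-k-1) * n + (i:ℤ)) := by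
    rw [hsym (k * n + ((n-1-i : ℕ):ℤ)), harg]
  have e3 : Zset p ((-k-1) * n + (i:ℤ)) ↔ (-k-1) < ncharge n p i :=
    charge_iff hn hp hcore _ _
  rw [e1, e2, e3]
  omega

/-- decomposition of Zset via charges -/
theorem Z_eq_charge (k : ℤ) :
    Zset p k ↔ k / n < ncharge n p (k % n).toNat := by
  have hn0 : (0:ℤ) < n := by exact_mod_cast hn
  have hdecomp : k = (k / n) * (n:ℤ) + ((k % (n:ℤ)).toNat : ℤ) := by
    rw [Int.toNat_of_nonneg (Int.emod_nonneg k (by omega))]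
    have := Int.mul_ediv_add_emod k n
    rw [mul_comm] at this
    omega
  conv_lhs => rw [hdecomp]
  exact charge_iff hn hp hcore _ _

theorem selfConj_of_antisym
    (h : ∀ i < n, ncharge n p (n - 1 - i) = - ncharge n p i) : SelfConj p := by
  have hn0 : (0:ℤ) < n := by exact_mod_cast hn
  have hsym : ∀ k : ℤ, Zset p k ↔ ¬ Zset p (-1 - k) := by
    intro k
    have h1 := Z_eq_charge hn hp hcore k
    have h2 := Z_eq_charge hn hp hcore (-1 - k)
    set q := k / (n:ℤ) with hq
    set r := (k % (n:ℤ)).toNat with hr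
    have hrlt : r < n := by
      rw [hr]
      have := Int.emod_lt_of_pos k hn0
      have := Int.emod_nonneg k (show (n:ℤ) ≠ 0 by omega)
      omega
    have hrval : ((r:ℕ) : ℤ) = k % n := Int.toNat_of_nonneg (Int.emod_nonneg k (by omega))
    -- -1 - k = (-q-1)*n + (n-1-r)
    have hk : k = q * n + r := by
      rw [hq, hrval]
      have := Int.mul_ediv_add_emod k n
      rw [mul_comm] at this
      omega
    have hdiv2 : (-1 - k) / n = -q - 1 ∧ (-1 - k) % n = (n : ℤ) - 1 - r := by
      have heq : -1 - k = ((n:ℤ) - 1 - r) + (-q - 1) * n := by rw [hk]; ring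
      constructor
      · rw [heq]
        rw [Int.add_mul_ediv_right _ _ (show (n:ℤ) ≠ 0 by omega)]
        rw [Int.ediv_eq_zero_of_lt (by omega) (by omega)]
        ring
      · rw [heq, Int.add_mul_emod_self_right]
        exact Int.emod_eq_of_lt (by omega) (by omega)
    rw [h1, h2, hdiv2.1, hdiv2.2]
    have hcast : ((n - 1 - r : ℕ) : ℤ) = (n:ℤ) - 1 - r := by
      push_cast [Nat.cast_sub (by omega : 1 + r ≤ n)]
      omega
    rw [show ((n:ℤ) - 1 - r).toNat = (n - 1 - r : ℕ) by omega]
    rw [h r hrlt]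
    omega
  -- now conclude p = pconj p
  apply Zset_ext hp (pconj_isPartition hp)
  intro k
  rw [conj_word hp, ← hsym k]

end sc

section builder
variable {W : ℤ → Prop} {B : ℕ}

theorem builder (hB : 1 ≤ B) (F : Finset ℤ)
    (ha : ∀ k : ℤ, k + B ≤ 0 → W k)
    (hb : ∀ k : ℤ, (B:ℤ) ≤ k → ¬ W k)
    (hmem : ∀ k : ℤ, k ∈ F ↔ ((-(B:ℤ) ≤ k ∧ k ≤ (B:ℤ)-1) ∧ W k))
    (hc : F.card = B) :
    ∃ p : ℕ → ℕ, IsPartition p ∧ (∀ k, Zset p k ↔ W k) ∧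
      (psize p : ℤ) = (∑ k ∈ F, k)
        + ∑ m ∈ Finset.range B, ((m:ℤ) + 1) := by
  classical
  set o := F.orderIsoOfFin hc with ho
  -- the decreasing enumeration
  set s : ℕ → ℤ := fun m => if h : m < B then (o ⟨B-1-m, by omega⟩ : ℤ) else -((m:ℤ)+1) with hs
  have hoF : ∀ j : Fin B, (o j : ℤ) ∈ F := fun j => (o j).2
  have hlowF : ∀ k ∈ F, -(B:ℤ) ≤ k := by
    intro k hk
    exact ((hmem k).1 hk).1.1
  have hgrow : ∀ j : Fin B, -(B:ℤ) + (j:ℕ) ≤ (o j : ℤ) := by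
    rintro ⟨v, hv⟩
    induction v with
    | zero => simpa using hlowF _ (hoF ⟨0, hv⟩)
    | succ v ih =>
      have h1 := ih (by omega)
      have h2 : (o ⟨v, by omega⟩ : ℤ) < o ⟨v+1, hv⟩ := by
        have : (⟨v, by omega⟩ : Fin B) < ⟨v+1, hv⟩ := by
          simp [Fin.lt_def]
        exact o.strictMono this
      push_cast at h1 ⊢
      omega
  have hsnn : ∀ m : ℕ, -((m:ℤ)+1) ≤ s m := by
    intro m
    simp only [hs]
    split
    · rename_i h
      have := hgrow ⟨B-1-m, by omega⟩
      simp only [] at this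
      have hcast : ((B-1-m : ℕ) : ℤ) = (B:ℤ)-1-m := by
        push_cast [Nat.cast_sub (by omega : 1 + m ≤ B), Nat.cast_sub (by omega : m ≤ B - 1)]
        omega
      omega
    · omega
  have hsB : ∀ m : ℕ, B ≤ m → s m = -((m:ℤ)+1) := by
    intro m hm
    simp only [hs]
    rw [dif_neg (by omega)]
  have hsdec : ∀ m : ℕ, s (m+1) < s m := by
    intro m
    rcases lt_or_ge (m+1) B with h | h
    · have e1 : s (m+1) = (o ⟨B-1-(m+1), by omega⟩ : ℤ) := by
        simp only [hs]
        rw [dif_pos (by omega : m + 1 < B)]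
      have e2 : s m = (o ⟨B-1-m, by omega⟩ : ℤ) := by
        simp only [hs]
        rw [dif_pos (by omega : m < B)]
      rw [e1, e2]
      have : (⟨B-1-(m+1), by omega⟩ : Fin B) < ⟨B-1-m, by omega⟩ := by
        simp [Fin.lt_def]
        omega
      exact_mod_cast o.strictMono this
    · have e1 : s (m+1) = -((m:ℤ)+2) := by
        rw [hsB (m+1) (by omega)]
        push_cast
        ring
      have e2 := hsnn m
      omega
  set p : ℕ → ℕ := fun m => (s m + m + 1).toNat with hp'
  have hpz : ∀ m : ℕ, (p m : ℤ) = s m + m + 1 := by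
    intro m
    rw [hp']
    exact Int.toNat_of_nonneg (by have := hsnn m; omega)
  have hpB : ∀ m : ℕ, B ≤ m → p m = 0 := by
    intro m hm
    have : s m = -((m:ℤ)+1) := by rw [hs]; exact dif_neg (by omega)
    have h2 := hpz m
    omega
  have hpart : IsPartition p := by
    constructor
    · apply antitone_nat_of_succ_le
      intro m
      have h1 := hpz m
      have h2 := hpz (m+1)
      have h3 := hsdec m
      push_cast at h2
      omega
    · exact ⟨B, hpB⟩
  -- Zset p k ↔ W k
  have hZW : ∀ k : ℤ, Zset p k ↔ W k := by
    intro k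
    constructor
    · rintro ⟨m, hm⟩
      have h1 := hpz m
      have hk : k = s m := by omega
      rcases lt_or_ge m B with h | h
      · have : s m ∈ F := by
          rw [hs]
          simp only [dif_pos h]
          exact hoF _
        rw [hk]
        exact ((hmem _).1 this).2
      · have : s m = -((m:ℤ)+1) := by rw [hs]; exact dif_neg (by omega)
        apply ha
        rw [hk, this]
        omega
    · intro hW
      rcases lt_or_ge k (-(B:ℤ)) with h | h
      · -- k ≤ -(B+1), use m = (-k-1).toNat ≥ B
        refine ⟨(-k-1).toNat, ?_⟩
        have h1 : ((-k-1).toNat : ℤ) = -k-1 := Int.toNat_of_nonneg (by omega)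
        have h2 : B ≤ (-k-1).toNat := by omega
        have h3 := hpz (-k-1).toNat
        have h4 := hpB _ h2
        omega
      · have hkB : k < B := by
          by_contra hcc
          push_neg at hcc
          exact hb k hcc hW
        have hkF : k ∈ F := by
          rw [hmem]
          exact ⟨⟨h, by omega⟩, hW⟩
        set j := o.symm ⟨k, hkF⟩ with hj
        refine ⟨B - 1 - (j : ℕ), ?_⟩
        have hjB : (j:ℕ) < B := j.2
        have hB1 : B - 1 - (B - 1 - (j:ℕ)) = (j:ℕ) := by omega
        have h5 : s (B-1-(j:ℕ)) = k := by
          rw [hs]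
          simp only [dif_pos (show B-1-(j:ℕ) < B by omega)]
          have : (⟨B - 1 - (B-1-(j:ℕ)), by omega⟩ : Fin B) = j := by
            apply Fin.ext
            simpa using hB1
          rw [this, hj]
          simp
        have h6 := hpz (B-1-(j:ℕ))
        omega
  refine ⟨p, hpart, hZW, ?_⟩
  -- psize
  have hplenB : plen p ≤ B := by
    by_contra hcc
    push_neg at hcc
    have := (part_ne_zero_iff hpart (i := B)).2 hcc
    exact this (hpB B le_rfl)
  have hsize : psize p = ∑ m ∈ Finset.range B, p m := by
    rw [psize]
    apply Finset.sum_subset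
    · intro x hx
      rw [Finset.mem_range] at hx ⊢
      omega
    · intro x _ hx
      rw [Finset.mem_range] at hx
      push_neg at hx
      by_contra hcc
      have := (part_ne_zero_iff hpart (i := x)).1 hcc
      omega
  rw [hsize]
  push_cast
  have : ∀ m ∈ Finset.range B, (p m : ℤ) = s m + m + 1 := fun m _ => hpz m
  rw [Finset.sum_congr rfl this, Finset.sum_add_distrib, Finset.sum_add_distrib]
  have hsum_s : ∑ m ∈ Finset.range B, s m = ∑ k ∈ F, k := by
    set g : ℕ → ℤ := fun j => if h : j < B then (o ⟨j, h⟩ : ℤ) else 0 with hg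
    have h1 : ∀ m ∈ Finset.range B, s m = g (B - 1 - m) := by
      intro m hm
      rw [Finset.mem_range] at hm
      rw [hs, hg]
      simp only [dif_pos hm, dif_pos (show B-1-m < B by omega)]
    rw [Finset.sum_congr rfl h1, Finset.sum_range_reflect]
    have h2 : ∑ j ∈ Finset.range B, g j = ∑ j : Fin B, (o j : ℤ) := by
      rw [← Fin.sum_univ_eq_sum_range]
      apply Finset.sum_congr rfl
      intro j _
      rw [hg]
      simp only [dif_pos j.2]
    rw [h2]
    have h3 : ∑ j : Fin B, (o j : ℤ) = ∑ x : F, (x : ℤ) :=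
      o.toEquiv.sum_comp (fun x : F => (x : ℤ))
    rw [h3]
    exact Finset.sum_coe_sort F (fun x => x)
  rw [hsum_s, Finset.sum_add_distrib]
  ring

end builder

theorem sum_range_cast (n : ℕ) : 2 * ∑ i ∈ Finset.range n, (i:ℤ) = n * (n-1) := by
  induction n with
  | zero => simp
  | succ n ih =>
    rw [Finset.sum_range_succ]
    push_cast
    push_cast at ih
    ring_nf
    ring_nf at ih
    omega

theorem sum_Icc_int : ∀ (N : ℕ) (a b : ℤ), b + 1 - a = N →
    2 * (∑ q ∈ Finset.Icc a b, q) = (a + b) * (b + 1 - a) := by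
  intro N
  induction N with
  | zero =>
    intro a b hN
    have : b < a := by omega
    rw [Finset.Icc_eq_empty (by omega)]
    simp
    omega
  | succ N ih =>
    intro a b hN
    have hab : a ≤ b := by omega
    have h1 : Finset.Icc a b = insert b (Finset.Icc a (b-1)) := by
      ext x
      simp [Finset.mem_Icc, Finset.mem_insert]
      omega
    rw [h1, Finset.sum_insert (by simp [Finset.mem_Icc])]
    have h2 := ih a (b-1) (by omega)
    ring_nf
    ring_nf at h2
    omega

theorem qdecomp {n : ℕ} (hn : 1 ≤ n) (q : ℤ) (i : ℕ) (hi : i < n) :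
    (q * n + i) / (n:ℤ) = q ∧ (q * n + i) % (n:ℤ) = i := by
  have heq : q * (n:ℤ) + i = (i:ℤ) + q * n := by ring
  constructor
  · rw [heq, Int.add_mul_ediv_right _ _ (show (n:ℤ) ≠ 0 by omega),
      Int.ediv_eq_zero_of_lt (by omega) (by exact_mod_cast hi)]
    ring
  · rw [heq, Int.add_mul_emod_self_right]
    exact Int.emod_eq_of_lt (by omega) (by exact_mod_cast hi)

theorem window_sum {M : Type*} [AddCommMonoid M] {n : ℕ} (hn : 1 ≤ n) (L : ℕ) (g : ℤ → M) :
    ∑ k ∈ Finset.Icc (-(L*n:ℤ)) ((L*n:ℤ)-1), g k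
      = ∑ i ∈ Finset.range n, ∑ q ∈ Finset.Icc (-(L:ℤ)) ((L:ℤ)-1), g (q * n + i) := by
  have hn0 : (0:ℤ) < n := by exact_mod_cast hn
  rw [← Finset.sum_product']
  apply Finset.sum_nbij' (i := fun k => (((k % (n:ℤ)).toNat : ℕ), k / (n:ℤ)))
    (j := fun x => x.2 * n + (x.1 : ℤ))
  · intro k hk
    rw [Finset.mem_Icc] at hk
    rw [Finset.mem_product, Finset.mem_range, Finset.mem_Icc]
    have h1 := Int.emod_nonneg k (show (n:ℤ) ≠ 0 by omega)
    have h2 := Int.emod_lt_of_pos k hn0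
    refine ⟨by omega, ?_, ?_⟩
    · have := Int.ediv_le_ediv hn0 hk.1
      rw [show (-(L*n:ℤ)) = (-(L:ℤ)) * n by ring, Int.mul_ediv_cancel _ (by omega)] at this
      omega
    · have h3 : k < (L:ℤ) * n := by push_cast at hk ⊢; omega
      have h4 : k / (n:ℤ) < L := by
        rw [Int.ediv_lt_iff_lt_mul hn0]
        omega
      omega
  · intro x hx
    rw [Finset.mem_product, Finset.mem_range, Finset.mem_Icc] at hx
    rw [Finset.mem_Icc]
    have h1 : (x.1 : ℤ) < n := by exact_mod_cast hx.1
    constructor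
    · push_cast
      nlinarith [hx.2.1, (show (0:ℤ) ≤ x.1 by positivity)]
    · push_cast
      nlinarith [hx.2.2, h1]
  · intro k hk
    dsimp only
    have h1 := Int.emod_nonneg k (show (n:ℤ) ≠ 0 by omega)
    have := Int.mul_ediv_add_emod k n
    rw [mul_comm] at this
    rw [Int.toNat_of_nonneg h1]
    omega
  · intro x hx
    rw [Finset.mem_product, Finset.mem_range, Finset.mem_Icc] at hx
    have := qdecomp hn x.2 x.1 hx.1
    ext
    · simp [this.2]
    · simp [this.1]
  · intro k hk
    dsimp only
    have h1 := Int.emod_nonneg k (show (n:ℤ) ≠ 0 by omega)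
    have := Int.mul_ediv_add_emod k n
    rw [mul_comm] at this
    congr 1
    rw [Int.toNat_of_nonneg h1]
    omega

theorem charge_build {n : ℕ} (hn : 1 ≤ n) (m : ℕ → ℤ)
    (hsum : ∑ i ∈ Finset.range n, m i = 0) :
    ∃ p : ℕ → ℕ, IsPartition p ∧
      (∀ k : ℤ, Zset p k ↔ k / (n:ℤ) < m ((k % (n:ℤ)).toNat)) ∧
      2 * (psize p : ℤ) = (n:ℤ) * (∑ i ∈ Finset.range n, (m i)^2)
        + 2 * ∑ i ∈ Finset.range n, (i:ℤ) * m i := by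
  classical
  have hn0 : (0:ℤ) < n := by exact_mod_cast hn
  set L : ℕ := 1 + ∑ i ∈ Finset.range n, (m i).natAbs with hL
  have hLb : ∀ i < n, -(L:ℤ) < m i ∧ m i < L := by
    intro i hi
    have h1 : (m i).natAbs ≤ ∑ i ∈ Finset.range n, (m i).natAbs :=
      Finset.single_le_sum (f := fun i => (m i).natAbs) (fun j _ => Nat.zero_le _) (Finset.mem_range.2 hi)
    have h2 : ((m i).natAbs : ℤ) < L := by
      rw [hL]
      exact_mod_cast (by omega : (m i).natAbs < 1 + ∑ i ∈ Finset.range n, (m i).natAbs)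
    have h3 : -(((m i).natAbs : ℤ)) ≤ m i := by
      rw [← Int.abs_eq_natAbs]
      exact neg_abs_le _
    have h4 : m i ≤ ((m i).natAbs : ℤ) := by
      rw [← Int.abs_eq_natAbs]
      exact le_abs_self _
    omega
  set B : ℕ := L * n with hB'
  have hB : 1 ≤ B := by
    have : 1 ≤ L := by rw [hL]; omega
    calc 1 = 1 * 1 := by ring
    _ ≤ L * n := Nat.mul_le_mul this hn
  have hBcast : (B : ℤ) = (L:ℤ) * n := by push_cast [hB']; ring
  set W : ℤ → Prop := fun k => k / (n:ℤ) < m ((k % (n:ℤ)).toNat) with hW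
  have hrlt : ∀ k : ℤ, ((k % (n:ℤ)).toNat) < n := by
    intro k
    have := Int.emod_lt_of_pos k hn0
    have := Int.emod_nonneg k (show (n:ℤ) ≠ 0 by omega)
    omega
  have ha : ∀ k : ℤ, k + (B:ℤ) ≤ 0 → W k := by
    intro k hk
    rw [hW]
    have h1 : k ≤ (-(L:ℤ)) * n := by rw [hBcast] at hk; linarith
    have h2 := Int.ediv_le_ediv hn0 h1
    rw [Int.mul_ediv_cancel _ (show (n:ℤ) ≠ 0 by omega)] at h2
    have := (hLb _ (hrlt k)).1
    omega
  have hb : ∀ k : ℤ, (B:ℤ) ≤ k → ¬ W k := by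
    intro k hk
    rw [hW]
    have h1 : (L:ℤ) * n ≤ k := by omega
    have h2 := Int.ediv_le_ediv hn0 h1
    rw [Int.mul_ediv_cancel _ (show (n:ℤ) ≠ 0 by omega)] at h2
    have := (hLb _ (hrlt k)).2
    omega
  set F := (Finset.Icc (-(B:ℤ)) ((B:ℤ)-1)).filter (fun k => W k) with hF
  -- split sums over F
  have hFsplit : ∀ g : ℤ → ℤ, ∑ k ∈ F, g k
      = ∑ i ∈ Finset.range n, ∑ q ∈ Finset.Icc (-(L:ℤ)) (m i - 1), g (q * n + i) := by
    intro g
    rw [hF, Finset.sum_filter]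
    rw [show (-(B:ℤ)) = -((L:ℤ)*n) by rw [hBcast], show ((B:ℤ)-1) = ((L:ℤ)*n)-1 by rw [hBcast]]
    rw [show ∑ k ∈ Finset.Icc (-((L:ℤ)*(n:ℤ))) ((L:ℤ)*(n:ℤ)-1), (if W k then g k else 0)
        = ∑ k ∈ Finset.Icc (-((L:ℕ)*(n:ℕ):ℤ)) (((L:ℕ)*(n:ℕ):ℤ)-1), (if W k then g k else 0) by
      push_cast; ring_nf]
    rw [window_sum hn L (fun k => if W k then g k else 0)]
    apply Finset.sum_congr rfl
    intro i hi
    rw [Finset.mem_range] at hi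
    have hWq : ∀ q : ℤ, W (q * n + i) ↔ q < m i := by
      intro q
      have hd := qdecomp hn q i hi
      simp only [hW, hd.1, hd.2]
      simp
    have h1 : ∀ q ∈ Finset.Icc (-(L:ℤ)) ((L:ℤ)-1),
        (if W (q * n + i) then g (q * n + i) else 0)
          = (if q < m i then g (q * n + i) else 0) := by
      intro q _
      simp only [hWq q]
    rw [Finset.sum_congr rfl h1, ← Finset.sum_filter]
    congr 1
    ext q
    rw [Finset.mem_filter, Finset.mem_Icc, Finset.mem_Icc]
    have := (hLb i hi)
    constructor
    · rintro ⟨⟨hq1, hq2⟩, hq3⟩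
      omega
    · rintro ⟨hq1, hq2⟩
      refine ⟨⟨hq1, by omega⟩, by omega⟩
  have hcardIcc : ∀ i < n, ((Finset.Icc (-(L:ℤ)) (m i - 1)).card : ℤ) = m i + L := by
    intro i hi
    rw [Int.card_Icc]
    have := (hLb i hi).1
    rw [Int.toNat_of_nonneg (by omega)]
    ring
  have hc : F.card = B := by
    have h1 : (F.card : ℤ) = ∑ k ∈ F, (1:ℤ) := by
      rw [Finset.sum_const]
      ring
    rw [hFsplit (fun _ => (1:ℤ))] at h1
    have h2 : ∀ i ∈ Finset.range n, ∑ q ∈ Finset.Icc (-(L:ℤ)) (m i - 1), (1:ℤ) = m i + L := by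
      intro i hi
      rw [Finset.mem_range] at hi
      rw [Finset.sum_const, ← hcardIcc i hi]
      ring
    rw [Finset.sum_congr rfl h2, Finset.sum_add_distrib, hsum, Finset.sum_const] at h1
    simp only [Finset.card_range, zero_add, nsmul_eq_mul] at h1
    have : (F.card : ℤ) = (B : ℤ) := by rw [h1, hBcast]; ring
    exact_mod_cast this
  have hmemF : ∀ k : ℤ, k ∈ F ↔ ((-(B:ℤ) ≤ k ∧ k ≤ (B:ℤ)-1) ∧ W k) := by
    intro k
    rw [hF, Finset.mem_filter, Finset.mem_Icc]
  obtain ⟨p, hpart, hZW, hpsize⟩ := builder hB F ha hb hmemF hc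
  refine ⟨p, hpart, fun k => (hZW k), ?_⟩
  -- compute the sum over F
  have h2F : 2 * (∑ k ∈ F, k) = ∑ i ∈ Finset.range n,
      ((n:ℤ) * ((m i)^2 - m i - (L:ℤ) - (L:ℤ)^2) + 2*(i:ℤ)*(m i + (L:ℤ))) := by
    rw [hFsplit (fun k => k), Finset.mul_sum]
    apply Finset.sum_congr rfl
    intro i hi
    rw [Finset.mem_range] at hi
    have hgauss := sum_Icc_int (m i - 1 + 1 - (-(L:ℤ))).toNat (-(L:ℤ)) (m i - 1)
      (by rw [Int.toNat_of_nonneg (by have := (hLb i hi).1; omega)])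
    have hinner : ∑ q ∈ Finset.Icc (-(L:ℤ)) (m i - 1), (q * n + i)
        = (∑ q ∈ Finset.Icc (-(L:ℤ)) (m i - 1), q) * n
          + ((Finset.Icc (-(L:ℤ)) (m i - 1)).card : ℤ) * i := by
      rw [Finset.sum_add_distrib, Finset.sum_mul, Finset.sum_const]
      ring
    rw [hinner, hcardIcc i hi]
    have hq := (hLb i hi)
    nlinarith [hgauss]
  have hGauss2 : 2 * ∑ k ∈ Finset.range B, ((k:ℤ) + 1) = (B:ℤ) * ((B:ℤ)+1) := by
    have h1 := sum_range_cast B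
    rw [Finset.sum_add_distrib, Finset.sum_const]
    simp only [Finset.card_range, nsmul_eq_mul, mul_one]
    ring_nf
    ring_nf at h1
    omega
  -- final assembly
  have hexp : ∑ i ∈ Finset.range n,
      ((n:ℤ) * ((m i)^2 - m i - (L:ℤ) - (L:ℤ)^2) + 2*(i:ℤ)*(m i + (L:ℤ)))
      = (n:ℤ) * (∑ i ∈ Finset.range n, (m i)^2)
        + 2 * (∑ i ∈ Finset.range n, (i:ℤ) * m i)
        + (2*(L:ℤ)) * (∑ i ∈ Finset.range n, (i:ℤ))
        + ((n:ℤ) * (-(L:ℤ) - (L:ℤ)^2)) * n := by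
    have h1 : ∀ i ∈ Finset.range n,
        ((n:ℤ) * ((m i)^2 - m i - (L:ℤ) - (L:ℤ)^2) + 2*(i:ℤ)*(m i + (L:ℤ)))
        = (n:ℤ) * (m i)^2 + (-(n:ℤ)) * m i + 2 * ((i:ℤ) * m i)
          + (2*(L:ℤ)) * (i:ℤ) + ((n:ℤ) * (-(L:ℤ) - (L:ℤ)^2)) := by
      intro i _
      ring
    rw [Finset.sum_congr rfl h1]
    rw [Finset.sum_add_distrib, Finset.sum_add_distrib, Finset.sum_add_distrib,
      Finset.sum_add_distrib, ← Finset.mul_sum, ← Finset.mul_sum, ← Finset.mul_sum,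
      ← Finset.mul_sum, Finset.sum_const]
    rw [hsum]
    simp only [Finset.card_range, nsmul_eq_mul, mul_zero]
    ring
  have hSI := sum_range_cast n
  rw [hpsize, mul_add, h2F, hGauss2, hexp, hBcast]
  nlinarith [hSI]

theorem ncharge_eq {n : ℕ} {p : ℕ → ℕ} (c : ℤ) {i : ℕ}
    (h : ∀ k : ℤ, Zset p (k * n + i) ↔ k < c) : ncharge n p i = c := by
  rw [ncharge]
  have hset : {k : ℤ | word p (k * (n:ℤ) + (i:ℤ)) = 1} = Set.Ici c := by
    ext k
    rw [Set.mem_setOf_eq, word_eq_one_iff, h k, Set.mem_Ici]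
    omega
  rw [hset, csInf_Ici]

theorem fold_gen {n : ℕ} (hn : 1 ≤ n) (f : ℕ → ℤ)
    (hmid : 2 ∣ n ∨ f (n/2) = 0) :
    ∑ i ∈ Finset.range n, f i = ∑ i ∈ Finset.range (n/2), (f (n-1-i) + f i) := by
  have hsplit : ∑ i ∈ Finset.range (n/2), f i + ∑ i ∈ Finset.Ico (n/2) n, f i
      = ∑ i ∈ Finset.range n, f i := by
    simp only [Finset.range_eq_Ico]
    exact Finset.sum_Ico_consecutive f (m := 0) (n := n/2) (k := n) (by omega) (by omega)
  have hmir : ∑ i ∈ Finset.Ico (n/2) n, f i = ∑ j ∈ Finset.range (n - n/2), f (n-1-j) := by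
    apply Finset.sum_nbij' (i := fun i => n-1-i) (j := fun j => n-1-j)
    · intro a ha
      rw [Finset.mem_Ico] at ha
      rw [Finset.mem_range]
      omega
    · intro a ha
      rw [Finset.mem_range] at ha
      rw [Finset.mem_Ico]
      omega
    · intro a ha
      rw [Finset.mem_Ico] at ha
      omega
    · intro a ha
      rw [Finset.mem_range] at ha
      omega
    · intro a ha
      rw [Finset.mem_Ico] at ha
      congr 1
      omega
  rw [Finset.sum_add_distrib]
  rcases Nat.even_or_odd n with he | ho
  · have h2 : n - n/2 = n/2 := by obtain ⟨k, hk⟩ := he; omega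
    rw [← hsplit, hmir, h2]
    ring
  · have hzero : f (n/2) = 0 := hmid.resolve_left (by rintro ⟨c, hc⟩; obtain ⟨k, hk⟩ := ho; omega)
    have h2 : n - n/2 = n/2 + 1 := by obtain ⟨k, hk⟩ := ho; omega
    rw [← hsplit, hmir, h2, Finset.sum_range_succ]
    have h4 : f (n - 1 - n/2) = f (n/2) := by
      congr 1
      obtain ⟨k, hk⟩ := ho
      omega
    rw [h4, hzero]
    ring

theorem sum_anti_zero {n : ℕ} (m : ℕ → ℤ) (hanti : ∀ i < n, m (n-1-i) = -m i) :
    ∑ i ∈ Finset.range n, m i = 0 := by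
  have h1 := Finset.sum_range_reflect m n
  have h2 : ∀ i ∈ Finset.range n, m (n-1-i) = -m i := by
    intro i hi
    exact hanti i (Finset.mem_range.1 hi)
  rw [Finset.sum_congr rfl h2, Finset.sum_neg_distrib] at h1
  omega

end SCC



/-- Let `ω` be an `n`-core with `n`-charge `φ_n(ω) = (m_0, …, m_{n-1})`.  Then
`ω` is self-conjugate iff `m_{n-1-i} = -m_i` for all `i ∈ {0, …, ⌊n/2⌋}`
(in particular `m_{⌊n/2⌋} = 0` when `n` is odd); the map sending a
self-conjugate `n`-core `ω` to `(m_0, …, m_{⌊n/2⌋-1})` is a bijection onto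
`ℤ^{⌊n/2⌋}`; and `|ω| = n ∑_{i<⌊n/2⌋} m_i² + ∑_{i<⌊n/2⌋} (2i - n + 1) m_i`. -/
theorem self_conjugate_core_charge (n : ℕ) (hn : 2 ≤ n) :
    (∀ ω : ℕ → ℕ, IsPartition ω → IsCore n ω →
      (SelfConj ω ↔ ∀ i ≤ n / 2, ncharge n ω (n - 1 - i) = - ncharge n ω i)) ∧
    (∀ ω : ℕ → ℕ, IsPartition ω → IsCore n ω → SelfConj ω → Odd n →
      ncharge n ω (n / 2) = 0) ∧
    Function.Bijective
      (fun ω : {w : ℕ → ℕ // IsPartition w ∧ IsCore n w ∧ SelfConj w} =>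
        fun i : Fin (n / 2) => ncharge n ω.1 (i : ℕ)) ∧
    (∀ ω : ℕ → ℕ, IsPartition ω → IsCore n ω → SelfConj ω →
      (psize ω : ℤ) =
        (n : ℤ) * ∑ i ∈ Finset.range (n / 2), (ncharge n ω i) ^ 2
          + ∑ i ∈ Finset.range (n / 2), (2 * (i : ℤ) - (n : ℤ) + 1) * ncharge n ω i) := by
  have hn1 : 1 ≤ n := by omega
  refine ⟨?_, ?_, ⟨?_, ?_⟩, ?_⟩
  · -- part 1
    intro ω hp hcore
    constructor
    · intro hsc i hi
      exact SCC.antisym_of_selfConj hn1 hp hcore hsc i (by omega)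
    · intro h
      apply SCC.selfConj_of_antisym hn1 hp hcore
      intro i hi
      rcases le_or_gt i (n/2) with h1 | h1
      · exact h i h1
      · have hi' : n-1-i ≤ n/2 := by omega
        have h2 := h (n-1-i) hi'
        rw [show n-1-(n-1-i) = i by omega] at h2
        omega
  · -- part 2
    intro ω hp hcore hsc hodd
    have h := SCC.antisym_of_selfConj hn1 hp hcore hsc (n/2) (by omega)
    obtain ⟨k, hk⟩ := hodd
    rw [show n-1-n/2 = n/2 by omega] at h
    omega
  · -- injective
    intro ω ω' h
    obtain ⟨w, hp, hcore, hsc⟩ := ω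
    obtain ⟨w', hp', hcore', hsc'⟩ := ω'
    simp only [Subtype.mk.injEq]
    have hval : ∀ j : ℕ, j < n/2 → ncharge n w j = ncharge n w' j := by
      intro j hj
      have := congrFun h ⟨j, hj⟩
      simpa using this
    have ha1 := SCC.antisym_of_selfConj hn1 hp hcore hsc
    have ha2 := SCC.antisym_of_selfConj hn1 hp' hcore' hsc'
    have hkey : ∀ i, i < n → ncharge n w i = ncharge n w' i := by
      intro i hi
      rcases Nat.lt_or_ge i (n/2) with h1 | h1
      · exact hval i h1
      · rcases Nat.lt_or_ge (n-1-i) (n/2) with h2 | h2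
        · have e1 := ha1 (n-1-i) (by omega)
          have e2 := ha2 (n-1-i) (by omega)
          rw [show n-1-(n-1-i) = i by omega] at e1 e2
          have := hval (n-1-i) h2
          omega
        · have hmi : n-1-i = i := by omega
          have e1 := ha1 i hi
          have e2 := ha2 i hi
          rw [hmi] at e1 e2
          omega
    apply SCC.Zset_ext hp hp'
    intro k
    rw [SCC.Z_eq_charge hn1 hp hcore, SCC.Z_eq_charge hn1 hp' hcore']
    have hr : ((k % (n:ℤ)).toNat) < n := by
      have := Int.emod_lt_of_pos k (show (0:ℤ) < n by exact_mod_cast hn1)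
      have h0 : (n:ℤ) ≠ 0 := by exact_mod_cast (by omega : n ≠ 0)
      have := Int.emod_nonneg k h0
      omega
    rw [hkey _ hr]
  · -- surjective
    intro v
    classical
    set mf : ℕ → ℤ := fun i =>
      if h : i < n/2 then v ⟨i, h⟩
      else if h' : n-1-i < n/2 then -v ⟨n-1-i, h'⟩ else 0 with hmf
    have hv : ∀ (a b : ℕ) (ha : a < n/2) (hb : b < n/2), a = b → v ⟨a, ha⟩ = v ⟨b, hb⟩ := by
      intro a b ha hb hab
      subst hab
      rfl
    have hanti : ∀ i < n, mf (n-1-i) = - mf i := by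
      intro i hi
      rcases Nat.lt_or_ge i (n/2) with h1 | h1
      · rw [show mf i = v ⟨i, h1⟩ from by simp only [hmf]; rw [dif_pos h1]]
        simp only [hmf]
        rw [dif_neg (by omega : ¬ (n-1-i < n/2)),
          dif_pos (show n-1-(n-1-i) < n/2 by omega)]
        rw [neg_inj]
        exact hv _ _ _ _ (by omega)
      · rcases Nat.lt_or_ge (n-1-i) (n/2) with h2 | h2
        · rw [show mf (n-1-i) = v ⟨n-1-i, h2⟩ from by simp only [hmf]; rw [dif_pos h2]]
          rw [show mf i = -v ⟨n-1-i, h2⟩ from by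
            simp only [hmf]; rw [dif_neg (by omega), dif_pos h2]]
          ring
        · have hmi : n-1-i = i := by omega
          rw [hmi]
          rw [show mf i = 0 from by simp only [hmf]; rw [dif_neg (by omega), dif_neg (by omega)]]
          ring
    have hsum := SCC.sum_anti_zero mf hanti
    obtain ⟨p, hpart, hZ, hsize⟩ := SCC.charge_build hn1 mf hsum
    have hn0 : (n:ℤ) ≠ 0 := by exact_mod_cast (by omega : n ≠ 0)
    have hcore : IsCore n p := by
      rw [SCC.core_iff hn1 hpart]
      intro k hk
      rw [hZ] at hk ⊢
      have he1 : (k - n) / (n:ℤ) = k / n - 1 := by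
        rw [show k - (n:ℤ) = k + (-1) * n by ring, Int.add_mul_ediv_right _ _ hn0]
        ring
      have he2 : (k - n) % (n:ℤ) = k % n := by
        rw [show k - (n:ℤ) = k + (-1) * n by ring, Int.add_mul_emod_self_right]
      rw [he1, he2]
      omega
    have hcharge : ∀ i : ℕ, i < n → ncharge n p i = mf i := by
      intro i hi
      apply SCC.ncharge_eq
      intro k
      rw [hZ]
      have hd := SCC.qdecomp hn1 k i hi
      rw [hd.1, hd.2]
      simp
    have hsc : SelfConj p := by
      apply SCC.selfConj_of_antisym hn1 hpart hcore
      intro i hi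
      rw [hcharge i hi, hcharge (n-1-i) (by omega)]
      exact hanti i hi
    refine ⟨⟨p, hpart, hcore, hsc⟩, ?_⟩
    funext j
    show ncharge n p (j : ℕ) = v j
    rw [hcharge (j:ℕ) (by have := j.2; omega)]
    simp only [hmf]
    rw [dif_pos j.2]
  · -- part 4
    intro ω hp hcore hsc
    set m : ℕ → ℤ := ncharge n ω with hm
    have hanti : ∀ i < n, m (n-1-i) = -m i := fun i hi =>
      SCC.antisym_of_selfConj hn1 hp hcore hsc i hi
    have hsum := SCC.sum_anti_zero m hanti
    obtain ⟨p, hpart, hZ, hsize⟩ := SCC.charge_build hn1 m hsum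
    have hpe : p = ω := by
      apply SCC.Zset_ext hpart hp
      intro k
      rw [hZ k, SCC.Z_eq_charge hn1 hp hcore]
    rw [hpe] at hsize
    have hmid : ∀ f : ℕ → ℤ, (∀ x : ℤ, x = -x → f (n/2) = 0) → (2 ∣ n ∨ f (n/2) = 0) := by
      intro f hf
      by_cases hd : 2 ∣ n
      · exact Or.inl hd
      · right
        apply hf (m (n/2))
        have := hanti (n/2) (by omega)
        rw [show n-1-n/2 = n/2 by omega] at this
        omega
    have hmid0 : ¬ 2 ∣ n → m (n/2) = 0 := by
      intro hd
      have := hanti (n/2) (by omega)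
      rw [show n-1-n/2 = n/2 by omega] at this
      omega
    have hfold1 : ∑ i ∈ Finset.range n, (m i)^2
        = 2 * ∑ i ∈ Finset.range (n/2), (m i)^2 := by
      rw [SCC.fold_gen hn1 (fun i => (m i)^2) ?_]
      · rw [Finset.mul_sum]
        apply Finset.sum_congr rfl
        intro i hi
        rw [Finset.mem_range] at hi
        have := hanti i (by omega)
        show m (n-1-i) ^ 2 + m i ^ 2 = 2 * m i ^ 2
        rw [this]
        ring
      · by_cases hd : 2 ∣ n
        · exact Or.inl hd
        · right
          show m (n/2) ^ 2 = 0
          rw [hmid0 hd]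
          ring
    have hfold2 : ∑ i ∈ Finset.range n, (i:ℤ) * m i
        = ∑ i ∈ Finset.range (n/2), (2 * (i:ℤ) - (n:ℤ) + 1) * m i := by
      rw [SCC.fold_gen hn1 (fun i => (i:ℤ) * m i) ?_]
      · apply Finset.sum_congr rfl
        intro i hi
        rw [Finset.mem_range] at hi
        have h1 := hanti i (by omega)
        show ((n-1-i : ℕ) : ℤ) * m (n-1-i) + (i:ℤ) * m i = _
        rw [h1]
        have h2 : ((n-1-i : ℕ) : ℤ) = (n:ℤ) - 1 - i := by
          have : 1 + i ≤ n := by omega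
          push_cast [Nat.cast_sub this, Nat.cast_sub (by omega : i ≤ n - 1)]
          omega
        rw [h2]
        ring
      · by_cases hd : 2 ∣ n
        · exact Or.inl hd
        · right
          show ((n/2 : ℕ) : ℤ) * m (n/2) = 0
          rw [hmid0 hd]
          ring
    have h2 : 2 * (psize ω : ℤ)
        = 2 * ((n : ℤ) * ∑ i ∈ Finset.range (n / 2), (ncharge n ω i) ^ 2
          + ∑ i ∈ Finset.range (n / 2), (2 * (i : ℤ) - (n : ℤ) + 1) * ncharge n ω i) := by
      rw [hsize, hfold1, hfold2]
      rw [hm]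
      ring
    have := mul_left_cancel₀ (show (2:ℤ) ≠ 0 by norm_num) h2
    exact this
end

section
/- Let n ≥ 2 be an integer and λ̄ a distinct partition. Then λ̄ belongs to 𝒞_n^{d,r} if and only if its doubled distinct partition λ̄λ̄ belongs to 𝒞_n^{dd}, the set of doubled distinct n-core partitions. -/
open scoped Classical

/-! ### Auxiliary lemmas -/

/-- A finite lower set of `ℕ` consists exactly of the numbers below its cardinality. -/
lemma aux_lower_card_iff (S : Set ℕ) (hfin : S.Finite)
    (hlow : ∀ a b : ℕ, a ≤ b → b ∈ S → a ∈ S) (i : ℕ) :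
    i ∈ S ↔ i < Nat.card S := by
  rw [Nat.card_eq_card_finite_toFinset hfin]
  constructor
  · intro hi
    have hsub : Finset.range (i + 1) ⊆ hfin.toFinset := by
      intro a ha
      simp only [Finset.mem_range] at ha
      simp only [Set.Finite.mem_toFinset]
      exact hlow a i (Nat.lt_succ_iff.mp ha) hi
    have := Finset.card_le_card hsub
    simpa [Finset.card_range] using this
  · intro hi
    by_contra hni
    have hsub : hfin.toFinset ⊆ Finset.range i := by
      intro a ha
      simp only [Set.Finite.mem_toFinset] at ha
      simp only [Finset.mem_range]
      by_contra h
      exact hni (hlow i a (le_of_not_gt h) ha)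
    have := Finset.card_le_card hsub
    simp only [Finset.card_range] at this
    omega

lemma aux_lower_card_eq (S : Set ℕ) (hfin : S.Finite)
    (hlow : ∀ a b : ℕ, a ≤ b → b ∈ S → a ∈ S) (m : ℕ)
    (h : ∀ i, i ∈ S ↔ i < m) : Nat.card S = m := by
  have h1 : ∀ i, i < Nat.card S ↔ i < m :=
    fun i => (aux_lower_card_iff S hfin hlow i).symm.trans (h i)
  have := h1 (Nat.card S)
  have := h1 m
  omega

/-- The nonzero parts of a partition are exactly the first `plen` ones. -/
lemma aux_plen_iff (p : ℕ → ℕ) (hp : IsPartition p) (i : ℕ) :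
    p i ≠ 0 ↔ i < plen p := by
  obtain ⟨hmono, N, hN⟩ := hp
  have : plen p = Nat.card {i : ℕ | p i ≠ 0} := rfl
  rw [this]
  exact aux_lower_card_iff _
    (Set.Finite.subset (Set.finite_Iio N)
      (fun a ha => by
        have h1 : p a ≠ 0 := ha
        simp only [Set.mem_Iio]
        by_contra h
        exact h1 (hN a (by omega))))
    (fun a c hac hc => by
      have h1 : p c ≠ 0 := hc
      have h2 := hmono hac
      show p a ≠ 0
      omega) i

lemma aux_mem_cells (p : ℕ → ℕ) (hp : IsPartition p) (i j : ℕ) :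
    (i, j) ∈ cells p ↔ j < p i := by
  unfold cells
  simp only [Finset.mem_filter, Finset.mem_product, Finset.mem_range]
  constructor
  · tauto
  · intro h
    refine ⟨⟨(aux_plen_iff p hp i).mp (by omega), ?_⟩, h⟩
    have := hp.1 (Nat.zero_le i)
    omega

lemma aux_mem_hooks (p : ℕ → ℕ) (n : ℕ) :
    n ∈ hooks p ↔ ∃ i j, (i, j) ∈ cells p ∧ hookLen p i j = n := by
  unfold hooks
  rw [Multiset.mem_map]
  constructor
  · rintro ⟨⟨i, j⟩, hs, hval⟩
    exact ⟨i, j, hs, hval⟩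
  · rintro ⟨i, j, hs, hval⟩
    exact ⟨(i, j), hs, hval⟩

lemma aux_mem_hooksAbove (p : ℕ → ℕ) (n : ℕ) :
    n ∈ hooksAbove p ↔ ∃ i j, i < j ∧ (i, j) ∈ cells p ∧ hookLen p i j = n := by
  unfold hooksAbove
  rw [Multiset.mem_map]
  constructor
  · rintro ⟨⟨i, j⟩, hs, hval⟩
    rw [Finset.mem_val, Finset.mem_filter] at hs
    exact ⟨i, j, hs.2, hs.1, hval⟩
  · rintro ⟨i, j, hij, hs, hval⟩
    exact ⟨(i, j), Finset.mem_val.mpr (Finset.mem_filter.mpr ⟨hs, hij⟩), hval⟩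

section Doubled

variable (b : ℕ → ℕ)

/-- Count of shifted rows reaching column `m`. -/
noncomputable def ccount (m : ℕ) : ℕ := Nat.card {k : ℕ // k < plen b ∧ m ≤ b k + k}

variable {b} (hb : IsPartition b) (hd : IsDistinct b)
include hb hd

lemma aux_e_anti : ∀ j, j < plen b → ∀ i, i ≤ j → b j + j ≤ b i + i := by
  intro j hj
  induction j with
  | zero =>
    intro i hi
    have : i = 0 := by omega
    subst this
    omega
  | succ k ih =>
    intro i hi
    rcases Nat.eq_or_lt_of_le hi with rfl | hlt
    · omega
    · have h1 : b (k + 1) ≠ 0 := (aux_plen_iff b hb (k + 1)).mpr hj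
      have hk : k < plen b := Nat.lt_of_succ_lt hj
      have h2 := hd k h1
      have h3 := ih hk i (Nat.lt_succ_iff.mp hlt)
      omega

lemma aux_e_ge (i : ℕ) (hi : i < plen b) : plen b ≤ b i + i := by
  have hpos : 0 < plen b := by omega
  have h1 := aux_e_anti hb hd (plen b - 1) (by omega) i (by omega)
  have h2 : b (plen b - 1) ≠ 0 := (aux_plen_iff b hb _).mpr (by omega)
  omega

lemma aux_ccount_lt_iff (m k : ℕ) :
    k < ccount b m ↔ k < plen b ∧ m ≤ b k + k := by
  have h := aux_lower_card_iff {k : ℕ | k < plen b ∧ m ≤ b k + k}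
    (Set.Finite.subset (Set.finite_Iio (plen b)) (fun a ha => ha.1))
    (fun a c hac hc => by
      simp only [Set.mem_setOf_eq] at *
      exact ⟨by omega, le_trans hc.2 (aux_e_anti hb hd c hc.1 a hac)⟩) k
  exact h.symm

lemma aux_ccount_le (m : ℕ) : ccount b m ≤ plen b := by
  by_contra h
  have := (aux_ccount_lt_iff hb hd m (plen b)).mp (by omega)
  omega

lemma aux_ccount_anti {m m' : ℕ} (h : m ≤ m') : ccount b m' ≤ ccount b m := by
  by_contra hc
  have := (aux_ccount_lt_iff hb hd m' (ccount b m)).mp (by omega)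
  have := (aux_ccount_lt_iff hb hd m (ccount b m)).mpr ⟨this.1, by omega⟩
  omega

omit hb hd in
lemma aux_double_lt {i : ℕ} (hi : i < plen b) : double b i = b i + i + 1 := by
  unfold double; rw [if_pos hi]; omega

omit hb hd in
lemma aux_double_ge {i : ℕ} (hi : plen b ≤ i) : double b i = ccount b (i + 1) := by
  unfold double; rw [if_neg (by omega)]; rfl

lemma aux_double_partition : IsPartition (double b) := by
  constructor
  · intro i j hij
    rcases lt_or_ge j (plen b) with hj | hj
    · rw [aux_double_lt hj, aux_double_lt (by omega)]
      have := aux_e_anti hb hd j hj i hij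
      omega
    · rw [aux_double_ge hj]
      rcases lt_or_ge i (plen b) with hi | hi
      · rw [aux_double_lt hi]
        have h1 := aux_ccount_le hb hd (j + 1)
        have h2 := aux_e_ge hb hd i hi
        omega
      · rw [aux_double_ge hi]
        exact aux_ccount_anti hb hd (by omega)
  · refine ⟨max (plen b) (b 0 + 1), fun i hi => ?_⟩
    rw [aux_double_ge (by omega)]
    by_contra h
    have := (aux_ccount_lt_iff hb hd (i + 1) 0).mp (by omega)
    have := aux_e_anti hb hd _ this.1 0 (by omega)
    omega

lemma aux_pconj_double_lt {j : ℕ} (hj : j < plen b) :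
    pconj (double b) j = b j + j := by
  have hN := (aux_double_partition hb hd).2
  refine aux_lower_card_eq {i : ℕ | j + 1 ≤ double b i}
    ?_ ?_ _ (fun i => ?_)
  · obtain ⟨N, hN⟩ := hN
    exact Set.Finite.subset (Set.finite_Iio N)
      (fun a ha => by
        simp only [Set.mem_setOf_eq] at ha
        simp only [Set.mem_Iio]
        by_contra h
        rw [hN a (by omega)] at ha
        omega)
  · intro a c hac hc
    have := (aux_double_partition hb hd).1 hac
    simp only [Set.mem_setOf_eq] at *
    omega
  · simp only [Set.mem_setOf_eq]
    rcases lt_or_ge i (plen b) with hi | hi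
    · rw [aux_double_lt hi]
      have h1 := aux_e_ge hb hd i hi
      have h2 := aux_e_ge hb hd j hj
      omega
    · rw [aux_double_ge hi]
      rw [show j + 1 ≤ ccount b (i + 1) ↔ j < ccount b (i + 1) from Iff.rfl]
      rw [aux_ccount_lt_iff hb hd]
      omega

lemma aux_pconj_double_ge {j : ℕ} (hj : plen b ≤ j) :
    pconj (double b) j = ccount b j := by
  have hN := (aux_double_partition hb hd).2
  refine aux_lower_card_eq {i : ℕ | j + 1 ≤ double b i}
    ?_ ?_ _ (fun i => ?_)
  · obtain ⟨N, hN⟩ := hN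
    exact Set.Finite.subset (Set.finite_Iio N)
      (fun a ha => by
        simp only [Set.mem_setOf_eq] at ha
        simp only [Set.mem_Iio]
        by_contra h
        rw [hN a (by omega)] at ha
        omega)
  · intro a c hac hc
    have := (aux_double_partition hb hd).1 hac
    simp only [Set.mem_setOf_eq] at *
    omega
  · simp only [Set.mem_setOf_eq]
    rcases lt_or_ge i (plen b) with hi | hi
    · rw [aux_double_lt hi]
      have := (aux_ccount_lt_iff hb hd j i)
      omega
    · rw [aux_double_ge hi]
      have h1 := aux_ccount_le hb hd (i + 1)
      have h2 := aux_ccount_le hb hd j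
      omega

lemma aux_durfee_double : durfee (double b) = plen b := by
  refine aux_lower_card_eq {i : ℕ | i + 1 ≤ double b i}
    ?_ ?_ _ (fun i => ?_)
  · exact Set.Finite.subset (Set.finite_Iio (plen b))
      (fun a ha => by
        simp only [Set.mem_setOf_eq] at ha
        simp only [Set.mem_Iio]
        by_contra h
        rw [aux_double_ge (by omega)] at ha
        have := aux_ccount_le hb hd (a + 1)
        omega)
  · intro a c hac hc
    simp only [Set.mem_setOf_eq] at *
    have := (aux_double_partition hb hd).1 hac
    omega
  · simp only [Set.mem_setOf_eq]
    rcases lt_or_ge i (plen b) with hi | hi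
    · rw [aux_double_lt hi]; omega
    · rw [aux_double_ge hi]
      have := aux_ccount_le hb hd (i + 1)
      omega

lemma aux_dd_double : IsDD (double b) := by
  intro i hi
  rw [aux_durfee_double hb hd] at hi
  rw [aux_double_lt hi, aux_pconj_double_lt hb hd hi]

lemma aux_diag_cell {i : ℕ} (hi : i < plen b) : (i, i) ∈ cells (double b) := by
  rw [aux_mem_cells _ (aux_double_partition hb hd), aux_double_lt hi]
  omega

lemma aux_diag_hook {i : ℕ} (hi : i < plen b) :
    hookLen (double b) i i = 2 * b i := by
  unfold hookLen
  rw [aux_double_lt hi, aux_pconj_double_lt hb hd hi]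
  have h1 := aux_e_ge hb hd i hi
  omega

end Doubled

/-- For `n ≥ 2` and a distinct partition `λ̄` : `λ̄ ∈ 𝒞_n^{d,r}` (i.e. `n` is not
a shifted hook length of `λ̄` and `n/2` is not a part of `λ̄`) if and only if the
doubled distinct partition `λ̄λ̄` belongs to `𝒞_n^{dd}`, the set of doubled
distinct `n`-core partitions. -/
theorem distinct_core_iff_doubled_core (n : ℕ) (hn : 2 ≤ n)
    (b : ℕ → ℕ) (hb : IsPartition b) (hd : IsDistinct b) :
    (n ∉ hooksAbove (double b) ∧ ∀ i, 2 * b i ≠ n) ↔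
      (IsCore n (double b) ∧ IsDD (double b)) := by
  have hdp := aux_double_partition hb hd
  constructor
  · rintro ⟨h1, h2⟩
    refine ⟨?_, aux_dd_double hb hd⟩
    intro hmem
    rw [aux_mem_hooks] at hmem
    obtain ⟨i, j, hc, hval⟩ := hmem
    rw [aux_mem_cells _ hdp] at hc
    rcases lt_trichotomy i j with hij | rfl | hij
    · exact h1 ((aux_mem_hooksAbove _ n).mpr
        ⟨i, j, hij, (aux_mem_cells _ hdp i j).mpr hc, hval⟩)
    · have hi : i < plen b := by
        by_contra h
        rw [aux_double_ge (by omega)] at hc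
        have := aux_ccount_le hb hd (i + 1)
        omega
      exact h2 i (by rw [← aux_diag_hook hb hd hi, hval])
    · apply h1
      rw [aux_mem_hooksAbove]
      rcases lt_or_ge i (plen b) with hi | hi
      · have hj : j < plen b := by omega
        refine ⟨j, i, hij, (aux_mem_cells _ hdp j i).mpr ?_, ?_⟩
        · rw [aux_double_lt hj]
          have := aux_e_ge hb hd j hj
          omega
        · rw [← hval]
          unfold hookLen
          rw [aux_double_lt hi, aux_double_lt hj,
            aux_pconj_double_lt hb hd hi, aux_pconj_double_lt hb hd hj]
          have h3 := aux_e_ge hb hd j hj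
          have h4 := aux_e_ge hb hd i hi
          omega
      · rw [aux_double_ge hi] at hc
        have hjc := (aux_ccount_lt_iff hb hd (i + 1) j).mp hc
        have hj : j < plen b := hjc.1
        have hej : i + 1 ≤ b j + j := hjc.2
        refine ⟨j, i + 1, by omega, (aux_mem_cells _ hdp j (i + 1)).mpr ?_, ?_⟩
        · rw [aux_double_lt hj]
          omega
        · rw [← hval]
          unfold hookLen
          rw [aux_double_lt hj, aux_double_ge hi,
            aux_pconj_double_lt hb hd hj,
            aux_pconj_double_ge hb hd (show plen b ≤ i + 1 by omega)]
          omega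
  · rintro ⟨hcore, _⟩
    constructor
    · intro hmem
      rw [aux_mem_hooksAbove] at hmem
      obtain ⟨i, j, hij, hc, hval⟩ := hmem
      exact hcore ((aux_mem_hooks _ n).mpr ⟨i, j, hc, hval⟩)
    · intro i hni
      rcases lt_or_ge i (plen b) with hi | hi
      · exact hcore ((aux_mem_hooks _ n).mpr
          ⟨i, i, aux_diag_cell hb hd hi, by rw [aux_diag_hook hb hd hi, hni]⟩)
      · have hz : b i = 0 := by
          by_contra h
          have := (aux_plen_iff b hb i).mp h
          omega
        omega
end

section
/- Let n ≥ 2. For each self-conjugate 2n-core c with φ_{2n}(c) = (m_0,…,m_{n−1}, −m_{n−1},…,−m_0), set c′ := φ_{2n+1}^{-1}(m_0,…,m_{n−1}, 0, −m_{n−1},…,−m_0). Then the map c ↦ c′ is a bijection from 𝒞_{2n}^s (self-conjugate 2n-cores) onto 𝒞_{2n+1}^s (self-conjugate (2n+1)-cores), and |c′| = |c| + a_n(c), where a_n(c) is the number of boxes of c whose residue modulo 2n equals n. -/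
open scoped Classical

/-- The vector `(m_0, …, m_{n-1}, 0, -m_{n-1}, …, -m_0)` of length `2n + 1`. -/
noncomputable def extVecAp (n : ℕ) (m : ℕ → ℤ) : ℕ → ℤ := fun i =>
  if i < n then m i
  else if i = n then 0
  else if i ≤ 2 * n then - m (2 * n - i)
  else 0

/-! ### Auxiliary development for the main theorem -/

section AuxDev

open Finset

/-- division/mod normal form -/
lemma aux_divmod {g : ℕ} (hg : 0 < g) (k r : ℤ) (h0 : 0 ≤ r) (h1 : r < (g:ℤ)) :
    (k * (g:ℤ) + r) / (g:ℤ) = k ∧ (k * (g:ℤ) + r) % (g:ℤ) = r := by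
  have hg' : (g:ℤ) ≠ 0 := by exact_mod_cast hg.ne'
  constructor
  · rw [add_comm, Int.add_mul_ediv_right r k hg', Int.ediv_eq_zero_of_lt h0 h1, zero_add]
  · rw [add_comm, Int.add_mul_emod_self_right, Int.emod_eq_of_lt h0 h1]

lemma aux_blockLt {H l k u v : ℤ} (hH : 0 < H) (hu0 : 0 ≤ u) (huH : u < H)
    (hv0 : 0 ≤ v) (hvH : v < H) :
    l * H + u < k * H + v ↔ (l < k ∨ (l = k ∧ u < v)) := by
  constructor
  · intro h
    rcases lt_trichotomy l k with h1 | h1 | h1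
    · exact Or.inl h1
    · exact Or.inr ⟨h1, by subst h1; omega⟩
    · exfalso
      have h2 : (k + 1) * H ≤ l * H := mul_le_mul_of_nonneg_right (by omega) hH.le
      rw [add_one_mul] at h2
      omega
  · rintro (h1 | ⟨rfl, h2⟩)
    · have h2 : (l + 1) * H ≤ k * H := mul_le_mul_of_nonneg_right (by omega) hH.le
      rw [add_one_mul] at h2
      omega
    · omega

lemma aux_card_down {P : ℕ → Prop} (hfin : {i | P i}.Finite)
    (hdc : ∀ i j, i ≤ j → P j → P i) (k : ℕ) :
    P k ↔ k < Nat.card {i : ℕ // P i} := by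
  have hcard : Nat.card {i : ℕ // P i} = {i | P i}.ncard :=
    Nat.card_coe_set_eq {i | P i}
  rw [hcard]
  constructor
  · intro hk
    have hsub : Set.Iic k ⊆ {i | P i} := fun j hj => hdc j k hj hk
    have h1 : (Set.Iic k).ncard ≤ {i | P i}.ncard := Set.ncard_le_ncard hsub hfin
    have h2 : (Set.Iic k).ncard = k + 1 := by
      rw [← Finset.coe_Iic, Set.ncard_coe_finset, Nat.card_Iic]
    omega
  · intro hk
    by_contra hnk
    have hsub : {i | P i} ⊆ Set.Iio k := by
      intro j hj
      by_contra h2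
      simp only [Set.mem_Iio, not_lt] at h2
      exact hnk (hdc k j h2 hj)
    have h1 : {i | P i}.ncard ≤ (Set.Iio k).ncard :=
      Set.ncard_le_ncard hsub (Set.finite_Iio k)
    have h2 : (Set.Iio k).ncard = k := by
      rw [← Finset.coe_Iio, Set.ncard_coe_finset, Nat.card_Iio]
    omega

/-! ### beta-sets of partitions -/

def ZS (p : ℕ → ℕ) : Set ℤ := {x | ∃ m : ℕ, x = (p m : ℤ) - ((m : ℤ) + 1)}

lemma word_zero_iff (p : ℕ → ℕ) (x : ℤ) : word p x = 0 ↔ x ∈ ZS p := by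
  unfold word ZS
  split <;> simp_all

lemma word_one_iff (p : ℕ → ℕ) (x : ℤ) : word p x = 1 ↔ x ∉ ZS p := by
  unfold word ZS
  split <;> simp_all

variable {p q : ℕ → ℕ}

lemma plen_iff (hp : IsPartition p) (i : ℕ) : p i ≠ 0 ↔ i < plen p := by
  obtain ⟨hmono, N, hN⟩ := hp
  have h1 : {i : ℕ | p i ≠ 0}.Finite := by
    refine (Set.finite_Iio N).subset fun j hj => ?_
    simp only [Set.mem_Iio]
    by_contra h2
    exact hj (hN j (by omega))
  have h2 : ∀ i j : ℕ, i ≤ j → p j ≠ 0 → p i ≠ 0 := by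
    intro i j hij hj
    have := hmono hij
    omega
  exact aux_card_down (P := fun i => p i ≠ 0) h1 h2 i

lemma part_zero (hp : IsPartition p) {m : ℕ} (h : plen p ≤ m) : p m = 0 := by
  by_contra h2
  exact absurd ((plen_iff hp m).1 h2) (by omega)

lemma part_pos (hp : IsPartition p) {m : ℕ} (h : m < plen p) : 1 ≤ p m := by
  have := (plen_iff hp m).2 h
  omega

lemma pconj_iff (hp : IsPartition p) (i j : ℕ) : j + 1 ≤ p i ↔ i < pconj p j := by
  obtain ⟨hmono, N, hN⟩ := hp
  have h1 : {i : ℕ | j + 1 ≤ p i}.Finite := by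
    refine (Set.finite_Iio N).subset fun l hl => ?_
    simp only [Set.mem_setOf_eq] at hl
    simp only [Set.mem_Iio]
    by_contra h2
    have := hN l (by omega)
    omega
  have h2 : ∀ a b : ℕ, a ≤ b → j + 1 ≤ p b → j + 1 ≤ p a := by
    intro a b hab hb
    have := hmono hab
    omega
  exact aux_card_down (P := fun i => j + 1 ≤ p i) h1 h2 i

lemma pconj_antitone (hp : IsPartition p) : Antitone (pconj p) := by
  intro j j' h
  by_contra h2
  push_neg at h2
  have h3 : j' + 1 ≤ p (pconj p j) := (pconj_iff hp (pconj p j) j').2 h2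
  have h4 : pconj p j < pconj p j := (pconj_iff hp (pconj p j) j).1 (by omega)
  omega

lemma pconj_part (hp : IsPartition p) : IsPartition (pconj p) := by
  refine ⟨pconj_antitone hp, ⟨p 0, fun j hj => ?_⟩⟩
  by_contra h
  have := (pconj_iff hp 0 j).2 (Nat.pos_of_ne_zero h)
  have := hp.1 (Nat.zero_le 0)
  omega

/-! ### counting elements above a point -/

noncomputable def cntA (Z : Set ℤ) (t : ℤ) : ℕ := (Z ∩ Set.Ioi t).ncard

lemma cntA_finite {Z : Set ℤ} {b : ℤ} (hb : ∀ x, b ≤ x → x ∉ Z) (t : ℤ) :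
    (Z ∩ Set.Ioi t).Finite := by
  refine (Set.finite_Icc (t + 1) b).subset ?_
  rintro x ⟨hx1, hx2⟩
  simp only [Set.mem_Ioi] at hx2
  have : ¬ (b ≤ x) := fun h => hb x h hx1
  simp only [Set.mem_Icc]
  omega

lemma cntA_anti {Z : Set ℤ} {b : ℤ} (hb : ∀ x, b ≤ x → x ∉ Z) {t t' : ℤ} (h : t ≤ t') :
    cntA Z t' ≤ cntA Z t := by
  refine Set.ncard_le_ncard ?_ (cntA_finite hb t)
  rintro x ⟨hx1, hx2⟩
  simp only [Set.mem_Ioi] at hx2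
  exact ⟨hx1, by simp only [Set.mem_Ioi]; omega⟩

lemma aux_ncard_Iio (k : ℕ) : (Set.Iio k).ncard = k := by
  rw [← Finset.coe_Iio, Set.ncard_coe_finset, Nat.card_Iio]

lemma cntA_enum {Z : Set ℤ} {d : ℕ → ℤ}
    (hd : StrictAnti d) (hr : Set.range d = Z) (i : ℕ) :
    cntA Z (d i) = i := by
  have himg : Z ∩ Set.Ioi (d i) = d '' (Set.Iio i) := by
    ext z
    constructor
    · rintro ⟨hz1, hz2⟩
      rw [← hr] at hz1
      obtain ⟨k, rfl⟩ := hz1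
      simp only [Set.mem_Ioi] at hz2
      exact ⟨k, hd.lt_iff_gt.1 hz2, rfl⟩
    · rintro ⟨k, hk, rfl⟩
      simp only [Set.mem_Iio] at hk
      exact ⟨hr ▸ Set.mem_range_self k, by simp only [Set.mem_Ioi]; exact hd hk⟩
  rw [cntA, himg, Set.ncard_image_of_injective _ hd.injective, aux_ncard_Iio]

lemma lt_enum_iff {Z : Set ℤ} {b : ℤ} {d : ℕ → ℤ} (hb : ∀ x, b ≤ x → x ∉ Z)
    (hd : StrictAnti d) (hr : Set.range d = Z) (i : ℕ) (y : ℤ) :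
    y < d i ↔ i + 1 ≤ cntA Z y := by
  constructor
  · intro h
    have hsub : d '' (Set.Iic i) ⊆ Z ∩ Set.Ioi y := by
      rintro z ⟨k, hk, rfl⟩
      simp only [Set.mem_Iic] at hk
      refine ⟨hr ▸ Set.mem_range_self k, ?_⟩
      simp only [Set.mem_Ioi]
      have := hd.antitone hk
      omega
    have h1 : (d '' Set.Iic i).ncard ≤ cntA Z y :=
      Set.ncard_le_ncard hsub (cntA_finite hb y)
    have h2 : (d '' Set.Iic i).ncard = i + 1 := by
      rw [Set.ncard_image_of_injective _ hd.injective, ← Finset.coe_Iic,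
        Set.ncard_coe_finset, Nat.card_Iic]
    omega
  · intro h
    by_contra h2
    push_neg at h2
    have h3 : cntA Z y ≤ cntA Z (d i) := cntA_anti hb h2
    rw [cntA_enum hd hr] at h3
    omega

lemma enum_unique {Z : Set ℤ} {b : ℤ} {d1 d2 : ℕ → ℤ} (hb : ∀ x, b ≤ x → x ∉ Z)
    (hd1 : StrictAnti d1) (hr1 : Set.range d1 = Z)
    (hd2 : StrictAnti d2) (hr2 : Set.range d2 = Z) : d1 = d2 := by
  funext i
  rcases lt_trichotomy (d1 i) (d2 i) with h | h | h
  · have h2 : i + 1 ≤ cntA Z (d1 i) := (lt_enum_iff hb hd2 hr2 i (d1 i)).1 h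
    rw [cntA_enum hd1 hr1] at h2
    omega
  · exact h
  · have h2 : i + 1 ≤ cntA Z (d2 i) := (lt_enum_iff hb hd1 hr1 i (d2 i)).1 h
    rw [cntA_enum hd2 hr2] at h2
    omega

/-! ### the enumeration of a partition beta-set -/

noncomputable def dP (p : ℕ → ℕ) : ℕ → ℤ := fun m => (p m : ℤ) - ((m : ℤ) + 1)

lemma dP_strictAnti {p : ℕ → ℕ} (hp : IsPartition p) : StrictAnti (dP p) := by
  refine strictAnti_nat_of_succ_lt fun m => ?_
  have : p (m + 1) ≤ p m := hp.1 (Nat.le_succ m)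
  unfold dP
  push_cast
  omega

lemma dP_range (p : ℕ → ℕ) : Set.range (dP p) = ZS p := by
  ext x
  simp only [Set.mem_range, ZS, Set.mem_setOf_eq, dP, eq_comm]

lemma ZS_hi {p : ℕ → ℕ} (hp : IsPartition p) : ∀ x : ℤ, (p 0 : ℤ) ≤ x → x ∉ ZS p := by
  rintro x hx ⟨m, rfl⟩
  have := hp.1 (Nat.zero_le m)
  omega

lemma ZS_lo {p : ℕ → ℕ} (hp : IsPartition p) :
    ∀ x : ℤ, x < -(plen p : ℤ) → x ∈ ZS p := by
  intro x hx
  refine ⟨(-x - 1).toNat, ?_⟩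
  have h3 : p (-x - 1).toNat = 0 := part_zero hp (by omega)
  rw [h3]
  push_cast
  omega

lemma ZS_balance {p : ℕ → ℕ} (hp : IsPartition p) {a : ℤ} (ha : a ≤ -(plen p : ℤ)) :
    (ZS p ∩ Set.Ici a).ncard = (-a).toNat := by
  have himg : ZS p ∩ Set.Ici a = dP p '' (Set.Iio (-a).toNat) := by
    ext z
    constructor
    · rintro ⟨hz1, hz2⟩
      rw [← dP_range] at hz1
      obtain ⟨m, rfl⟩ := hz1
      simp only [Set.mem_Ici] at hz2
      refine ⟨m, ?_, rfl⟩
      simp only [Set.mem_Iio]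
      rcases Nat.lt_or_ge m (plen p) with h | h
      · omega
      · have h0 : p m = 0 := part_zero hp h
        unfold dP at hz2
        rw [h0] at hz2
        push_cast at hz2
        omega
    · rintro ⟨m, hm, rfl⟩
      simp only [Set.mem_Iio] at hm
      refine ⟨(dP_range p) ▸ Set.mem_range_self m, ?_⟩
      simp only [Set.mem_Ici]
      unfold dP
      rcases Nat.lt_or_ge m (plen p) with h | h
      · have h1 := part_pos hp h
        omega
      · have h0 : p m = 0 := part_zero hp h
        rw [h0]
        push_cast
        omega
  rw [himg, Set.ncard_image_of_injective _ (dP_strictAnti hp).injective, aux_ncard_Iio]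

/-! ### the dictionary: complement of the beta-set -/

lemma dict {p : ℕ → ℕ} (hp : IsPartition p) (k : ℤ) :
    k ∈ ZS p ↔ ¬ ∃ j : ℕ, k = (j : ℤ) - (pconj p j : ℤ) := by
  constructor
  · rintro ⟨m, rfl⟩ ⟨j, hj⟩
    rcases Nat.lt_or_ge j (p m) with h | h
    · have h2 : m < pconj p j := (pconj_iff hp m j).1 (by omega)
      omega
    · have h2 : pconj p j ≤ m := by
        by_contra h3
        push_neg at h3
        have := (pconj_iff hp m j).2 h3
        omega
      omega
  · intro hne
    by_contra hk
    have hex : ∃ i : ℕ, (p i : ℤ) - i - 1 < k := by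
      refine ⟨plen p + (-k).toNat, ?_⟩
      have h0 : p (plen p + (-k).toNat) = 0 := part_zero hp (by omega)
      rw [h0]
      push_cast
      omega
    have hlt : (p (Nat.find hex) : ℤ) - (Nat.find hex) - 1 < k := Nat.find_spec hex
    set i := Nat.find hex with hidef
    have hne' : ∀ m : ℕ, k ≠ (p m : ℤ) - ((m : ℤ) + 1) := fun m hm => hk ⟨m, hm⟩
    have hki : 0 ≤ k + i := by
      have : (0 : ℤ) ≤ (p i : ℤ) := by positivity
      omega
    apply hne
    refine ⟨(k + i).toNat, ?_⟩
    have hcj : pconj p (k + i).toNat = i := by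
      have h1 : ¬ ((k + i).toNat + 1 ≤ p i) := by omega
      have h2 : pconj p (k + i).toNat ≤ i := by
        by_contra h3
        push_neg at h3
        exact h1 ((pconj_iff hp i _).2 h3)
      rcases Nat.eq_zero_or_pos i with h0 | h0
      · omega
      · have h4 : ¬ ((p (i - 1) : ℤ) - (i - 1 : ℕ) - 1 < k) := Nat.find_min hex (by omega)
        have h5 := hne' (i - 1)
        have h6 : ((i - 1 : ℕ) : ℤ) = (i : ℤ) - 1 := by omega
        rw [h6] at h4 h5
        have h7 : (k + i).toNat + 1 ≤ p (i - 1) := by omega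
        have h8 : i - 1 < pconj p (k + i).toNat := (pconj_iff hp _ _).1 h7
        omega
    rw [hcj]
    omega

lemma part_ext {p q : ℕ → ℕ} (hp : IsPartition p) (hq : IsPartition q)
    (h : ZS p = ZS q) : p = q := by
  have hb : ∀ x : ℤ, (max (p 0) (q 0) : ℤ) ≤ x → x ∉ ZS p := by
    intro x hx
    refine ZS_hi hp x ?_
    have : ((p 0 : ℕ) : ℤ) ≤ ((max (p 0) (q 0) : ℕ) : ℤ) := by
      exact_mod_cast le_max_left _ _
    omega
  have heq : dP p = dP q :=
    enum_unique hb (dP_strictAnti hp) (dP_range p) (dP_strictAnti hq)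
      (by rw [dP_range, h])
  funext m
  have := congrFun heq m
  unfold dP at this
  omega


/-! ### cells and hooks -/

lemma mem_cells {p : ℕ → ℕ} (hp : IsPartition p) {s : ℕ × ℕ} :
    s ∈ cells p ↔ s.2 < p s.1 := by
  unfold cells
  rw [Finset.mem_filter, Finset.mem_product, Finset.mem_range, Finset.mem_range]
  constructor
  · tauto
  · intro h
    have h1 : p s.1 ≤ p 0 := hp.1 (Nat.zero_le s.1)
    exact ⟨⟨(plen_iff hp s.1).1 (by omega), by omega⟩, h⟩

lemma yd_lt {p : ℕ → ℕ} (hp : IsPartition p) (i j : ℕ) :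
    ((j : ℤ) - (pconj p j : ℤ) < (p i : ℤ) - i - 1) ↔ j < p i := by
  constructor
  · intro h
    by_contra h2
    push_neg at h2
    have h3 : pconj p j ≤ i := by
      by_contra h4
      push_neg at h4
      have := (pconj_iff hp i j).2 h4
      omega
    omega
  · intro h
    have h2 : i < pconj p j := (pconj_iff hp i j).1 (by omega)
    omega

lemma hooks_iff {p : ℕ → ℕ} (hp : IsPartition p) {t : ℕ} (ht : 0 < t) :
    t ∈ hooks p ↔ ∃ x ∈ ZS p, x - (t : ℤ) ∉ ZS p := by
  unfold hooks
  rw [Multiset.mem_map]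
  constructor
  · rintro ⟨s, hs, rfl⟩
    rw [Finset.mem_val] at hs
    have hcell : s.2 < p s.1 := (mem_cells hp).1 hs
    have hG : s.1 < pconj p s.2 := (pconj_iff hp _ _).1 (by omega)
    refine ⟨(p s.1 : ℤ) - s.1 - 1, ⟨s.1, by omega⟩, ?_⟩
    have hlen : (hookLen p s.1 s.2 : ℤ)
        = ((p s.1 : ℤ) - s.2) + ((pconj p s.2 : ℤ) - s.1) - 1 := by
      unfold hookLen
      omega
    intro hmem
    rw [dict hp] at hmem
    exact hmem ⟨s.2, by omega⟩
  · rintro ⟨x, ⟨i, rfl⟩, hx2⟩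
    have hj' : ∃ j : ℕ, (p i : ℤ) - ((i : ℤ) + 1) - t = (j : ℤ) - pconj p j := by
      by_contra h2
      exact hx2 ((dict hp _).2 h2)
    obtain ⟨j, hj⟩ := hj'
    have hji : j < p i := (yd_lt hp i j).1 (by omega)
    have hG : i < pconj p j := (pconj_iff hp i j).1 (by omega)
    refine ⟨(i, j), (by rw [Finset.mem_val]; exact (mem_cells hp).2 hji), ?_⟩
    show hookLen p i j = t
    unfold hookLen
    omega

lemma isCore_iff {p : ℕ → ℕ} (hp : IsPartition p) {g : ℕ} (hg : 0 < g) :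
    IsCore g p ↔ ∀ x ∈ ZS p, x - (g : ℤ) ∈ ZS p := by
  unfold IsCore
  rw [hooks_iff hp hg]
  push_neg
  simp only [not_not]

/-! ### conjugation on words -/

lemma ZS_pconj {p : ℕ → ℕ} (hp : IsPartition p) (k : ℤ) :
    k ∈ ZS (pconj p) ↔ (-1 - k) ∉ ZS p := by
  rw [dict hp]
  simp only [not_not]
  constructor
  · rintro ⟨m, rfl⟩
    exact ⟨m, by omega⟩
  · rintro ⟨m, hm⟩
    exact ⟨m, by omega⟩

lemma selfconj_iff {p : ℕ → ℕ} (hp : IsPartition p) :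
    SelfConj p ↔ ∀ k : ℤ, ((-1 - k) ∈ ZS p ↔ k ∉ ZS p) := by
  constructor
  · intro h k
    have h2 := ZS_pconj hp (-1 - k)
    rw [← h] at h2
    have h3 : (-1 - (-1 - k)) = k := by ring
    rw [h3] at h2
    exact h2
  · intro h
    unfold SelfConj
    apply part_ext hp (pconj_part hp)
    ext k
    rw [ZS_pconj hp k]
    have := h k
    tauto

/-! ### the set of zero positions determined by a charge vector -/

def Zset (g : ℕ) (m : ℕ → ℤ) : Set ℤ := {x | x / (g : ℤ) < m (x % (g : ℤ)).toNat}

lemma Zset_mem {g : ℕ} (hg : 0 < g) (m : ℕ → ℤ) {i : ℕ} (hi : i < g) (k : ℤ) :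
    (k * (g : ℤ) + (i : ℤ)) ∈ Zset g m ↔ k < m i := by
  obtain ⟨hd, hm⟩ := aux_divmod hg k (i : ℤ) (by positivity) (by exact_mod_cast hi)
  unfold Zset
  rw [Set.mem_setOf_eq, hd, hm]
  simp

lemma Zset_decomp {g : ℕ} (hg : 0 < g) (x : ℤ) :
    x = (x / (g : ℤ)) * (g : ℤ) + ((x % (g : ℤ)).toNat : ℤ) ∧ (x % (g : ℤ)).toNat < g := by
  have h0 : (0 : ℤ) < (g : ℤ) := by exact_mod_cast hg
  have h1 : 0 ≤ x % (g : ℤ) := Int.emod_nonneg x h0.ne'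
  have h2 : x % (g : ℤ) < (g : ℤ) := Int.emod_lt_of_pos x h0
  have h3 := Int.mul_ediv_add_emod x (g : ℤ)
  have h4 : ((x % (g:ℤ)).toNat : ℤ) = x % (g:ℤ) := Int.toNat_of_nonneg h1
  have h5 : (x / (g:ℤ)) * (g:ℤ) = (g:ℤ) * (x / (g:ℤ)) := by ring
  constructor
  · omega
  · omega

lemma Zset_congr {g : ℕ} (hg : 0 < g) {m m' : ℕ → ℤ} (h : ∀ i < g, m i = m' i) :
    Zset g m = Zset g m' := by
  ext x
  unfold Zset
  rw [Set.mem_setOf_eq, Set.mem_setOf_eq, h _ (Zset_decomp hg x).2]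

lemma Zset_down {g : ℕ} (hg : 0 < g) (m : ℕ → ℤ) {x : ℤ} (hx : x ∈ Zset g m) :
    x - (g : ℤ) ∈ Zset g m := by
  obtain ⟨hd, hlt⟩ := Zset_decomp hg x
  set k := x / (g : ℤ)
  set i := (x % (g : ℤ)).toNat
  have h1 : x - (g : ℤ) = (k - 1) * (g : ℤ) + (i : ℤ) := by
    rw [sub_one_mul]
    omega
  rw [h1, Zset_mem hg m hlt]
  have h2 : k < m i := by
    rw [hd, Zset_mem hg m hlt] at hx
    exact hx
  omega

lemma Zset_lo {g : ℕ} (hg : 0 < g) {m : ℕ → ℤ} {A : ℤ} (hA : ∀ i < g, A ≤ m i) :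
    ∀ x : ℤ, x < (g : ℤ) * A → x ∈ Zset g m := by
  intro x hx
  obtain ⟨hd, hlt⟩ := Zset_decomp hg x
  have h1 : x / (g : ℤ) < A := by
    by_contra h2
    push_neg at h2
    have h3 : (g : ℤ) * A ≤ (g : ℤ) * (x / (g : ℤ)) :=
      mul_le_mul_of_nonneg_left h2 (by positivity)
    have h4 : 0 ≤ ((x % (g : ℤ)).toNat : ℤ) := by positivity
    have h5 : (x / (g : ℤ)) * (g : ℤ) = (g : ℤ) * (x / (g : ℤ)) := by ring
    omega
  exact lt_of_lt_of_le h1 (hA _ hlt)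

lemma Zset_hi {g : ℕ} (hg : 0 < g) {m : ℕ → ℤ} {B : ℤ} (hB : ∀ i < g, m i ≤ B) :
    ∀ x : ℤ, (g : ℤ) * B ≤ x → x ∉ Zset g m := by
  intro x hx hmem
  obtain ⟨hd, hlt⟩ := Zset_decomp hg x
  have h1 : B ≤ x / (g : ℤ) := by
    rw [Int.le_ediv_iff_mul_le (by exact_mod_cast hg : (0:ℤ) < (g:ℤ))]
    linarith
  unfold Zset at hmem
  rw [Set.mem_setOf_eq] at hmem
  have := hB _ hlt
  omega

lemma Zset_count {g : ℕ} (hg : 0 < g) {m : ℕ → ℤ} {A : ℤ} (hA : ∀ i < g, A ≤ m i) :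
    (Zset g m ∩ Set.Ici ((g : ℤ) * A)).ncard
      = ((∑ i ∈ Finset.range g, m i) - (g : ℤ) * A).toNat := by
  classical
  set B : ℤ := (∑ i ∈ Finset.range g, (m i - A)) + A + 1 with hBdef
  have hsumnn : ∀ j < g, (0:ℤ) ≤ m j - A := fun j hj => by have := hA j hj; omega
  have hB : ∀ i < g, m i ≤ B := by
    intro i hi
    have h1 : m i - A ≤ ∑ j ∈ Finset.range g, (m j - A) := by
      refine Finset.single_le_sum (fun j hj => hsumnn j (Finset.mem_range.1 hj)) ?_
      exact Finset.mem_range.2 hi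
    omega
  have hfin : Zset g m ∩ Set.Ici ((g : ℤ) * A)
      = ↑((Finset.Icc ((g:ℤ) * A) ((g:ℤ) * B - 1)).filter (· ∈ Zset g m)) := by
    ext x
    simp only [Finset.coe_filter, Finset.mem_Icc, Set.mem_setOf_eq, Set.mem_inter_iff,
      Set.mem_Ici]
    constructor
    · rintro ⟨h1, h2⟩
      have h3 : x < (g:ℤ) * B := by
        by_contra h4
        push_neg at h4
        exact Zset_hi hg hB x h4 h1
      exact ⟨⟨h2, by omega⟩, h1⟩
    · rintro ⟨⟨h1, h2⟩, h3⟩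
      exact ⟨h3, h1⟩
  rw [hfin, Set.ncard_coe_finset]
  have hbij : ((Finset.range g).sigma (fun i => Finset.Ico A (m i))).card
      = ((Finset.Icc ((g:ℤ) * A) ((g:ℤ) * B - 1)).filter (· ∈ Zset g m)).card := by
    refine Finset.card_nbij (fun s => s.2 * (g:ℤ) + (s.1 : ℤ)) ?_ ?_ ?_
    · rintro ⟨i, k⟩ hs
      simp only [Finset.mem_coe, Finset.mem_sigma, Finset.mem_range, Finset.mem_Ico] at hs
      obtain ⟨hi, hk1, hk2⟩ := hs
      simp only [Finset.mem_coe, Finset.mem_filter, Finset.mem_Icc]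
      refine ⟨⟨?_, ?_⟩, (Zset_mem hg m hi k).2 hk2⟩
      · have h1 : (g:ℤ) * A ≤ (g:ℤ) * k := mul_le_mul_of_nonneg_left hk1 (by positivity)
        have h2 : (0:ℤ) ≤ (i:ℤ) := by positivity
        have h3 : k * (g:ℤ) = (g:ℤ) * k := by ring
        omega
      · have h1 : k ≤ B - 1 := by
          have := hB i hi
          omega
        have h2 : (g:ℤ) * k ≤ (g:ℤ) * (B - 1) := mul_le_mul_of_nonneg_left h1 (by positivity)
        have h3 : ((i:ℕ):ℤ) < (g:ℤ) := by exact_mod_cast hi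
        have h4 : k * (g:ℤ) = (g:ℤ) * k := by ring
        have h5 : (g:ℤ) * (B - 1) = (g:ℤ) * B - (g:ℤ) := by ring
        omega
    · rintro ⟨i1, k1⟩ hs1 ⟨i2, k2⟩ hs2 heq
      simp only [Finset.coe_sigma, Set.mem_sigma_iff, Finset.mem_coe, Finset.mem_range,
        Finset.mem_Ico] at hs1 hs2
      simp only at heq
      obtain ⟨hd1, hm1⟩ := aux_divmod hg k1 (i1 : ℤ) (by positivity) (by exact_mod_cast hs1.1)
      obtain ⟨hd2, hm2⟩ := aux_divmod hg k2 (i2 : ℤ) (by positivity) (by exact_mod_cast hs2.1)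
      have hk : k1 = k2 := by rw [← hd1, ← hd2, heq]
      have hi : (i1 : ℤ) = (i2 : ℤ) := by rw [← hm1, ← hm2, heq]
      have : i1 = i2 := by exact_mod_cast hi
      subst this
      subst hk
      rfl
    · rintro x hx
      simp only [Finset.coe_filter, Finset.mem_Icc, Set.mem_setOf_eq] at hx
      obtain ⟨⟨h1, h2⟩, h3⟩ := hx
      obtain ⟨hd, hlt⟩ := Zset_decomp hg x
      refine ⟨⟨(x % (g:ℤ)).toNat, x / (g:ℤ)⟩, ?_, by dsimp only; omega⟩
      simp only [Finset.coe_sigma, Set.mem_sigma_iff, Finset.mem_coe, Finset.mem_range,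
        Finset.mem_Ico]
      refine ⟨hlt, ?_, ?_⟩
      · by_contra h4
        push_neg at h4
        have h5 : x / (g:ℤ) ≤ A - 1 := by omega
        have h6 : (g:ℤ) * (x / (g:ℤ)) ≤ (g:ℤ) * (A - 1) :=
          mul_le_mul_of_nonneg_left h5 (by positivity)
        have h7 : (x / (g:ℤ)) * (g:ℤ) = (g:ℤ) * (x / (g:ℤ)) := by ring
        have h8 : (g:ℤ) * (A - 1) = (g:ℤ) * A - (g:ℤ) := by ring
        have h9 : ((x % (g:ℤ)).toNat : ℤ) < (g:ℤ) := by exact_mod_cast hlt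
        omega
      · unfold Zset at h3
        rw [Set.mem_setOf_eq] at h3
        exact h3
  rw [← hbij, Finset.card_sigma]
  have hcast : ((∑ i ∈ Finset.range g, (Finset.Ico A (m i)).card : ℕ) : ℤ)
      = (∑ i ∈ Finset.range g, m i) - (g:ℤ) * A := by
    have h1 : ((∑ i ∈ Finset.range g, (Finset.Ico A (m i)).card : ℕ) : ℤ)
        = ∑ i ∈ Finset.range g, ((Finset.Ico A (m i)).card : ℤ) := by
      push_cast
      rfl
    have h2 : ∀ i ∈ Finset.range g, ((Finset.Ico A (m i)).card : ℤ) = m i - A := by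
      intro i hi
      rw [Int.card_Ico, Int.toNat_of_nonneg (hsumnn i (Finset.mem_range.1 hi))]
    rw [h1, Finset.sum_congr rfl h2, Finset.sum_sub_distrib, Finset.sum_const,
      Finset.card_range]
    push_cast
    ring
  omega

/-! ### charges of cores -/

lemma core_class_iff {p : ℕ → ℕ} (hp : IsPartition p) {g : ℕ} (hg : 0 < g)
    (hc : IsCore g p) {i : ℕ} (hi : i < g) :
    ∃ M : ℤ, ∀ k : ℤ, (k * (g:ℤ) + (i:ℤ)) ∈ ZS p ↔ k < M := by
  have hdown : ∀ x ∈ ZS p, x - (g:ℤ) ∈ ZS p := (isCore_iff hp hg).1 hc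
  have key : ∀ t : ℕ, ∀ x ∈ ZS p, x - (t:ℤ) * (g:ℤ) ∈ ZS p := by
    intro t
    induction t with
    | zero => intro x hx; simpa using hx
    | succ t ih =>
      intro x hx
      have h1 := hdown x hx
      have h2 := ih _ h1
      have h3 : x - ((t:ℕ)+1 : ℤ) * (g:ℤ) = x - (g:ℤ) - (t:ℤ) * (g:ℤ) := by ring
      have h4 : ((t + 1 : ℕ) : ℤ) = (t:ℤ) + 1 := by push_cast; ring
      rw [h4, h3]
      exact h2
  have hup : ∀ k k' : ℤ, k ≤ k' → (k * (g:ℤ) + (i:ℤ)) ∉ ZS p →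
      (k' * (g:ℤ) + (i:ℤ)) ∉ ZS p := by
    intro k k' hkk hk hmem
    have h3 := key (k' - k).toNat _ hmem
    have h4 : (k' * (g:ℤ) + (i:ℤ)) - ((k' - k).toNat : ℤ) * (g:ℤ) = k * (g:ℤ) + (i:ℤ) := by
      rw [Int.toNat_of_nonneg (by omega)]
      ring
    rw [h4] at h3
    exact hk h3
  have hne : ∃ k : ℤ, (k * (g:ℤ) + (i:ℤ)) ∉ ZS p := by
    refine ⟨(p 0 : ℤ), ZS_hi hp _ ?_⟩
    have h1 : (p 0 : ℤ) * 1 ≤ (p 0 : ℤ) * (g:ℤ) :=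
      mul_le_mul_of_nonneg_left (by exact_mod_cast hg) (by positivity)
    have h2 : (0:ℤ) ≤ (i:ℤ) := by positivity
    omega
  have hbdd : ∀ k : ℤ, (k * (g:ℤ) + (i:ℤ)) ∉ ZS p → -(plen p : ℤ) ≤ k := by
    intro k hk
    by_contra h2
    push_neg at h2
    apply hk
    apply ZS_lo hp
    have h3 : k * (g:ℤ) ≤ (-(plen p:ℤ) - 1) * (g:ℤ) :=
      mul_le_mul_of_nonneg_right (by omega) (by positivity)
    have h4 : (-(plen p:ℤ) - 1) * (g:ℤ) = -((plen p:ℤ) * (g:ℤ)) - (g:ℤ) := by ring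
    have h5 : (plen p : ℤ) * 1 ≤ (plen p:ℤ) * (g:ℤ) :=
      mul_le_mul_of_nonneg_left (by exact_mod_cast hg) (by positivity)
    have h6 : (i:ℤ) < (g:ℤ) := by exact_mod_cast hi
    have h7 : (0:ℤ) ≤ (i:ℤ) := by positivity
    omega
  obtain ⟨M, hM1, hM2⟩ := Int.exists_least_of_bdd ⟨-(plen p:ℤ), hbdd⟩ hne
  refine ⟨M, fun k => ?_⟩
  constructor
  · intro hk
    by_contra h2
    push_neg at h2
    exact hup M k h2 hM1 hk
  · intro hk
    by_contra h2
    exact absurd (hM2 k h2) (by omega)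

lemma ncharge_eq_of_cut {p : ℕ → ℕ} {g : ℕ} {i : ℕ} {M : ℤ}
    (h : ∀ k : ℤ, (k * (g:ℤ) + (i:ℤ)) ∈ ZS p ↔ k < M) :
    ncharge g p i = M := by
  unfold ncharge
  have hset : {k : ℤ | word p (k * (g:ℤ) + (i:ℤ)) = 1} = Set.Ici M := by
    ext k
    rw [Set.mem_setOf_eq, word_one_iff, Set.mem_Ici, h k]
    omega
  rw [hset, csInf_Ici]

lemma ZS_eq_Zset {p : ℕ → ℕ} (hp : IsPartition p) {g : ℕ} (hg : 0 < g)
    (hc : IsCore g p) : ZS p = Zset g (ncharge g p) := by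
  ext x
  obtain ⟨hd, hlt⟩ := Zset_decomp hg x
  obtain ⟨M, hM⟩ := core_class_iff hp hg hc hlt
  have hch : ncharge g p (x % (g:ℤ)).toNat = M := ncharge_eq_of_cut hM
  constructor
  · intro hx
    rw [hd] at hx
    rw [hM] at hx
    unfold Zset
    rw [Set.mem_setOf_eq, hch]
    exact hx
  · intro hx
    unfold Zset at hx
    rw [Set.mem_setOf_eq, hch] at hx
    have := (hM (x / (g:ℤ))).2 hx
    rw [← hd] at this
    exact this

lemma ncharge_of_Zset {p : ℕ → ℕ} {g : ℕ} (hg : 0 < g) {m : ℕ → ℤ}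
    (hZ : ZS p = Zset g m) {i : ℕ} (hi : i < g) : ncharge g p i = m i := by
  refine ncharge_eq_of_cut (fun k => ?_)
  rw [hZ, Zset_mem hg m hi]

lemma sum_charges_zero {p : ℕ → ℕ} (hp : IsPartition p) {g : ℕ} (hg : 0 < g) {m : ℕ → ℤ}
    (hZ : ZS p = Zset g m) : ∑ i ∈ Finset.range g, m i = 0 := by
  set A : ℤ := -(∑ i ∈ Finset.range g, |m i|) - (plen p : ℤ) - 1 with hA
  have hsumabs : 0 ≤ ∑ j ∈ Finset.range g, |m j| :=
    Finset.sum_nonneg fun j _ => abs_nonneg _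
  have hAm : ∀ i < g, A ≤ m i := by
    intro i hi
    have h1 : |m i| ≤ ∑ j ∈ Finset.range g, |m j| :=
      Finset.single_le_sum (fun j _ => abs_nonneg (m j)) (Finset.mem_range.2 hi)
    have h2 : -|m i| ≤ m i := neg_abs_le (m i)
    have h3 : (0:ℤ) ≤ (plen p : ℤ) := by positivity
    omega
  have hA0 : (g:ℤ) * A ≤ -(plen p : ℤ) := by
    have h1 : ((g:ℤ) - 1) * A ≤ 0 :=
      mul_nonpos_of_nonneg_of_nonpos (by omega) (by omega)
    have h2 : (g:ℤ) * A = ((g:ℤ) - 1) * A + A := by ring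
    omega
  have h1 := ZS_balance hp hA0
  rw [hZ] at h1
  have h2 := Zset_count hg hAm
  have h3 : (0:ℤ) ≤ (plen p : ℤ) := by positivity
  have hAneg : A ≤ -1 := by omega
  have h4 : (g:ℤ) * A ≤ (g:ℤ) * (-1) := mul_le_mul_of_nonneg_left hAneg (by positivity)
  have h5 : (g:ℤ) * (-1) = -(g:ℤ) := by ring
  have h6 : (1:ℤ) ≤ (g:ℤ) := by exact_mod_cast hg
  omega

lemma Zset_antisym {g : ℕ} (hg : 0 < g) {m : ℕ → ℤ}
    (hm : ∀ i < g, m (g - 1 - i) = - m i) (k : ℤ) :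
    (-1 - k) ∈ Zset g m ↔ k ∉ Zset g m := by
  obtain ⟨hd, hlt⟩ := Zset_decomp hg k
  set q := k / (g:ℤ) with hq
  set i := (k % (g:ℤ)).toNat with hi
  have h1 : ((g - 1 - i : ℕ) : ℤ) = (g:ℤ) - 1 - (i:ℤ) := by omega
  have hneg : -1 - k = (-1 - q) * (g:ℤ) + ((g - 1 - i : ℕ) : ℤ) := by
    rw [h1]
    conv_lhs => rw [hd]
    ring
  rw [hneg, Zset_mem hg m (by omega), hm i hlt]
  conv_rhs => rw [hd, Zset_mem hg m hlt]
  omega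

lemma charge_antisym {p : ℕ → ℕ} (hp : IsPartition p) {g : ℕ} (hg : 0 < g) {m : ℕ → ℤ}
    (hZ : ZS p = Zset g m) (hsc : SelfConj p) : ∀ i < g, m (g - 1 - i) = - m i := by
  intro i hi
  have hanti := (selfconj_iff hp).1 hsc
  have hcut : ∀ k : ℤ, k < m (g - 1 - i) ↔ k < - m i := by
    intro k
    have h1 : (k * (g:ℤ) + ((g - 1 - i : ℕ):ℤ)) ∈ Zset g m ↔ k < m (g-1-i) :=
      Zset_mem hg m (by omega) k
    have h2 : ((-1 - k) * (g:ℤ) + (i:ℤ)) ∈ Zset g m ↔ (-1 - k) < m i :=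
      Zset_mem hg m hi _
    have h3 : (-1 - ((-1 - k) * (g:ℤ) + (i:ℤ))) = k * (g:ℤ) + ((g - 1 - i : ℕ):ℤ) := by
      have h4 : ((g - 1 - i : ℕ):ℤ) = (g:ℤ) - 1 - (i:ℤ) := by omega
      rw [h4]
      ring
    have h4 := hanti ((-1 - k) * (g:ℤ) + (i:ℤ))
    rw [h3, hZ] at h4
    rw [h1, h2] at h4
    omega
  have h5 := hcut (m (g - 1 - i))
  have h6 := hcut (- m i)
  omega

lemma selfconj_of_antisym {p : ℕ → ℕ} (hp : IsPartition p) {g : ℕ} (hg : 0 < g)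
    {m : ℕ → ℤ} (hZ : ZS p = Zset g m) (hm : ∀ i < g, m (g - 1 - i) = - m i) :
    SelfConj p := by
  refine (selfconj_iff hp).2 fun k => ?_
  rw [hZ]
  exact Zset_antisym hg hm k

/-! ### interval counting helpers -/

lemma aux_Ici_Ioi (a : ℤ) : Set.Ici a = Set.Ioi (a - 1) := by
  ext x
  simp only [Set.mem_Ici, Set.mem_Ioi]
  omega

lemma ncard_cntA_split {Z : Set ℤ} {b : ℤ} (hb : ∀ x, b ≤ x → x ∉ Z)
    (u v : ℤ) (huv : u ≤ v + 1) :
    cntA Z (u - 1) = (Z ∩ Set.Icc u v).ncard + cntA Z v := by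
  have hun : Z ∩ Set.Ioi (u - 1) = (Z ∩ Set.Icc u v) ∪ (Z ∩ Set.Ioi v) := by
    ext x
    simp only [Set.mem_inter_iff, Set.mem_Ioi, Set.mem_Icc, Set.mem_union]
    constructor
    · rintro ⟨h1, h2⟩
      rcases le_or_gt x v with h3 | h3
      · exact Or.inl ⟨h1, by omega, h3⟩
      · exact Or.inr ⟨h1, h3⟩
    · rintro (⟨h1, h2, h3⟩ | ⟨h1, h2⟩)
      · exact ⟨h1, by omega⟩
      · exact ⟨h1, by omega⟩
  have hdisj : Disjoint (Z ∩ Set.Icc u v) (Z ∩ Set.Ioi v) := by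
    rw [Set.disjoint_left]
    rintro x ⟨h1, h2, h3⟩ ⟨h4, h5⟩
    simp only [Set.mem_Ioi] at h5
    omega
  have hf1 : (Z ∩ Set.Icc u v).Finite := (Set.finite_Icc u v).subset Set.inter_subset_right
  have hf2 : (Z ∩ Set.Ioi v).Finite := cntA_finite hb v
  rw [cntA, hun, Set.ncard_union_eq hdisj hf1 hf2]
  rfl

lemma ncard_compl_split (S : Set ℤ) (u v : ℤ) :
    (S ∩ Set.Icc u v).ncard + (Sᶜ ∩ Set.Icc u v).ncard = (v + 1 - u).toNat := by
  have hun : (S ∩ Set.Icc u v) ∪ (Sᶜ ∩ Set.Icc u v) = Set.Icc u v := by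
    ext x
    simp only [Set.mem_union, Set.mem_inter_iff, Set.mem_compl_iff]
    tauto
  have hdisj : Disjoint (S ∩ Set.Icc u v) (Sᶜ ∩ Set.Icc u v) := by
    rw [Set.disjoint_left]
    rintro x ⟨h1, _⟩ ⟨h2, _⟩
    exact h2 h1
  have hf1 : (S ∩ Set.Icc u v).Finite := (Set.finite_Icc u v).subset Set.inter_subset_right
  have hf2 : (Sᶜ ∩ Set.Icc u v).Finite := (Set.finite_Icc u v).subset Set.inter_subset_right
  have h1 := Set.ncard_union_eq hdisj hf1 hf2
  rw [hun] at h1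
  rw [← h1]
  rw [← Finset.coe_Icc, Set.ncard_coe_finset, Int.card_Icc]

/-! ### the decreasing enumeration of a set -/

noncomputable def eZ (Z : Set ℤ) (j : ℕ) : ℤ :=
  if h : (∃ c : ℤ, ∀ z : ℤ, (j + 1 ≤ cntA Z (z - 1)) → z ≤ c) ∧
      (∃ z : ℤ, j + 1 ≤ cntA Z (z - 1))
  then Classical.choose (Int.exists_greatest_of_bdd h.1 h.2) else 0

section EnumZ

variable {Z : Set ℤ} {a b : ℤ}

lemma eZ_spec (hlo : ∀ x, x < a → x ∈ Z) (hhi : ∀ x, b ≤ x → x ∉ Z) (j : ℕ) :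
    (j + 1 ≤ cntA Z (eZ Z j - 1)) ∧ ∀ z : ℤ, (j + 1 ≤ cntA Z (z - 1)) → z ≤ eZ Z j := by
  have hcond : (∃ c : ℤ, ∀ z : ℤ, (j + 1 ≤ cntA Z (z - 1)) → z ≤ c) ∧
      (∃ z : ℤ, j + 1 ≤ cntA Z (z - 1)) := by
    constructor
    · refine ⟨b, fun z hz => ?_⟩
      by_contra h2
      push_neg at h2
      have hempty : Z ∩ Set.Ioi (z - 1) = ∅ := by
        ext x
        simp only [Set.mem_inter_iff, Set.mem_Ioi, Set.mem_empty_iff_false, iff_false]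
        rintro ⟨h3, h4⟩
        exact hhi x (by omega) h3
      rw [cntA, hempty, Set.ncard_empty] at hz
      omega
    · refine ⟨a - (j + 1), ?_⟩
      have hsub : Set.Icc (a - (j+1)) (a - 1) ⊆ Z ∩ Set.Ioi (a - (j+1) - 1) := by
        intro x hx
        simp only [Set.mem_Icc] at hx
        exact ⟨hlo x (by omega), by simp only [Set.mem_Ioi]; omega⟩
      have h1 : (Set.Icc (a - (j+1)) (a - 1)).ncard ≤ cntA Z (a - (j+1) - 1) :=
        Set.ncard_le_ncard hsub (cntA_finite hhi _)
      have h2 : (Set.Icc (a - (j+1)) (a - 1)).ncard = j + 1 := by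
        rw [← Finset.coe_Icc, Set.ncard_coe_finset, Int.card_Icc]
        omega
      omega
  have := Classical.choose_spec (Int.exists_greatest_of_bdd hcond.1 hcond.2)
  rw [eZ, dif_pos hcond]
  exact this

lemma eZ_lt_iff (hlo : ∀ x, x < a → x ∈ Z) (hhi : ∀ x, b ≤ x → x ∉ Z) (j : ℕ) (y : ℤ) :
    y < eZ Z j ↔ j + 1 ≤ cntA Z y := by
  obtain ⟨h1, h2⟩ := eZ_spec hlo hhi j
  constructor
  · intro h
    have h3 : cntA Z (eZ Z j - 1) ≤ cntA Z y := cntA_anti hhi (by omega)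
    omega
  · intro h
    have h4 : y + 1 - 1 = y := by ring
    have := h2 (y + 1) (by rw [h4]; exact h)
    omega

lemma eZ_cntA (hlo : ∀ x, x < a → x ∈ Z) (hhi : ∀ x, b ≤ x → x ∉ Z) (j : ℕ) :
    cntA Z (eZ Z j) = j ∧ eZ Z j ∈ Z := by
  obtain ⟨h1, _⟩ := eZ_spec hlo hhi j
  have hle : cntA Z (eZ Z j) ≤ j := by
    by_contra h2
    push_neg at h2
    have := (eZ_lt_iff hlo hhi j (eZ Z j)).2 (by omega)
    omega
  have hins : Z ∩ Set.Ioi (eZ Z j - 1) ⊆ insert (eZ Z j) (Z ∩ Set.Ioi (eZ Z j)) := by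
    rintro x ⟨hx1, hx2⟩
    simp only [Set.mem_Ioi] at hx2
    rcases eq_or_lt_of_le (show eZ Z j ≤ x by omega) with h3 | h3
    · exact Set.mem_insert_iff.2 (Or.inl h3.symm)
    · exact Set.mem_insert_iff.2 (Or.inr ⟨hx1, h3⟩)
  have hcard : cntA Z (eZ Z j - 1) ≤ (insert (eZ Z j) (Z ∩ Set.Ioi (eZ Z j))).ncard :=
    Set.ncard_le_ncard hins ((cntA_finite hhi (eZ Z j)).insert (eZ Z j))
  have hcard2 : (insert (eZ Z j) (Z ∩ Set.Ioi (eZ Z j))).ncard ≤ cntA Z (eZ Z j) + 1 :=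
    Set.ncard_insert_le _ _
  have hj : cntA Z (eZ Z j) = j := by omega
  refine ⟨hj, ?_⟩
  by_contra hmem
  have heq : Z ∩ Set.Ioi (eZ Z j - 1) = Z ∩ Set.Ioi (eZ Z j) := by
    ext x
    simp only [Set.mem_inter_iff, Set.mem_Ioi]
    constructor
    · rintro ⟨hx1, hx2⟩
      refine ⟨hx1, ?_⟩
      rcases eq_or_lt_of_le (show eZ Z j ≤ x by omega) with h3 | h3
      · exact absurd (h3 ▸ hx1) hmem
      · exact h3
    · rintro ⟨hx1, hx2⟩
      exact ⟨hx1, by omega⟩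
  rw [cntA, heq] at h1
  have h5 : cntA Z (eZ Z j) = (Z ∩ Set.Ioi (eZ Z j)).ncard := rfl
  omega

lemma eZ_strictAnti (hlo : ∀ x, x < a → x ∈ Z) (hhi : ∀ x, b ≤ x → x ∉ Z) :
    StrictAnti (eZ Z) := by
  refine strictAnti_nat_of_succ_lt fun j => ?_
  rw [eZ_lt_iff hlo hhi j (eZ Z (j + 1)), (eZ_cntA hlo hhi (j + 1)).1]

lemma eZ_range (hlo : ∀ x, x < a → x ∈ Z) (hhi : ∀ x, b ≤ x → x ∉ Z) :
    Set.range (eZ Z) = Z := by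
  ext z
  constructor
  · rintro ⟨j, rfl⟩
    exact (eZ_cntA hlo hhi j).2
  · intro hz
    refine ⟨cntA Z z, ?_⟩
    rcases lt_trichotomy z (eZ Z (cntA Z z)) with h | h | h
    · have := (eZ_lt_iff hlo hhi _ z).1 h
      omega
    · exact h.symm
    · exfalso
      have h1 : cntA Z (eZ Z (cntA Z z)) = cntA Z z := (eZ_cntA hlo hhi _).1
      have h2 : z ∉ Z ∩ Set.Ioi z := fun hx => by
        have := hx.2
        simp only [Set.mem_Ioi] at this
        omega
      have h3 : insert z (Z ∩ Set.Ioi z) ⊆ Z ∩ Set.Ioi (eZ Z (cntA Z z)) := by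
        rintro x hx
        rcases Set.mem_insert_iff.1 hx with rfl | ⟨hx1, hx2⟩
        · exact ⟨hz, by simp only [Set.mem_Ioi]; omega⟩
        · simp only [Set.mem_Ioi] at hx2
          exact ⟨hx1, Set.mem_Ioi.2 (by omega)⟩
      have h4 : (insert z (Z ∩ Set.Ioi z)).ncard = cntA Z z + 1 :=
        Set.ncard_insert_of_notMem h2 (cntA_finite hhi z)
      have h5 := Set.ncard_le_ncard h3 (cntA_finite hhi _)
      rw [h4] at h5
      have h6 : cntA Z (eZ Z (cntA Z z)) = (Z ∩ Set.Ioi (eZ Z (cntA Z z))).ncard := rfl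
      omega

lemma cntA_pred (hhi : ∀ x, b ≤ x → x ∉ Z) {z : ℤ} (hz : z ∈ Z) :
    cntA Z (z - 1) = cntA Z z + 1 := by
  have heq : Z ∩ Set.Ioi (z - 1) = insert z (Z ∩ Set.Ioi z) := by
    ext x
    simp only [Set.mem_inter_iff, Set.mem_Ioi, Set.mem_insert_iff]
    constructor
    · rintro ⟨hx1, hx2⟩
      rcases eq_or_lt_of_le (show z ≤ x by omega) with h3 | h3
      · exact Or.inl h3.symm
      · exact Or.inr ⟨hx1, h3⟩
    · rintro (rfl | ⟨hx1, hx2⟩)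
      · exact ⟨hz, by omega⟩
      · exact ⟨hx1, by omega⟩
  have h2 : z ∉ Z ∩ Set.Ioi z := fun hx => by
    have := hx.2
    simp only [Set.mem_Ioi] at this
    omega
  rw [cntA, heq, Set.ncard_insert_of_notMem h2 (cntA_finite hhi z)]
  rfl

lemma balance_below (hlo : ∀ x, x < a → x ∈ Z) (hhi : ∀ x, b ≤ x → x ∉ Z)
    (hbal : cntA Z (a - 1) = (-a).toNat) (ha : a ≤ 0) :
    ∀ t : ℤ, t ≤ a → cntA Z (t - 1) = (-t).toNat := by
  intro t ht
  have h1 := ncard_cntA_split hhi t (a - 1) (by omega)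
  have h2 : Z ∩ Set.Icc t (a - 1) = Set.Icc t (a - 1) := by
    ext x
    simp only [Set.mem_inter_iff, Set.mem_Icc]
    constructor
    · tauto
    · intro hx
      exact ⟨hlo x (by omega), hx⟩
  rw [h2] at h1
  have h3 : (Set.Icc t (a - 1)).ncard = (a - t).toNat := by
    rw [← Finset.coe_Icc, Set.ncard_coe_finset, Int.card_Icc]
    congr 1
    ring
  omega

lemma compl_count (hlo : ∀ x, x < a → x ∈ Z) (hhi : ∀ x, b ≤ x → x ∉ Z)
    (hbal : cntA Z (a - 1) = (-a).toNat) (ha : a ≤ 0) :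
    ∀ t : ℤ, ((Zᶜ ∩ Set.Iio t).ncard : ℤ) = (cntA Z (t - 1) : ℤ) + t := by
  intro t
  have hu1 : min a t ≤ a := min_le_left a t
  have hu2 : min a t ≤ t := min_le_right a t
  have h1 : cntA Z (min a t - 1) = (-(min a t)).toNat := balance_below hlo hhi hbal ha _ hu1
  have h2 := ncard_cntA_split hhi (min a t) (t - 1) (by omega)
  have h3 := ncard_compl_split Z (min a t) (t - 1)
  have h4 : Zᶜ ∩ Set.Iio t = Zᶜ ∩ Set.Icc (min a t) (t - 1) := by
    ext x
    simp only [Set.mem_inter_iff, Set.mem_compl_iff, Set.mem_Iio, Set.mem_Icc]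
    constructor
    · rintro ⟨hx1, hx2⟩
      refine ⟨hx1, ?_, by omega⟩
      by_contra h5
      exact hx1 (hlo x (by omega))
    · rintro ⟨hx1, hx2, hx3⟩
      exact ⟨hx1, by omega⟩
  rw [h4]
  omega

end EnumZ

/-! ### construction of the core with given charges -/

noncomputable def coreOf (g : ℕ) (m : ℕ → ℤ) : ℕ → ℕ := fun j =>
  ((Zset g m)ᶜ ∩ Set.Iio (eZ (Zset g m) j)).ncard

lemma strictAnti_le (d : ℕ → ℤ) (hd : StrictAnti d) (j : ℕ) : d j ≤ d 0 - j := by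
  induction j with
  | zero => simp
  | succ j ih =>
    have h1 : d (j + 1) < d j := hd (by omega : j < j + 1)
    push_cast
    omega

lemma Zset_pkg {g : ℕ} (hg : 0 < g) (m : ℕ → ℤ) (hsum : ∑ i ∈ Finset.range g, m i = 0) :
    ∃ a b : ℤ, a ≤ -1 ∧ 1 ≤ b ∧ (∀ x, x < a → x ∈ Zset g m) ∧
      (∀ x, b ≤ x → x ∉ Zset g m) ∧ cntA (Zset g m) (a - 1) = (-a).toNat := by
  set S : ℤ := ∑ i ∈ Finset.range g, |m i| with hS
  have hS0 : 0 ≤ S := Finset.sum_nonneg fun j _ => abs_nonneg _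
  have habs : ∀ i < g, |m i| ≤ S := fun i hi =>
    Finset.single_le_sum (fun j _ => abs_nonneg (m j)) (Finset.mem_range.2 hi)
  have hA : ∀ i < g, -S - 1 ≤ m i := by
    intro i hi
    have h1 := habs i hi
    have h2 : -|m i| ≤ m i := neg_abs_le (m i)
    omega
  have hB : ∀ i < g, m i ≤ S + 1 := by
    intro i hi
    have h1 := habs i hi
    have h2 : m i ≤ |m i| := le_abs_self (m i)
    omega
  have hg1 : (1:ℤ) ≤ (g:ℤ) := by exact_mod_cast hg
  refine ⟨(g:ℤ) * (-S - 1), (g:ℤ) * (S + 1), ?_, ?_, Zset_lo hg hA, Zset_hi hg hB, ?_⟩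
  · have h1 : (g:ℤ) * (-S - 1) ≤ 1 * (-S - 1) :=
      mul_le_mul_of_nonpos_right hg1 (by omega)
    omega
  · have h1 : 1 * (S + 1) ≤ (g:ℤ) * (S + 1) :=
      mul_le_mul_of_nonneg_right hg1 (by omega)
    omega
  · have h1 : Set.Ioi ((g:ℤ) * (-S - 1) - 1) = Set.Ici ((g:ℤ) * (-S - 1)) :=
      (aux_Ici_Ioi _).symm
    rw [cntA, h1, Zset_count hg hA, hsum]
    congr 1
    ring

lemma coreOf_spec {g : ℕ} (hg : 0 < g) {m : ℕ → ℤ}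
    (hsum : ∑ i ∈ Finset.range g, m i = 0) :
    IsPartition (coreOf g m) ∧ ZS (coreOf g m) = Zset g m := by
  obtain ⟨a, b, ha, hb, hlo, hhi, hbal⟩ := Zset_pkg hg m hsum
  have hcompl := compl_count hlo hhi hbal (by omega)
  have hq : ∀ j : ℕ, (coreOf g m j : ℤ) = eZ (Zset g m) j + j + 1 := by
    intro j
    have h1 : eZ (Zset g m) j ∈ Zset g m := (eZ_cntA hlo hhi j).2
    have h2 : cntA (Zset g m) (eZ (Zset g m) j) = j := (eZ_cntA hlo hhi j).1
    have h3 := cntA_pred hhi h1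
    have h4 := hcompl (eZ (Zset g m) j)
    unfold coreOf
    omega
  constructor
  · constructor
    · refine antitone_nat_of_succ_le fun j => ?_
      have h1 := hq j
      have h2 := hq (j + 1)
      have h3 : eZ (Zset g m) (j + 1) < eZ (Zset g m) j :=
        eZ_strictAnti hlo hhi (Nat.lt_succ_self j)
      push_cast at h2
      omega
    · refine ⟨(eZ (Zset g m) 0 - a).toNat + 1, fun j hj => ?_⟩
      have h2 : eZ (Zset g m) j ≤ eZ (Zset g m) 0 - j :=
        strictAnti_le _ (eZ_strictAnti hlo hhi) j
      have hj' : ((eZ (Zset g m) 0 - a).toNat + 1 : ℕ) ≤ j := hj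
      have hempty : ((Zset g m)ᶜ ∩ Set.Iio (eZ (Zset g m) j)) = ∅ := by
        ext x
        simp only [Set.mem_inter_iff, Set.mem_compl_iff, Set.mem_Iio,
          Set.mem_empty_iff_false, iff_false, not_and]
        intro hx1 hx2
        exact hx1 (hlo x (by omega))
      unfold coreOf
      rw [hempty]
      exact Set.ncard_empty _
  · rw [← dP_range]
    have hfun : dP (coreOf g m) = eZ (Zset g m) := by
      funext j
      unfold dP
      have := hq j
      omega
    rw [hfun, eZ_range hlo hhi]

/-! ### size and cells -/

lemma psize_eq_card_cells {p : ℕ → ℕ} (hp : IsPartition p) : psize p = (cells p).card := by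
  unfold psize
  have h1 : (cells p).card
      = ∑ i ∈ Finset.range (plen p), ((cells p).filter (fun s => s.1 = i)).card :=
    Finset.card_eq_sum_card_fiberwise (fun s hs => by
      have h2 := (mem_cells hp).1 hs
      rw [Finset.mem_coe, Finset.mem_range]
      exact (plen_iff hp s.1).1 (by omega))
  rw [h1]
  refine Finset.sum_congr rfl fun i hi => ?_
  have h2 : (cells p).filter (fun s => s.1 = i)
      = (Finset.range (p i)).map ⟨fun j => (i, j), fun x y h => by simpa using h⟩ := by
    ext s
    obtain ⟨s1, s2⟩ := s
    simp only [Finset.mem_filter, Finset.mem_map, Finset.mem_range,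
      Function.Embedding.coeFn_mk, Prod.mk.injEq]
    constructor
    · rintro ⟨hs, hfst⟩
      have hcell := (mem_cells hp).1 hs
      subst hfst
      exact ⟨s2, hcell, rfl⟩
    · rintro ⟨j, hj, rfl, rfl⟩
      exact ⟨(mem_cells hp).2 hj, rfl⟩
  rw [h2, Finset.card_map, Finset.card_range]

noncomputable def pairsF (Zs : Set ℤ) (a b : ℤ) : Finset (ℤ × ℤ) :=
  ((Finset.Icc a b) ×ˢ (Finset.Icc a b)).filter fun s => s.1 ∈ Zs ∧ s.2 ∉ Zs ∧ s.2 < s.1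

lemma mem_pairsF {Zs : Set ℤ} {a b : ℤ} (hlo : ∀ x, x < a → x ∈ Zs)
    (hhi : ∀ x, b ≤ x → x ∉ Zs) {s : ℤ × ℤ} :
    s ∈ pairsF Zs a b ↔ s.1 ∈ Zs ∧ s.2 ∉ Zs ∧ s.2 < s.1 := by
  unfold pairsF
  rw [Finset.mem_filter, Finset.mem_product, Finset.mem_Icc, Finset.mem_Icc]
  constructor
  · tauto
  · rintro ⟨h1, h2, h3⟩
    have ha2 : a ≤ s.2 := by
      by_contra h4
      push_neg at h4
      exact h2 (hlo s.2 h4)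
    have hb1 : s.1 < b := by
      by_contra h4
      push_neg at h4
      exact (hhi s.1 h4) h1
    exact ⟨⟨⟨by omega, by omega⟩, ⟨by omega, by omega⟩⟩, h1, h2, h3⟩

lemma psize_eq_pairs {p : ℕ → ℕ} (hp : IsPartition p) {Zs : Set ℤ} (hZ : ZS p = Zs)
    {a b : ℤ} (hlo : ∀ x, x < a → x ∈ Zs) (hhi : ∀ x, b ≤ x → x ∉ Zs) :
    psize p = (pairsF Zs a b).card := by
  rw [psize_eq_card_cells hp]
  refine Finset.card_nbij
    (fun s => ((p s.1 : ℤ) - s.1 - 1, (s.2 : ℤ) - (pconj p s.2 : ℤ))) ?_ ?_ ?_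
  · intro s hs
    have hcell := (mem_cells hp).1 hs
    simp only [Finset.mem_coe]
    rw [mem_pairsF hlo hhi]
    refine ⟨?_, ?_, ?_⟩
    · rw [← hZ]
      exact ⟨s.1, by push_cast; ring⟩
    · rw [← hZ]
      rw [dict hp]
      simp only [not_not]
      exact ⟨s.2, rfl⟩
    · exact (yd_lt hp s.1 s.2).2 hcell
  · rintro ⟨i1, j1⟩ hs1 ⟨i2, j2⟩ hs2 heq
    simp only [Prod.mk.injEq] at heq
    obtain ⟨he1, he2⟩ := heq
    have hi : i1 = i2 := by
      rcases Nat.lt_trichotomy i1 i2 with h | h | h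
      · have := dP_strictAnti hp h
        unfold dP at this
        omega
      · exact h
      · have := dP_strictAnti hp h
        unfold dP at this
        omega
    have hpc := pconj_antitone hp
    have hj : j1 = j2 := by
      rcases Nat.lt_trichotomy j1 j2 with h | h | h
      · have h2 : pconj p j2 ≤ pconj p j1 := hpc (le_of_lt h)
        omega
      · exact h
      · have h2 : pconj p j1 ≤ pconj p j2 := hpc (le_of_lt h)
        omega
    simp [hi, hj]
  · intro t ht
    rw [Finset.mem_coe, mem_pairsF hlo hhi] at ht
    obtain ⟨h1, h2, h3⟩ := ht
    rw [← hZ] at h1 h2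
    obtain ⟨i, hi⟩ := h1
    have hj' : ∃ j : ℕ, t.2 = (j:ℤ) - pconj p j := by
      by_contra h4
      exact h2 ((dict hp t.2).2 h4)
    obtain ⟨j, hj⟩ := hj'
    have hji : j < p i := (yd_lt hp i j).1 (by omega)
    refine ⟨(i, j), Finset.mem_coe.2 ((mem_cells hp).2 hji), ?_⟩
    simp only
    rw [Prod.ext_iff]
    constructor
    · simp only
      omega
    · simp only
      omega

/-! ### residue counts as pairs -/

lemma plen_not_mem {p : ℕ → ℕ} (hp : IsPartition p) : -(plen p : ℤ) ∉ ZS p := by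
  rintro ⟨m, hm⟩
  rcases Nat.lt_or_ge m (plen p) with h | h
  · have h1 := part_pos hp h
    omega
  · have h1 : p m = 0 := part_zero hp h
    rw [h1] at hm
    push_cast at hm
    omega

noncomputable def abF (Zs : Set ℤ) (g r : ℕ) (a b : ℤ) : Finset (ℤ × ℤ) :=
  ((Finset.Icc a b) ×ˢ (Finset.Icc a b)).filter fun s =>
    s.1 % (g:ℤ) = (r:ℤ) ∧
      ((s.1 < 0 ∧ s.2 ∉ Zs ∧ s.2 < s.1) ∨ (0 ≤ s.1 ∧ s.2 ∈ Zs ∧ s.1 ≤ s.2))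

lemma mem_abF {Zs : Set ℤ} {g r : ℕ} {a b : ℤ} (hlo : ∀ x, x < a → x ∈ Zs)
    (hhi : ∀ x, b ≤ x → x ∉ Zs) (ha : a ≤ 0) (hb : 0 ≤ b) {s : ℤ × ℤ} :
    s ∈ abF Zs g r a b ↔ s.1 % (g:ℤ) = (r:ℤ) ∧
      ((s.1 < 0 ∧ s.2 ∉ Zs ∧ s.2 < s.1) ∨ (0 ≤ s.1 ∧ s.2 ∈ Zs ∧ s.1 ≤ s.2)) := by
  unfold abF
  rw [Finset.mem_filter, Finset.mem_product, Finset.mem_Icc, Finset.mem_Icc]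
  constructor
  · tauto
  · rintro ⟨h0, h1 | h1⟩
    · obtain ⟨ht, h2, h3⟩ := h1
      have ha2 : a ≤ s.2 := by
        by_contra h4
        push_neg at h4
        exact h2 (hlo s.2 h4)
      exact ⟨⟨⟨by omega, by omega⟩, by omega, by omega⟩, h0, Or.inl ⟨ht, h2, h3⟩⟩
    · obtain ⟨ht, h2, h3⟩ := h1
      have hb2 : s.2 < b := by
        by_contra h4
        push_neg at h4
        exact (hhi s.2 h4) h2
      exact ⟨⟨⟨by omega, by omega⟩, by omega, by omega⟩, h0, Or.inr ⟨ht, h2, h3⟩⟩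

lemma resCount_eq_ab {p : ℕ → ℕ} (hp : IsPartition p) {Zs : Set ℤ} (hZ : ZS p = Zs)
    {g r : ℕ} (hg : 0 < g) (hr : r < g) {a b : ℤ}
    (hlo : ∀ x, x < a → x ∈ Zs) (hhi : ∀ x, b ≤ x → x ∉ Zs)
    (hbal : cntA Zs (a - 1) = (-a).toNat) (ha : a ≤ 0) (hb : 0 ≤ b) :
    resCount g p r = (abF Zs g r a b).card := by
  have hanot : a ≤ -(plen p : ℤ) := by
    by_contra h4
    push_neg at h4
    exact (hZ ▸ plen_not_mem hp) (hlo _ h4)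
  have hbtop : (p 0 : ℤ) - 1 < b := by
    by_contra h4
    push_neg at h4
    exact hhi _ h4 (hZ ▸ ⟨0, by push_cast; ring⟩)
  set T := (Finset.Icc a b).filter (fun t => t % (g:ℤ) = (r:ℤ)) with hT
  have hL : resCount g p r
      = ∑ t ∈ T, ((cells p).filter (fun s => (s.2:ℤ) - (s.1:ℤ) = t)).card := by
    unfold resCount
    rw [Finset.card_eq_sum_card_fiberwise
      (f := fun s : ℕ × ℕ => (s.2:ℤ) - (s.1:ℤ)) (t := T) ?_]
    · refine Finset.sum_congr rfl fun t htT => ?_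
      rw [Finset.filter_filter]
      congr 1
      refine Finset.filter_congr fun s hs => ?_
      simp only [hT, Finset.mem_filter] at htT
      constructor
      · rintro ⟨h1, h2⟩
        exact h2
      · intro h2
        exact ⟨by rw [h2]; exact htT.2, h2⟩
    · intro s hs
      rw [Finset.mem_coe, Finset.mem_filter] at hs
      have hcell := (mem_cells hp).1 hs.1
      have hi : s.1 < plen p := (plen_iff hp s.1).1 (by omega)
      have hj : (s.2 : ℕ) < p 0 := lt_of_lt_of_le hcell (hp.1 (Nat.zero_le s.1))
      simp only [hT, Finset.mem_coe, Finset.mem_filter, Finset.mem_Icc]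
      exact ⟨⟨by omega, by omega⟩, hs.2⟩
  have hR : (abF Zs g r a b).card
      = ∑ t ∈ T, ((abF Zs g r a b).filter (fun s => s.1 = t)).card := by
    refine Finset.card_eq_sum_card_fiberwise
      (f := fun s : ℤ × ℤ => s.1) (t := T) fun s hs => ?_
    unfold abF at hs
    rw [Finset.mem_coe, Finset.mem_filter, Finset.mem_product] at hs
    simp only [hT, Finset.mem_coe, Finset.mem_filter]
    exact ⟨hs.1.1, hs.2.1⟩
  rw [hL, hR]
  refine Finset.sum_congr rfl fun t htT => ?_
  have htmod : t % (g:ℤ) = (r:ℤ) := by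
    simp only [hT, Finset.mem_filter] at htT
    exact htT.2
  rcases le_or_gt 0 t with htpos | htneg
  · refine Finset.card_nbij (fun s => (t, (p s.1 : ℤ) - s.1 - 1)) ?_ ?_ ?_
    · intro s hs
      rw [Finset.mem_coe] at hs ⊢
      rw [Finset.mem_filter] at hs
      obtain ⟨hcellm, hcont⟩ := hs
      have hcell := (mem_cells hp).1 hcellm
      rw [Finset.mem_filter]
      dsimp only
      refine ⟨?_, rfl⟩
      rw [mem_abF hlo hhi ha hb]
      dsimp only
      refine ⟨htmod, Or.inr ⟨htpos, ?_, ?_⟩⟩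
      · rw [← hZ]
        exact ⟨s.1, by push_cast; ring⟩
      · omega
    · rintro ⟨i1, j1⟩ hs1 ⟨i2, j2⟩ hs2 heq
      rw [Finset.mem_coe, Finset.mem_filter] at hs1 hs2
      simp only [Prod.mk.injEq] at heq
      have he2 := heq.2
      have hc1 := hs1.2
      have hc2 := hs2.2
      simp only at hc1 hc2 he2
      have hi : i1 = i2 := by
        rcases Nat.lt_trichotomy i1 i2 with h | h | h
        · have := dP_strictAnti hp h
          unfold dP at this
          omega
        · exact h
        · have := dP_strictAnti hp h
          unfold dP at this
          omega
      have hj : j1 = j2 := by omega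
      simp [hi, hj]
    · intro w hw
      rw [Finset.mem_coe, Finset.mem_filter] at hw
      obtain ⟨hab, hfst⟩ := hw
      rw [mem_abF hlo hhi ha hb] at hab
      obtain ⟨_, hcase | hcase⟩ := hab
      · omega
      · obtain ⟨_, hx, htx⟩ := hcase
        rw [← hZ] at hx
        obtain ⟨i, hi⟩ := hx
        have hji : ((t + i).toNat : ℤ) = t + (i : ℤ) := by omega
        have hjp : (t + i).toNat < p i := by omega
        refine ⟨(i, (t + (i:ℤ)).toNat), Finset.mem_coe.2 ?_, ?_⟩
        · rw [Finset.mem_filter]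
          refine ⟨(mem_cells hp).2 ?_, ?_⟩
          · show (t + (i:ℤ)).toNat < p i
            omega
          · show (((t + (i:ℤ)).toNat : ℕ) : ℤ) - (i:ℤ) = t
            omega
        · show (t, (p i : ℤ) - i - 1) = w
          rw [Prod.ext_iff]
          exact ⟨by simp only; omega, by simp only; omega⟩
  · have hN : ∀ (i : ℕ) (y : ℤ), y < dP p i ↔ i + 1 ≤ cntA Zs y :=
      lt_enum_iff hhi (dP_strictAnti hp) (by rw [dP_range, hZ])
    have hcard1 : ((cells p).filter (fun s => (s.2:ℤ) - (s.1:ℤ) = t)).card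
        = (Finset.Ico ((-t).toNat) (cntA Zs (t - 1))).card := by
      refine Finset.card_nbij (fun s => s.1) ?_ ?_ ?_
      · intro s hs
        rw [Finset.mem_coe] at hs ⊢
        rw [Finset.mem_filter] at hs
        obtain ⟨hcellm, hcont⟩ := hs
        have hcell := (mem_cells hp).1 hcellm
        dsimp only
        rw [Finset.mem_Ico]
        constructor
        · omega
        · have h5 : t - 1 < dP p s.1 := by
            unfold dP
            omega
          have := (hN s.1 (t - 1)).1 h5
          omega
      · rintro ⟨i1, j1⟩ hs1 ⟨i2, j2⟩ hs2 heq
        rw [Finset.mem_coe, Finset.mem_filter] at hs1 hs2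
        have hc1 := hs1.2
        have hc2 := hs2.2
        simp only at hc1 hc2 heq
        have hj : j1 = j2 := by omega
        simp [heq, hj]
      · intro i hi
        rw [Finset.mem_coe, Finset.mem_Ico] at hi
        obtain ⟨hi1, hi2⟩ := hi
        have h5 : t - 1 < dP p i := (hN i (t - 1)).2 (by omega)
        unfold dP at h5
        have hji : (((i:ℤ) + t).toNat : ℤ) = (i:ℤ) + t := by omega
        refine ⟨(i, ((i:ℤ) + t).toNat), Finset.mem_coe.2 ?_, rfl⟩
        rw [Finset.mem_filter]
        refine ⟨(mem_cells hp).2 ?_, ?_⟩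
        · show ((i:ℤ) + t).toNat < p i
          omega
        · show ((((i:ℤ) + t).toNat : ℕ) : ℤ) - (i:ℤ) = t
          omega
    have hcard2 : ((abF Zs g r a b).filter (fun s => s.1 = t)).card
        = ((Finset.Icc a (t - 1)).filter (fun y => y ∉ Zs)).card := by
      refine Finset.card_nbij (fun s => s.2) ?_ ?_ ?_
      · intro s hs
        rw [Finset.mem_coe] at hs ⊢
        rw [Finset.mem_filter] at hs
        obtain ⟨hab, hfst⟩ := hs
        rw [mem_abF hlo hhi ha hb] at hab
        obtain ⟨_, hcase | hcase⟩ := hab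
        · obtain ⟨_, hy, hyt⟩ := hcase
          dsimp only
          rw [Finset.mem_filter, Finset.mem_Icc]
          have hay : a ≤ s.2 := by
            by_contra h4
            push_neg at h4
            exact hy (hlo _ h4)
          exact ⟨⟨hay, by omega⟩, hy⟩
        · omega
      · rintro s1 hs1 s2 hs2 heq
        rw [Finset.mem_coe, Finset.mem_filter] at hs1 hs2
        have h1 := hs1.2
        have h2 := hs2.2
        rw [Prod.ext_iff]
        exact ⟨by rw [h1, h2], heq⟩
      · intro y hy
        rw [Finset.mem_coe, Finset.mem_filter, Finset.mem_Icc] at hy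
        obtain ⟨⟨hy1, hy2⟩, hy3⟩ := hy
        refine ⟨(t, y), Finset.mem_coe.2 ?_, rfl⟩
        rw [Finset.mem_filter]
        refine ⟨?_, rfl⟩
        rw [mem_abF hlo hhi ha hb]
        exact ⟨htmod, Or.inl ⟨htneg, hy3, by omega⟩⟩
    rw [hcard1, hcard2]
    have h6 := compl_count hlo hhi hbal ha t
    have h7 : Zsᶜ ∩ Set.Iio t = ↑((Finset.Icc a (t - 1)).filter (fun y => y ∉ Zs)) := by
      ext x
      simp only [Set.mem_inter_iff, Set.mem_compl_iff, Set.mem_Iio, Finset.coe_filter,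
        Finset.mem_Icc, Set.mem_setOf_eq]
      constructor
      · rintro ⟨h8, h9⟩
        have hax : a ≤ x := by
          by_contra h10
          push_neg at h10
          exact h8 (hlo _ h10)
        exact ⟨⟨hax, by omega⟩, h8⟩
      · rintro ⟨⟨h8, h9⟩, h10⟩
        exact ⟨h10, by omega⟩
    rw [h7, Set.ncard_coe_finset] at h6
    rw [Nat.card_Ico]
    omega

/-! ### extVecAp properties -/

lemma extVec_shift {n : ℕ} (hn : 0 < n) {m : ℕ → ℤ}
    (hsc : ∀ i < 2*n, m (2*n-1-i) = - m i) :
    ∀ i < 2*n, extVecAp n m (i + if n ≤ i then 1 else 0) = m i := by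
  intro i hi
  rcases Nat.lt_or_ge i n with h | h
  · rw [if_neg (show ¬ n ≤ i by omega), Nat.add_zero]
    unfold extVecAp
    rw [if_pos h]
  · rw [if_pos h]
    unfold extVecAp
    rw [if_neg (by omega), if_neg (by omega), if_pos (by omega)]
    have h2 := hsc (2*n-1-i) (by omega)
    have h3 : 2*n-1-(2*n-1-i) = i := by omega
    rw [h3] at h2
    have h4 : 2*n - (i+1) = 2*n-1-i := by omega
    rw [h4]
    omega

lemma extVec_antisym {n : ℕ} (m : ℕ → ℤ) :
    ∀ i < 2*n+1, extVecAp n m (2*n+1-1-i) = - extVecAp n m i := by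
  intro i hi
  unfold extVecAp
  have h1 : 2*n+1-1-i = 2*n - i := by omega
  rw [h1]
  rcases Nat.lt_trichotomy i n with h | h | h
  · rw [if_neg (by omega), if_neg (by omega), if_pos (by omega), if_pos h]
    have : 2*n - (2*n - i) = i := by omega
    rw [this]
  · subst h
    have h2 : 2*i - i = i := by omega
    rw [h2, if_neg (lt_irrefl i), if_pos rfl, if_neg (lt_irrefl i), if_pos rfl]
    ring
  · rw [if_pos (by omega), if_neg (by omega), if_neg (by omega), if_pos (by omega)]
    ring

lemma antisym_sum {G : ℕ} {v : ℕ → ℤ} (hv : ∀ i < G, v (G-1-i) = - v i) :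
    ∑ i ∈ Finset.range G, v i = 0 := by
  have h1 := Finset.sum_range_reflect v G
  have h2 : ∑ j ∈ Finset.range G, v (G-1-j) = ∑ j ∈ Finset.range G, -(v j) :=
    Finset.sum_congr rfl fun j hj => hv j (Finset.mem_range.1 hj)
  rw [h2, Finset.sum_neg_distrib] at h1
  omega

/-! ### the stretching map ι and its inverse κ -/

noncomputable def iotaM (g n : ℕ) (x : ℤ) : ℤ :=
  x + x / (g:ℤ) + (if (n:ℤ) ≤ x % (g:ℤ) then 1 else 0)

noncomputable def kappaM (g n : ℕ) (z : ℤ) : ℤ :=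
  z - z / ((g+1:ℕ):ℤ) - (if (n:ℤ) ≤ z % ((g+1:ℕ):ℤ) then 1 else 0)

lemma iota_evalN {g n : ℕ} (hg : 0 < g) (k : ℤ) {i : ℕ} (hi : i < g) :
    iotaM g n (k * (g:ℤ) + (i:ℤ))
      = k * ((g+1:ℕ):ℤ) + ((i + if n ≤ i then 1 else 0 : ℕ):ℤ) := by
  obtain ⟨hd, hm⟩ := aux_divmod hg k (i:ℤ) (by positivity) (by exact_mod_cast hi)
  unfold iotaM
  rw [hd, hm]
  rcases le_or_gt n i with h | h
  · rw [if_pos (by exact_mod_cast h : (n:ℤ) ≤ (i:ℤ)), if_pos h]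
    push_cast
    ring
  · rw [if_neg (by exact_mod_cast not_le.2 h : ¬ (n:ℤ) ≤ (i:ℤ)), if_neg (by omega)]
    push_cast
    ring

lemma kappa_evalN {g n : ℕ} (k : ℤ) {i' : ℕ} (hi' : i' < g + 1) :
    kappaM g n (k * ((g+1:ℕ):ℤ) + (i':ℤ))
      = k * (g:ℤ) + ((i':ℤ) - if n ≤ i' then 1 else 0) := by
  obtain ⟨hd, hm⟩ := aux_divmod (Nat.succ_pos g) k (i':ℤ) (by positivity) (by exact_mod_cast hi')
  unfold kappaM
  rw [hd, hm]
  rcases le_or_gt n i' with h | h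
  · rw [if_pos (by exact_mod_cast h : (n:ℤ) ≤ (i':ℤ)), if_pos h]
    push_cast
    ring
  · rw [if_neg (by exact_mod_cast not_le.2 h : ¬ (n:ℤ) ≤ (i':ℤ)), if_neg (by omega)]
    push_cast
    ring

lemma iota_strictMono {g n : ℕ} (hg : 0 < g) (hn : 0 < n) (hng : n < g) :
    StrictMono (iotaM g n) := by
  refine strictMono_int_of_lt_succ fun x => ?_
  obtain ⟨hd, hlt⟩ := Zset_decomp hg x
  set k := x / (g:ℤ) with hk
  set i := (x % (g:ℤ)).toNat with hi
  have e1 := iota_evalN (n := n) hg k hlt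
  rw [← hd] at e1
  rcases Nat.lt_or_ge i (g-1) with hcase | hcase
  · have h1 : x + 1 = k * (g:ℤ) + ((i+1 : ℕ):ℤ) := by push_cast; omega
    have e2 := iota_evalN (n := n) hg k (show i+1 < g by omega)
    rw [← h1] at e2
    rw [e1, e2]
    have h2 : (i + if n ≤ i then 1 else 0 : ℕ) < (i + 1 + if n ≤ i + 1 then 1 else 0 : ℕ) := by
      split_ifs <;> omega
    omega
  · have hieq : i = g - 1 := by omega
    have hexp : (k+1) * (g:ℤ) = k * (g:ℤ) + (g:ℤ) := by ring
    have h1 : x + 1 = (k+1) * (g:ℤ) + ((0:ℕ):ℤ) := by push_cast; omega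
    have e2 := iota_evalN (n := n) hg (k+1) (show 0 < g from hg)
    rw [← h1] at e2
    rw [e1, e2]
    have hind1 : (i + if n ≤ i then 1 else 0 : ℕ) = g := by
      rw [if_pos (by omega)]
      omega
    have hind2 : (0 + if n ≤ 0 then 1 else 0 : ℕ) = 0 := by
      rw [if_neg (by omega)]
    rw [hind1, hind2]
    have hexp2 : (k+1) * ((g+1:ℕ):ℤ) = k * ((g+1:ℕ):ℤ) + ((g+1:ℕ):ℤ) := by ring
    have hlt2 : ((g:ℕ):ℤ) < ((g+1:ℕ):ℤ) := by exact_mod_cast Nat.lt_succ_self g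
    omega

lemma kappa_iota {g n : ℕ} (hg : 0 < g) (x : ℤ) : kappaM g n (iotaM g n x) = x := by
  obtain ⟨hd, hlt⟩ := Zset_decomp hg x
  set k := x / (g:ℤ) with hk
  set i := (x % (g:ℤ)).toNat with hi
  have e1 := iota_evalN (n := n) hg k hlt
  rw [← hd] at e1
  rw [e1]
  have e2 := kappa_evalN (g := g) (n := n) k
    (show i + (if n ≤ i then 1 else 0) < g + 1 by split_ifs <;> omega)
  rw [e2]
  split_ifs with h1 h2 h3 <;> push_cast <;> omega

lemma iota_nmod {g n : ℕ} (hg : 0 < g) (hn : 0 < n) (hng : n < g) (x : ℤ) :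
    (iotaM g n x) % ((g+1:ℕ):ℤ) ≠ (n:ℤ) := by
  obtain ⟨hd, hlt⟩ := Zset_decomp hg x
  set k := x / (g:ℤ)
  set i := (x % (g:ℤ)).toNat
  have e1 := iota_evalN (n := n) hg k hlt
  rw [← hd] at e1
  rw [e1]
  have hlt2 : (i + if n ≤ i then 1 else 0 : ℕ) < g + 1 := by split_ifs <;> omega
  obtain ⟨_, hm⟩ := aux_divmod (show 0 < g + 1 by omega) k
    ((i + if n ≤ i then 1 else 0 : ℕ) : ℤ) (by positivity) (by exact_mod_cast hlt2)
  rw [hm]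
  split_ifs with h <;> (push_cast; omega)

lemma iota_kappa {g n : ℕ} (hg : 0 < g) (hng : n < g) {z : ℤ}
    (hz : z % ((g+1:ℕ):ℤ) ≠ (n:ℤ)) : iotaM g n (kappaM g n z) = z := by
  obtain ⟨hd, hlt⟩ := Zset_decomp (show 0 < g + 1 by omega) z
  set k := z / ((g+1:ℕ):ℤ) with hk
  set i' := (z % ((g+1:ℕ):ℤ)).toNat with hi'
  have hne : i' ≠ n := by
    intro h
    apply hz
    have h2 : (0:ℤ) ≤ z % ((g+1:ℕ):ℤ) :=
      Int.emod_nonneg z (by exact_mod_cast (show 0 < g + 1 by omega).ne')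
    omega
  have e2 := kappa_evalN (g := g) (n := n) k hlt
  rw [← hd] at e2
  rcases Nat.lt_or_ge i' n with hc | hc
  · have h1 : kappaM g n z = k * (g:ℤ) + ((i':ℕ):ℤ) := by
      rw [e2, if_neg (by omega)]
      ring
    rw [h1, iota_evalN (n := n) hg k (show i' < g by omega), if_neg (by omega)]
    omega
  · have hcc : n < i' := by omega
    have h1 : kappaM g n z = k * (g:ℤ) + ((i' - 1 :ℕ):ℤ) := by
      rw [e2, if_pos (by omega)]
      push_cast
      omega
    rw [h1, iota_evalN (n := n) hg k (show i' - 1 < g by omega), if_pos (by omega)]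
    have hcast : k * ((g+1:ℕ):ℤ) = k * ((g:ℤ)+1) := by push_cast; ring
    push_cast
    omega

lemma iota_mem {g n : ℕ} (hg : 0 < g) {m : ℕ → ℤ}
    (hshift : ∀ i < g, extVecAp n m (i + if n ≤ i then 1 else 0) = m i) (x : ℤ) :
    x ∈ Zset g m ↔ iotaM g n x ∈ Zset (g+1) (extVecAp n m) := by
  obtain ⟨hd, hlt⟩ := Zset_decomp hg x
  set k := x / (g:ℤ)
  set i := (x % (g:ℤ)).toNat
  have e1 := iota_evalN (n := n) hg k hlt
  rw [← hd] at e1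
  rw [e1]
  have hlt2 : (i + if n ≤ i then 1 else 0 : ℕ) < g + 1 := by split_ifs <;> omega
  rw [Zset_mem (show 0 < g + 1 by omega) _ hlt2 k, hshift i hlt]
  conv_lhs => rw [hd, Zset_mem hg m hlt k]

lemma iota_lt_n {g n : ℕ} (hg : 0 < g) (hn : 0 < n) (hng : n < g) (y k : ℤ) :
    iotaM g n y < k * ((g+1:ℕ):ℤ) + (n:ℤ) ↔ y < k * (g:ℤ) + (n:ℤ) := by
  obtain ⟨hd, hlt⟩ := Zset_decomp hg y
  set l := y / (g:ℤ) with hl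
  set i := (y % (g:ℤ)).toNat with hi
  have e1 := iota_evalN (n := n) hg l hlt
  rw [← hd] at e1
  rw [e1]
  set i2 : ℕ := i + if n ≤ i then 1 else 0 with hi2
  have hi2lt : i2 < g + 1 := by rw [hi2]; split_ifs <;> omega
  have hGpos : (0:ℤ) < ((g+1:ℕ):ℤ) := by exact_mod_cast Nat.succ_pos g
  have hgpos : (0:ℤ) < (g:ℤ) := by exact_mod_cast hg
  have hb1 := aux_blockLt (H := ((g+1:ℕ):ℤ)) (l := l) (k := k) (u := (i2:ℤ)) (v := (n:ℤ))
    hGpos (by positivity) (by exact_mod_cast hi2lt) (by positivity)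
    (by exact_mod_cast (show n < g+1 by omega))
  have hb2 := aux_blockLt (H := (g:ℤ)) (l := l) (k := k) (u := ((i:ℕ):ℤ)) (v := (n:ℤ))
    hgpos (by positivity) (by exact_mod_cast hlt) (by positivity) (by exact_mod_cast hng)
  rw [hb1]
  conv_rhs => rw [hd]
  rw [hb2]
  have hrel : (((i2:ℕ):ℤ) < (n:ℤ)) ↔ (((i:ℕ):ℤ) < (n:ℤ)) := by
    rw [hi2]
    split_ifs <;> (push_cast; omega)
  rw [hrel]

lemma n_lt_iota {g n : ℕ} (hg : 0 < g) (hn : 0 < n) (hng : n < g) (x k : ℤ) :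
    k * ((g+1:ℕ):ℤ) + (n:ℤ) < iotaM g n x ↔ k * (g:ℤ) + (n:ℤ) ≤ x := by
  obtain ⟨hd, hlt⟩ := Zset_decomp hg x
  set l := x / (g:ℤ) with hl
  set i := (x % (g:ℤ)).toNat with hi
  have e1 := iota_evalN (n := n) hg l hlt
  rw [← hd] at e1
  rw [e1]
  set i2 : ℕ := i + if n ≤ i then 1 else 0 with hi2
  have hi2lt : i2 < g + 1 := by rw [hi2]; split_ifs <;> omega
  have hGpos : (0:ℤ) < ((g+1:ℕ):ℤ) := by exact_mod_cast Nat.succ_pos g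
  have hgpos : (0:ℤ) < (g:ℤ) := by exact_mod_cast hg
  have hb1 := aux_blockLt (H := ((g+1:ℕ):ℤ)) (l := k) (k := l) (u := (n:ℤ)) (v := (i2:ℤ))
    hGpos (by positivity) (by exact_mod_cast (show n < g+1 by omega)) (by positivity)
    (by exact_mod_cast hi2lt)
  have hb2 := aux_blockLt (H := (g:ℤ)) (l := l) (k := k) (u := ((i:ℕ):ℤ)) (v := (n:ℤ))
    hgpos (by positivity) (by exact_mod_cast hlt) (by positivity) (by exact_mod_cast hng)
  rw [hb1]
  conv_rhs => rw [hd, ← not_lt]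
  rw [hb2]
  have hrel : ((n:ℤ) < ((i2:ℕ):ℤ)) ↔ ((n:ℤ) ≤ ((i:ℕ):ℤ)) := by
    rw [hi2]
    split_ifs <;> (push_cast; omega)
  rw [hrel]
  constructor
  · rintro (h | ⟨rfl, h⟩) <;> omega
  · intro h
    rcases lt_trichotomy k l with h1 | h1 | h1
    · exact Or.inl h1
    · exact Or.inr ⟨h1, by omega⟩
    · exact absurd (Or.inl h1) h

/-! ### splitting the pairs of the stretched core -/

lemma ediv_decomp {H x r : ℤ} (hmod : x % H = r) : x = (x / H) * H + r := by
  have h := Int.mul_ediv_add_emod x H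
  rw [hmod] at h
  have hcomm : H * (x / H) = (x / H) * H := by ring
  omega

lemma extVec_at_n {n : ℕ} (m : ℕ → ℤ) : extVecAp n m n = 0 := by
  unfold extVecAp
  rw [if_neg (lt_irrefl n), if_pos rfl]

lemma pairs_split {g n : ℕ} (hg : 0 < g) (hn : 0 < n) (hng : n < g) {m : ℕ → ℤ}
    (hshift : ∀ i < g, extVecAp n m (i + if n ≤ i then 1 else 0) = m i)
    {a b a2 b2 : ℤ}
    (hlo : ∀ x, x < a → x ∈ Zset g m) (hhi : ∀ x, b ≤ x → x ∉ Zset g m)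
    (ha : a ≤ 0) (hb : 0 ≤ b)
    (hlo2 : ∀ x, x < a2 → x ∈ Zset (g+1) (extVecAp n m))
    (hhi2 : ∀ x, b2 ≤ x → x ∉ Zset (g+1) (extVecAp n m)) :
    (pairsF (Zset (g+1) (extVecAp n m)) a2 b2).card
      = (pairsF (Zset g m) a b).card + (abF (Zset g m) g n a b).card := by
  classical
  have hGpos : 0 < g + 1 := by omega
  have hmem : ∀ x : ℤ, x ∈ Zset g m ↔ iotaM g n x ∈ Zset (g+1) (extVecAp n m) :=
    iota_mem hg hshift
  have hclassn : ∀ k : ℤ, (k * ((g+1:ℕ):ℤ) + (n:ℤ)) ∈ Zset (g+1) (extVecAp n m) ↔ k < 0 := by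
    intro k
    rw [Zset_mem hGpos _ (show n < g + 1 by omega) k, extVec_at_n]
  have hmono := iota_strictMono hg hn hng
  set Q : ℤ × ℤ → Prop :=
    fun s => s.1 % ((g+1:ℕ):ℤ) = (n:ℤ) ∨ s.2 % ((g+1:ℕ):ℤ) = (n:ℤ) with hQ
  have hsplit := Finset.card_filter_add_card_filter_not
    (s := pairsF (Zset (g+1) (extVecAp n m)) a2 b2) Q
  have hcard1 : ((pairsF (Zset (g+1) (extVecAp n m)) a2 b2).filter (fun s => ¬ Q s)).card
      = (pairsF (Zset g m) a b).card := by
    symm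
    refine Finset.card_nbij (fun s => (iotaM g n s.1, iotaM g n s.2)) ?_ ?_ ?_
    · intro s hs
      rw [Finset.mem_coe] at hs ⊢
      rw [mem_pairsF hlo hhi] at hs
      obtain ⟨h1, h2, h3⟩ := hs
      rw [Finset.mem_filter]
      constructor
      · rw [mem_pairsF hlo2 hhi2]
        dsimp only
        exact ⟨(hmem s.1).1 h1, fun h => h2 ((hmem s.2).2 h), hmono h3⟩
      · rw [hQ]
        dsimp only
        push_neg
        exact ⟨iota_nmod hg hn hng s.1, iota_nmod hg hn hng s.2⟩
    · rintro ⟨x1, y1⟩ hs1 ⟨x2, y2⟩ hs2 heq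
      simp only [Prod.mk.injEq] at heq
      exact Prod.ext (hmono.injective heq.1) (hmono.injective heq.2)
    · intro w hw
      rw [Finset.mem_coe, Finset.mem_filter] at hw
      obtain ⟨hwp, hwq⟩ := hw
      rw [mem_pairsF hlo2 hhi2] at hwp
      obtain ⟨h1, h2, h3⟩ := hwp
      rw [hQ] at hwq
      have hq1 : w.1 % ((g+1:ℕ):ℤ) ≠ (n:ℤ) := fun h => hwq (Or.inl h)
      have hq2 : w.2 % ((g+1:ℕ):ℤ) ≠ (n:ℤ) := fun h => hwq (Or.inr h)
      have hik1 : iotaM g n (kappaM g n w.1) = w.1 := iota_kappa hg hng hq1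
      have hik2 : iotaM g n (kappaM g n w.2) = w.2 := iota_kappa hg hng hq2
      refine ⟨(kappaM g n w.1, kappaM g n w.2), ?_, ?_⟩
      · rw [Finset.mem_coe, mem_pairsF hlo hhi]
        dsimp only
        refine ⟨?_, ?_, ?_⟩
        · rw [hmem, hik1]
          exact h1
        · rw [hmem, hik2]
          exact h2
        · rw [← hmono.lt_iff_lt, hik1, hik2]
          exact h3
      · dsimp only
        rw [Prod.ext_iff]
        exact ⟨hik1, hik2⟩
  have hcard2 : ((pairsF (Zset (g+1) (extVecAp n m)) a2 b2).filter Q).card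
      = (abF (Zset g m) g n a b).card := by
    refine Finset.card_nbij (fun s =>
      if s.1 % ((g+1:ℕ):ℤ) = (n:ℤ)
      then ((s.1 / ((g+1:ℕ):ℤ)) * (g:ℤ) + (n:ℤ), kappaM g n s.2)
      else ((s.2 / ((g+1:ℕ):ℤ)) * (g:ℤ) + (n:ℤ), kappaM g n s.1)) ?_ ?_ ?_
    · intro s hs
      rw [Finset.mem_coe] at hs ⊢
      rw [Finset.mem_filter] at hs
      obtain ⟨hsp, hsq⟩ := hs
      rw [mem_pairsF hlo2 hhi2] at hsp
      obtain ⟨h1, h2, h3⟩ := hsp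
      dsimp only
      by_cases hx : s.1 % ((g+1:ℕ):ℤ) = (n:ℤ)
      · rw [if_pos hx]
        set k := s.1 / ((g+1:ℕ):ℤ) with hk
        have hx'd : s.1 = k * ((g+1:ℕ):ℤ) + (n:ℤ) := by
          rw [hk]
          exact ediv_decomp hx
        have hkneg : k < 0 := by
          rw [hx'd, hclassn] at h1
          exact h1
        have hy'mod : s.2 % ((g+1:ℕ):ℤ) ≠ (n:ℤ) := by
          intro hy
          set l := s.2 / ((g+1:ℕ):ℤ) with hl
          have hy'd : s.2 = l * ((g+1:ℕ):ℤ) + (n:ℤ) := by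
            rw [hl]
            exact ediv_decomp hy
          have hlpos : ¬ (l < 0) := by
            intro hl0
            exact h2 (by rw [hy'd]; exact (hclassn l).2 hl0)
          have : s.1 < s.2 := by
            rw [hx'd, hy'd]
            have hGp : (0:ℤ) < ((g+1:ℕ):ℤ) := by exact_mod_cast hGpos
            have := mul_le_mul_of_nonneg_right (show k + 1 ≤ l by omega) hGp.le
            have hexp : (k+1) * ((g+1:ℕ):ℤ) = k * ((g+1:ℕ):ℤ) + ((g+1:ℕ):ℤ) := by ring
            omega
          omega
      -- target membership
        rw [mem_abF hlo hhi ha hb]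
        dsimp only
        have htmod : (k * (g:ℤ) + (n:ℤ)) % (g:ℤ) = (n:ℤ) :=
          (aux_divmod hg k (n:ℤ) (by positivity) (by exact_mod_cast hng)).2
        have htneg : k * (g:ℤ) + (n:ℤ) < 0 := by
          have hgp : (0:ℤ) < (g:ℤ) := by exact_mod_cast hg
          have := mul_le_mul_of_nonneg_right (show k ≤ -1 by omega) hgp.le
          have hexp : (-1:ℤ) * (g:ℤ) = -(g:ℤ) := by ring
          have hnlt : (n:ℤ) < (g:ℤ) := by exact_mod_cast hng
          omega
        refine ⟨htmod, Or.inl ⟨htneg, ?_, ?_⟩⟩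
        · intro hmem2
          have hmem3 := (hmem _).1 hmem2
          rw [iota_kappa hg hng hy'mod] at hmem3
          exact h2 hmem3
        · rw [← iota_lt_n hg hn hng, iota_kappa hg hng hy'mod, ← hx'd]
          exact h3
      · rw [if_neg hx]
        have hy : s.2 % ((g+1:ℕ):ℤ) = (n:ℤ) := by
          rw [hQ] at hsq
          tauto
        set l := s.2 / ((g+1:ℕ):ℤ) with hl
        have hy'd : s.2 = l * ((g+1:ℕ):ℤ) + (n:ℤ) := by
          rw [hl]
          exact ediv_decomp hy
        have hlpos : 0 ≤ l := by
          by_contra hl0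
          push_neg at hl0
          exact h2 (by rw [hy'd]; exact (hclassn l).2 hl0)
        rw [mem_abF hlo hhi ha hb]
        dsimp only
        have htmod : (l * (g:ℤ) + (n:ℤ)) % (g:ℤ) = (n:ℤ) :=
          (aux_divmod hg l (n:ℤ) (by positivity) (by exact_mod_cast hng)).2
        have htpos : 0 ≤ l * (g:ℤ) + (n:ℤ) := by
          have hgp : (0:ℤ) ≤ (g:ℤ) := by positivity
          have := mul_nonneg hlpos hgp
          have hn0 : (0:ℤ) ≤ (n:ℤ) := by positivity
          omega
        refine ⟨htmod, Or.inr ⟨htpos, ?_, ?_⟩⟩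
        · rw [hmem, iota_kappa hg hng hx]
          exact h1
        · rw [← n_lt_iota hg hn hng, iota_kappa hg hng hx, ← hy'd]
          exact h3
    · rintro ⟨x1, y1⟩ hs1 ⟨x2, y2⟩ hs2 heq
      rw [Finset.mem_coe, Finset.mem_filter] at hs1 hs2
      obtain ⟨hp1, hq1⟩ := hs1
      obtain ⟨hp2, hq2⟩ := hs2
      rw [mem_pairsF hlo2 hhi2] at hp1 hp2
      dsimp only at heq
      -- we show equality case by case on the branches
      by_cases hx1 : x1 % ((g+1:ℕ):ℤ) = (n:ℤ) <;>
        by_cases hx2 : x2 % ((g+1:ℕ):ℤ) = (n:ℤ)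
      · rw [if_pos hx1, if_pos hx2] at heq
        simp only [Prod.mk.injEq] at heq
        obtain ⟨he1, he2⟩ := heq
        have hk : x1 / ((g+1:ℕ):ℤ) = x2 / ((g+1:ℕ):ℤ) := by
          have hgp : (0:ℤ) < (g:ℤ) := by exact_mod_cast hg
          have d1 := (aux_divmod hg (x1 / ((g+1:ℕ):ℤ)) (n:ℤ) (by positivity)
            (by exact_mod_cast hng)).1
          have d2 := (aux_divmod hg (x2 / ((g+1:ℕ):ℤ)) (n:ℤ) (by positivity)
            (by exact_mod_cast hng)).1
          rw [← d1, ← d2, he1]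
        have hxx : x1 = x2 := by
          have e1 : x1 = (x1 / ((g+1:ℕ):ℤ)) * ((g+1:ℕ):ℤ) + (n:ℤ) := ediv_decomp hx1
          have e2 : x2 = (x2 / ((g+1:ℕ):ℤ)) * ((g+1:ℕ):ℤ) + (n:ℤ) := ediv_decomp hx2
          rw [e1, e2, hk]
        -- y1 = y2 : both not ≡ n (as in maps-to) so kappa injective via iota_kappa
        have hy1mod : y1 % ((g+1:ℕ):ℤ) ≠ (n:ℤ) := by
          intro hy
          obtain ⟨h1, h2, h3⟩ := hp1
          set l := y1 / ((g+1:ℕ):ℤ) with hl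
          have hy'd : y1 = l * ((g+1:ℕ):ℤ) + (n:ℤ) := by
            rw [hl]
            exact ediv_decomp hy
          have hlpos : 0 ≤ l := by
            by_contra hl0
            push_neg at hl0
            exact h2 (by rw [hy'd]; exact (hclassn l).2 hl0)
          set k := x1 / ((g+1:ℕ):ℤ) with hkk
          have hx'd : x1 = k * ((g+1:ℕ):ℤ) + (n:ℤ) := by
            rw [hkk]
            exact ediv_decomp hx1
          have hkneg : k < 0 := by
            rw [hx'd, hclassn] at h1
            exact h1
          have : x1 < y1 := by
            rw [hx'd, hy'd]
            have hGp : (0:ℤ) < ((g+1:ℕ):ℤ) := by exact_mod_cast hGpos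
            have := mul_le_mul_of_nonneg_right (show k + 1 ≤ l by omega) hGp.le
            have hexp : (k+1) * ((g+1:ℕ):ℤ) = k * ((g+1:ℕ):ℤ) + ((g+1:ℕ):ℤ) := by ring
            omega
          omega
        have hy2mod : y2 % ((g+1:ℕ):ℤ) ≠ (n:ℤ) := by
          intro hy
          obtain ⟨h1, h2, h3⟩ := hp2
          set l := y2 / ((g+1:ℕ):ℤ) with hl
          have hy'd : y2 = l * ((g+1:ℕ):ℤ) + (n:ℤ) := by
            rw [hl]
            exact ediv_decomp hy
          have hlpos : 0 ≤ l := by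
            by_contra hl0
            push_neg at hl0
            exact h2 (by rw [hy'd]; exact (hclassn l).2 hl0)
          set k := x2 / ((g+1:ℕ):ℤ) with hkk
          have hx'd : x2 = k * ((g+1:ℕ):ℤ) + (n:ℤ) := by
            rw [hkk]
            exact ediv_decomp hx2
          have hkneg : k < 0 := by
            rw [hx'd, hclassn] at h1
            exact h1
          have : x2 < y2 := by
            rw [hx'd, hy'd]
            have hGp : (0:ℤ) < ((g+1:ℕ):ℤ) := by exact_mod_cast hGpos
            have := mul_le_mul_of_nonneg_right (show k + 1 ≤ l by omega) hGp.le
            have hexp : (k+1) * ((g+1:ℕ):ℤ) = k * ((g+1:ℕ):ℤ) + ((g+1:ℕ):ℤ) := by ring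
            omega
          omega
        have hyy : y1 = y2 := by
          rw [← iota_kappa hg hng hy1mod, ← iota_kappa hg hng hy2mod, he2]
        rw [hxx, hyy]
      · exfalso
        rw [if_pos hx1, if_neg hx2] at heq
        simp only [Prod.mk.injEq] at heq
        obtain ⟨he1, _⟩ := heq
        -- LHS t < 0, RHS t ≥ 0
        obtain ⟨h1, h2, h3⟩ := hp1
        obtain ⟨h1', h2', h3'⟩ := hp2
        have hkneg : x1 / ((g+1:ℕ):ℤ) < 0 := by
          have hx'd : x1 = (x1 / ((g+1:ℕ):ℤ)) * ((g+1:ℕ):ℤ) + (n:ℤ) := ediv_decomp hx1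
          rw [hx'd, hclassn] at h1
          exact h1
        have hy2 : y2 % ((g+1:ℕ):ℤ) = (n:ℤ) := by
          rw [hQ] at hq2
          tauto
        have hlpos : 0 ≤ y2 / ((g+1:ℕ):ℤ) := by
          by_contra hl0
          push_neg at hl0
          have hy'd : y2 = (y2 / ((g+1:ℕ):ℤ)) * ((g+1:ℕ):ℤ) + (n:ℤ) := ediv_decomp hy2
          exact h2' (by rw [hy'd]; exact (hclassn _).2 hl0)
        have hgp : (0:ℤ) < (g:ℤ) := by exact_mod_cast hg
        have hm1 := mul_le_mul_of_nonneg_right (show x1 / ((g+1:ℕ):ℤ) ≤ -1 by omega) hgp.le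
        have hm2 := mul_le_mul_of_nonneg_right hlpos hgp.le
        have hexp : (-1:ℤ) * (g:ℤ) = -(g:ℤ) := by ring
        have hnlt : (n:ℤ) < (g:ℤ) := by exact_mod_cast hng
        have hzz : (0:ℤ) * (g:ℤ) = 0 := by ring
        omega
      · exfalso
        rw [if_neg hx1, if_pos hx2] at heq
        simp only [Prod.mk.injEq] at heq
        obtain ⟨he1, _⟩ := heq
        obtain ⟨h1, h2, h3⟩ := hp1
        obtain ⟨h1', h2', h3'⟩ := hp2
        have hkneg : x2 / ((g+1:ℕ):ℤ) < 0 := by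
          have hx'd : x2 = (x2 / ((g+1:ℕ):ℤ)) * ((g+1:ℕ):ℤ) + (n:ℤ) := ediv_decomp hx2
          rw [hx'd, hclassn] at h1'
          exact h1'
        have hy1 : y1 % ((g+1:ℕ):ℤ) = (n:ℤ) := by
          rw [hQ] at hq1
          tauto
        have hlpos : 0 ≤ y1 / ((g+1:ℕ):ℤ) := by
          by_contra hl0
          push_neg at hl0
          have hy'd : y1 = (y1 / ((g+1:ℕ):ℤ)) * ((g+1:ℕ):ℤ) + (n:ℤ) := ediv_decomp hy1
          exact h2 (by rw [hy'd]; exact (hclassn _).2 hl0)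
        have hgp : (0:ℤ) < (g:ℤ) := by exact_mod_cast hg
        have hm1 := mul_le_mul_of_nonneg_right (show x2 / ((g+1:ℕ):ℤ) ≤ -1 by omega) hgp.le
        have hm2 := mul_le_mul_of_nonneg_right hlpos hgp.le
        have hexp : (-1:ℤ) * (g:ℤ) = -(g:ℤ) := by ring
        have hnlt : (n:ℤ) < (g:ℤ) := by exact_mod_cast hng
        have hzz : (0:ℤ) * (g:ℤ) = 0 := by ring
        omega
      · rw [if_neg hx1, if_neg hx2] at heq
        simp only [Prod.mk.injEq] at heq
        obtain ⟨he1, he2⟩ := heq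
        have hy1 : y1 % ((g+1:ℕ):ℤ) = (n:ℤ) := by
          rw [hQ] at hq1
          tauto
        have hy2 : y2 % ((g+1:ℕ):ℤ) = (n:ℤ) := by
          rw [hQ] at hq2
          tauto
        have hl : y1 / ((g+1:ℕ):ℤ) = y2 / ((g+1:ℕ):ℤ) := by
          have d1 := (aux_divmod hg (y1 / ((g+1:ℕ):ℤ)) (n:ℤ) (by positivity)
            (by exact_mod_cast hng)).1
          have d2 := (aux_divmod hg (y2 / ((g+1:ℕ):ℤ)) (n:ℤ) (by positivity)
            (by exact_mod_cast hng)).1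
          rw [← d1, ← d2, he1]
        have hyy : y1 = y2 := by
          have e1 : y1 = (y1 / ((g+1:ℕ):ℤ)) * ((g+1:ℕ):ℤ) + (n:ℤ) := ediv_decomp hy1
          have e2 : y2 = (y2 / ((g+1:ℕ):ℤ)) * ((g+1:ℕ):ℤ) + (n:ℤ) := ediv_decomp hy2
          rw [e1, e2, hl]
        have hxx : x1 = x2 := by
          rw [← iota_kappa hg hng hx1, ← iota_kappa hg hng hx2, he2]
        rw [hxx, hyy]
    · intro w hw
      rw [Finset.mem_coe, mem_abF hlo hhi ha hb] at hw
      obtain ⟨hwmod, hcase | hcase⟩ := hw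
      · obtain ⟨htneg, hy, hyt⟩ := hcase
        set k := w.1 / (g:ℤ) with hk
        have htd : w.1 = k * (g:ℤ) + (n:ℤ) := by
          rw [hk]
          exact ediv_decomp hwmod
        have hkneg : k < 0 := by
          by_contra hk0
          push_neg at hk0
          have hgp : (0:ℤ) ≤ (g:ℤ) := by positivity
          have := mul_nonneg hk0 hgp
          have hn0 : (0:ℤ) ≤ (n:ℤ) := by positivity
          omega
        refine ⟨(k * ((g+1:ℕ):ℤ) + (n:ℤ), iotaM g n w.2), ?_, ?_⟩
        · rw [Finset.mem_coe, Finset.mem_filter]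
          have hxmod : (k * ((g+1:ℕ):ℤ) + (n:ℤ)) % ((g+1:ℕ):ℤ) = (n:ℤ) :=
            (aux_divmod hGpos k (n:ℤ) (by positivity)
              (by exact_mod_cast (show n < g + 1 by omega))).2
          constructor
          · rw [mem_pairsF hlo2 hhi2]
            dsimp only
            refine ⟨(hclassn k).2 hkneg, fun h => hy ((hmem w.2).2 h), ?_⟩
            rw [iota_lt_n hg hn hng, ← htd]
            exact hyt
          · rw [hQ]
            exact Or.inl hxmod
        · have hxmod : (k * ((g+1:ℕ):ℤ) + (n:ℤ)) % ((g+1:ℕ):ℤ) = (n:ℤ) :=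
            (aux_divmod hGpos k (n:ℤ) (by positivity)
              (by exact_mod_cast (show n < g + 1 by omega))).2
          have hxdiv : (k * ((g+1:ℕ):ℤ) + (n:ℤ)) / ((g+1:ℕ):ℤ) = k :=
            (aux_divmod hGpos k (n:ℤ) (by positivity)
              (by exact_mod_cast (show n < g + 1 by omega))).1
          dsimp only
          rw [if_pos hxmod, hxdiv, kappa_iota hg]
          rw [Prod.ext_iff]
          exact ⟨by dsimp only; omega, rfl⟩
      · obtain ⟨htpos, hx, htx⟩ := hcase
        set l := w.1 / (g:ℤ) with hl
        have htd : w.1 = l * (g:ℤ) + (n:ℤ) := by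
          rw [hl]
          exact ediv_decomp hwmod
        have hlpos : 0 ≤ l := by
          by_contra hl0
          push_neg at hl0
          have hgp : (0:ℤ) < (g:ℤ) := by exact_mod_cast hg
          have := mul_le_mul_of_nonneg_right (show l ≤ -1 by omega) hgp.le
          have hexp : (-1:ℤ) * (g:ℤ) = -(g:ℤ) := by ring
          have hnlt : (n:ℤ) < (g:ℤ) := by exact_mod_cast hng
          omega
        have hymod : (l * ((g+1:ℕ):ℤ) + (n:ℤ)) % ((g+1:ℕ):ℤ) = (n:ℤ) :=
          (aux_divmod hGpos l (n:ℤ) (by positivity)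
            (by exact_mod_cast (show n < g + 1 by omega))).2
        have hydiv : (l * ((g+1:ℕ):ℤ) + (n:ℤ)) / ((g+1:ℕ):ℤ) = l :=
          (aux_divmod hGpos l (n:ℤ) (by positivity)
            (by exact_mod_cast (show n < g + 1 by omega))).1
        refine ⟨(iotaM g n w.2, l * ((g+1:ℕ):ℤ) + (n:ℤ)), ?_, ?_⟩
        · rw [Finset.mem_coe, Finset.mem_filter]
          constructor
          · rw [mem_pairsF hlo2 hhi2]
            dsimp only
            refine ⟨(hmem w.2).1 hx, fun h => ?_, ?_⟩
            · have := (hclassn l).1 h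
              omega
            · rw [n_lt_iota hg hn hng, ← htd]
              exact htx
          · rw [hQ]
            exact Or.inr hymod
        · dsimp only
          rw [if_neg (iota_nmod hg hn hng w.2), hydiv, kappa_iota hg]
          rw [Prod.ext_iff]
          exact ⟨by dsimp only; omega, rfl⟩
  omega

/-! ### main construction lemmas -/

noncomputable def mBack (n : ℕ) (μ : ℕ → ℤ) : ℕ → ℤ := fun i => if i < n then μ i else μ (i+1)

lemma main_forward {n : ℕ} (hn : 1 ≤ n) {c : ℕ → ℕ} (hp : IsPartition c)
    (hcore : IsCore (2*n) c) (hsc : SelfConj c) :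
    IsPartition (coreOf (2*n+1) (extVecAp n (ncharge (2*n) c))) ∧
    IsCore (2*n+1) (coreOf (2*n+1) (extVecAp n (ncharge (2*n) c))) ∧
    SelfConj (coreOf (2*n+1) (extVecAp n (ncharge (2*n) c))) ∧
    (∀ i < 2*n+1, ncharge (2*n+1) (coreOf (2*n+1) (extVecAp n (ncharge (2*n) c))) i
        = extVecAp n (ncharge (2*n) c) i) ∧
    psize (coreOf (2*n+1) (extVecAp n (ncharge (2*n) c)))
        = psize c + resCount (2*n) c n := by
  have hg : 0 < 2*n := by omega
  have hg' : 0 < 2*n+1 := by omega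
  have hZc := ZS_eq_Zset hp hg hcore
  have hsum := sum_charges_zero hp hg hZc
  have hanti := charge_antisym hp hg hZc hsc
  have hshift := extVec_shift (show 0 < n by omega) hanti
  have hantiE := extVec_antisym (n := n) (ncharge (2*n) c)
  have hsum' : ∑ i ∈ Finset.range (2*n+1), extVecAp n (ncharge (2*n) c) i = 0 :=
    antisym_sum hantiE
  obtain ⟨hp', hZ'⟩ := coreOf_spec hg' hsum'
  have hcore' : IsCore (2*n+1) (coreOf (2*n+1) (extVecAp n (ncharge (2*n) c))) := by
    refine (isCore_iff hp' hg').2 fun x hx => ?_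
    rw [hZ'] at hx ⊢
    exact Zset_down hg' _ hx
  have hsc' := selfconj_of_antisym hp' hg' hZ' hantiE
  have hch : ∀ i < 2*n+1,
      ncharge (2*n+1) (coreOf (2*n+1) (extVecAp n (ncharge (2*n) c))) i
        = extVecAp n (ncharge (2*n) c) i := fun i hi => ncharge_of_Zset hg' hZ' hi
  obtain ⟨a, b, ha, hb, hlo, hhi, hbal⟩ := Zset_pkg hg (ncharge (2*n) c) hsum
  obtain ⟨a2, b2, ha2, hb2, hlo2, hhi2, hbal2⟩ :=
    Zset_pkg hg' (extVecAp n (ncharge (2*n) c)) hsum'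
  have hs1 : psize c = (pairsF (Zset (2*n) (ncharge (2*n) c)) a b).card :=
    psize_eq_pairs hp hZc hlo hhi
  have hs2 : psize (coreOf (2*n+1) (extVecAp n (ncharge (2*n) c)))
      = (pairsF (Zset (2*n+1) (extVecAp n (ncharge (2*n) c))) a2 b2).card :=
    psize_eq_pairs hp' hZ' hlo2 hhi2
  have hs3 : resCount (2*n) c n = (abF (Zset (2*n) (ncharge (2*n) c)) (2*n) n a b).card :=
    resCount_eq_ab hp hZc hg (by omega) hlo hhi hbal (by omega) (by omega)
  have hs4 := pairs_split hg (show 0 < n by omega) (show n < 2*n by omega) hshift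
    hlo hhi (by omega) (by omega) hlo2 hhi2
  exact ⟨hp', hcore', hsc', hch, by omega⟩

lemma main_backward {n : ℕ} (hn : 1 ≤ n) {c'' : ℕ → ℕ} (hp : IsPartition c'')
    (hcore : IsCore (2*n+1) c'') (hsc : SelfConj c'') :
    IsPartition (coreOf (2*n) (mBack n (ncharge (2*n+1) c''))) ∧
    IsCore (2*n) (coreOf (2*n) (mBack n (ncharge (2*n+1) c''))) ∧
    SelfConj (coreOf (2*n) (mBack n (ncharge (2*n+1) c''))) ∧
    coreOf (2*n+1) (extVecAp n (ncharge (2*n)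
      (coreOf (2*n) (mBack n (ncharge (2*n+1) c''))))) = c'' := by
  have hg : 0 < 2*n := by omega
  have hg' : 0 < 2*n+1 := by omega
  have hZc := ZS_eq_Zset hp hg' hcore
  have hsum := sum_charges_zero hp hg' hZc
  have hanti := charge_antisym hp hg' hZc hsc
  set μ := ncharge (2*n+1) c'' with hμ
  have hμn : μ n = 0 := by
    have h1 := hanti n (by omega)
    have h2 : 2*n+1-1-n = n := by omega
    rw [h2] at h1
    omega
  have hantiB : ∀ i < 2*n, mBack n μ (2*n-1-i) = - mBack n μ i := by
    intro i hi
    unfold mBack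
    rcases Nat.lt_or_ge i n with h | h
    · rw [if_neg (by omega), if_pos h]
      have h1 := hanti i (by omega)
      have h2 : 2*n+1-1-i = 2*n-1-i+1 := by omega
      rw [h2] at h1
      exact h1
    · rw [if_pos (by omega), if_neg (by omega)]
      have h1 := hanti (i+1) (by omega)
      have h2 : 2*n+1-1-(i+1) = 2*n-1-i := by omega
      rw [h2] at h1
      exact h1
  have hsumB : ∑ i ∈ Finset.range (2*n), mBack n μ i = 0 := antisym_sum hantiB
  obtain ⟨hpB, hZB⟩ := coreOf_spec hg hsumB
  have hcoreB : IsCore (2*n) (coreOf (2*n) (mBack n μ)) := by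
    refine (isCore_iff hpB hg).2 fun x hx => ?_
    rw [hZB] at hx ⊢
    exact Zset_down hg _ hx
  have hscB := selfconj_of_antisym hpB hg hZB hantiB
  refine ⟨hpB, hcoreB, hscB, ?_⟩
  have hchB : ∀ i < 2*n, ncharge (2*n) (coreOf (2*n) (mBack n μ)) i = mBack n μ i :=
    fun i hi => ncharge_of_Zset hg hZB hi
  have hantiBE := extVec_antisym (n := n) (ncharge (2*n) (coreOf (2*n) (mBack n μ)))
  have hsumBE : ∑ i ∈ Finset.range (2*n+1),
      extVecAp n (ncharge (2*n) (coreOf (2*n) (mBack n μ))) i = 0 := antisym_sum hantiBE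
  obtain ⟨hpF, hZF⟩ := coreOf_spec hg' hsumBE
  have hcongr : ∀ i < 2*n+1,
      extVecAp n (ncharge (2*n) (coreOf (2*n) (mBack n μ))) i = μ i := by
    intro i hi
    unfold extVecAp
    rcases Nat.lt_trichotomy i n with h | h | h
    · rw [if_pos h, hchB i (by omega)]
      unfold mBack
      rw [if_pos h]
    · subst h
      rw [if_neg (lt_irrefl i), if_pos rfl]
      omega
    · rw [if_neg (by omega), if_neg (by omega), if_pos (by omega)]
      rw [hchB (2*n-i) (by omega)]
      unfold mBack
      rw [if_pos (by omega)]
      have h1 := hanti (2*n-i) (by omega)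
      have h2 : 2*n+1-1-(2*n-i) = i := by omega
      rw [h2] at h1
      omega
  apply part_ext hpF hp
  rw [hZF, hZc, Zset_congr hg' hcongr]

lemma main_left {n : ℕ} (hn : 1 ≤ n) {c : ℕ → ℕ} (hp : IsPartition c)
    (hcore : IsCore (2*n) c) (hsc : SelfConj c) :
    coreOf (2*n) (mBack n (ncharge (2*n+1)
      (coreOf (2*n+1) (extVecAp n (ncharge (2*n) c))))) = c := by
  have hg : 0 < 2*n := by omega
  have hg' : 0 < 2*n+1 := by omega
  have hZc := ZS_eq_Zset hp hg hcore
  have hsum := sum_charges_zero hp hg hZc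
  have hanti := charge_antisym hp hg hZc hsc
  have hantiE := extVec_antisym (n := n) (ncharge (2*n) c)
  have hsum' : ∑ i ∈ Finset.range (2*n+1), extVecAp n (ncharge (2*n) c) i = 0 :=
    antisym_sum hantiE
  obtain ⟨hp', hZ'⟩ := coreOf_spec hg' hsum'
  have hch : ∀ i < 2*n+1,
      ncharge (2*n+1) (coreOf (2*n+1) (extVecAp n (ncharge (2*n) c))) i
        = extVecAp n (ncharge (2*n) c) i := fun i hi => ncharge_of_Zset hg' hZ' hi
  have hcongr : ∀ i < 2*n,
      mBack n (ncharge (2*n+1) (coreOf (2*n+1) (extVecAp n (ncharge (2*n) c)))) i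
        = ncharge (2*n) c i := by
    intro i hi
    unfold mBack
    rcases Nat.lt_or_ge i n with h | h
    · rw [if_pos h, hch i (by omega)]
      unfold extVecAp
      rw [if_pos h]
    · rw [if_neg (by omega), hch (i+1) (by omega)]
      unfold extVecAp
      rw [if_neg (by omega), if_neg (by omega), if_pos (by omega)]
      have h1 := hanti i (by omega)
      have h2 : 2*n - (i+1) = 2*n-1-i := by omega
      rw [h2]
      omega
  have hsumB : ∑ i ∈ Finset.range (2*n),
      mBack n (ncharge (2*n+1) (coreOf (2*n+1) (extVecAp n (ncharge (2*n) c)))) i = 0 := by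
    rw [Finset.sum_congr rfl (fun i hi => hcongr i (Finset.mem_range.1 hi))]
    exact hsum
  obtain ⟨hpB, hZB⟩ := coreOf_spec hg hsumB
  apply part_ext hpB hp
  rw [hZB, hZc, Zset_congr hg hcongr]

end AuxDev

/-- The map sending a self-conjugate `2n`-core `c` with
`φ_{2n}(c) = (m_0, …, m_{n-1}, -m_{n-1}, …, -m_0)` to
`c' = φ_{2n+1}^{-1}(m_0, …, m_{n-1}, 0, -m_{n-1}, …, -m_0)` is a bijection from
`𝒞_{2n}^s` onto `𝒞_{2n+1}^s`, and `|c'| = |c| + a_n(c)`. -/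
theorem type_A_2n_prime_2_atomic_length (n : ℕ) (hn : 2 ≤ n) :
    ∃ F : {c : ℕ → ℕ // IsPartition c ∧ IsCore (2 * n) c ∧ SelfConj c} →
          {c' : ℕ → ℕ // IsPartition c' ∧ IsCore (2 * n + 1) c' ∧ SelfConj c'},
      Function.Bijective F ∧
      ∀ c, (∀ i < 2 * n + 1,
          ncharge (2 * n + 1) (F c).1 i = extVecAp n (ncharge (2 * n) c.1) i) ∧
        psize (F c).1 = psize c.1 + resCount (2 * n) c.1 n := by
  have hn1 : 1 ≤ n := by omega
  refine ⟨fun c => ⟨coreOf (2*n+1) (extVecAp n (ncharge (2*n) c.1)),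
      (main_forward hn1 c.2.1 c.2.2.1 c.2.2.2).1,
      (main_forward hn1 c.2.1 c.2.2.1 c.2.2.2).2.1,
      (main_forward hn1 c.2.1 c.2.2.1 c.2.2.2).2.2.1⟩, ?_, ?_⟩
  · rw [Function.bijective_iff_has_inverse]
    refine ⟨fun c'' => ⟨coreOf (2*n) (mBack n (ncharge (2*n+1) c''.1)),
        (main_backward hn1 c''.2.1 c''.2.2.1 c''.2.2.2).1,
        (main_backward hn1 c''.2.1 c''.2.2.1 c''.2.2.2).2.1,
        (main_backward hn1 c''.2.1 c''.2.2.1 c''.2.2.2).2.2.1⟩, ?_, ?_⟩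
    · intro c
      apply Subtype.ext
      exact main_left hn1 c.2.1 c.2.2.1 c.2.2.2
    · intro c''
      apply Subtype.ext
      exact (main_backward hn1 c''.2.1 c''.2.2.1 c''.2.2.2).2.2.2
  · intro c
    exact ⟨(main_forward hn1 c.2.1 c.2.2.1 c.2.2.2).2.2.2.1,
           (main_forward hn1 c.2.1 c.2.2.1 c.2.2.2).2.2.2.2⟩
end
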